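/- arXiv:1312.0365 — 9 statements merged into one kernel-verified Lean document; each statement's English description precedes it below -/
import Mathlib

section
/- The set function P₁* defined on 𝒜 by P₁*[A] = E₁[P₀[A|ℋ]] (the P₁-expectation of the ℋ-conditional probability of A under P₀) is a probability measure on (Ω, 𝒜) whose restriction to ℋ equals P₁, and whose ℋ-conditional probabilities satisfy P₁*[A|ℋ] = P₀[A|ℋ] P₁*-almost surely for every A ∈ 𝒜. -/
set_option maxHeartbeats 1000000

open MeasureTheory Set
open scoped ENNReal NNReal

/-- The set function `P₁*` defined on `𝒜` by
`P₁*[A] = E₁[P₀[A|ℋ]]` is a probability measure on `(Ω, 𝒜)` whose restriction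
to `ℋ` equals `P₁`, and whose `ℋ`-conditional probabilities satisfy
`P₁*[A|ℋ] = P₀[A|ℋ]` `P₁*`-almost surely for every `A ∈ 𝒜`. -/
theorem total_probability_extension
    {Ω : Type*} {𝒜 ℋ : MeasurableSpace Ω} (hℋ : ℋ ≤ 𝒜)
    (P₀ : @Measure Ω 𝒜) [IsProbabilityMeasure P₀]
    (P₁ : @Measure Ω ℋ) [IsProbabilityMeasure P₁]
    (habs : P₁ ≪ P₀.trim hℋ) :
    ∃ P₁star : @Measure Ω 𝒜, IsProbabilityMeasure P₁star ∧
      (∀ A : Set Ω, MeasurableSet[𝒜] A →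
        (P₁star A).toReal = ∫ ω, (condExp ℋ P₀ (A.indicator fun _ => (1:ℝ))) ω ∂P₁) ∧
      P₁star.trim hℋ = P₁ ∧
      (∀ A : Set Ω, MeasurableSet[𝒜] A →
        condExp ℋ P₁star (A.indicator fun _ => (1:ℝ))
          =ᵐ[P₁star] condExp ℋ P₀ (A.indicator fun _ => (1:ℝ))) := by
  classical
  letI : MeasurableSpace Ω := 𝒜
  set f : Ω → ℝ≥0∞ := P₁.rnDeriv (P₀.trim hℋ) with hf_def
  have hf_meas : Measurable[ℋ] f := Measure.measurable_rnDeriv _ _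
  haveI hP₀trim : IsProbabilityMeasure (P₀.trim hℋ) :=
    ⟨by rw [trim_measurableSet_eq hℋ MeasurableSet.univ]; exact measure_univ⟩
  have hP₁eq : (P₀.trim hℋ).withDensity f = P₁ :=
    Measure.withDensity_rnDeriv_eq P₁ (P₀.trim hℋ) habs
  have hf_lt_trim : ∀ᵐ ω ∂(P₀.trim hℋ), f ω < ∞ := Measure.rnDeriv_lt_top _ _
  have hf_lt : ∀ᵐ ω ∂P₀, f ω < ∞ := ae_of_ae_trim hℋ hf_lt_trim
  set fn : Ω → ℝ≥0 := fun ω => (f ω).toNNReal with hfn_def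
  have hfn_meas : Measurable[ℋ] fn := hf_meas.ennreal_toNNReal
  have hfnE_meas : Measurable[ℋ] (fun ω => (fn ω : ℝ≥0∞)) := hfn_meas.coe_nnreal_ennreal
  have hfn_meas𝒜 : Measurable[𝒜] fn := hfn_meas.mono hℋ le_rfl
  have hfe_trim : (fun ω => (fn ω : ℝ≥0∞)) =ᵐ[P₀.trim hℋ] f :=
    hf_lt_trim.mono fun ω h => ENNReal.coe_toNNReal h.ne
  have hfe : (fun ω => (fn ω : ℝ≥0∞)) =ᵐ[P₀] f :=
    hf_lt.mono fun ω h => ENNReal.coe_toNNReal h.ne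
  set P₁star : @Measure Ω 𝒜 := P₀.withDensity (fun ω => (fn ω : ℝ≥0∞)) with hP₁star_def
  have htrim : P₁star.trim hℋ = P₁ := by
    rw [hP₁star_def, trim_withDensity hℋ hfnE_meas, withDensity_congr_ae hfe_trim, hP₁eq]
  haveI hP₁star_prob : IsProbabilityMeasure P₁star := by
    constructor
    rw [← trim_measurableSet_eq hℋ MeasurableSet.univ, htrim]
    exact measure_univ
  haveI : IsProbabilityMeasure (P₁star.trim hℋ) := htrim ▸ inferInstance
  set Y : Ω → ℝ := fun ω => (fn ω : ℝ) with hY_def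
  have hY_sm : StronglyMeasurable[ℋ] Y := hfn_meas.coe_nnreal_real.stronglyMeasurable
  have hlint : ∫⁻ ω, f ω ∂P₀ = 1 := by
    rw [← lintegral_trim hℋ hf_meas]
    have h1 : ((P₀.trim hℋ).withDensity f) Set.univ = 1 := by rw [hP₁eq]; exact measure_univ
    rwa [withDensity_apply _ MeasurableSet.univ, setLIntegral_univ] at h1
  have hY_int : Integrable Y P₀ := by
    have h := integrable_toReal_of_lintegral_ne_top
      (μ := P₀) (f := f) (hf_meas.mono hℋ le_rfl).aemeasurable (by rw [hlint]; exact ENNReal.one_ne_top)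
    exact h
  have habs' : P₁star ≪ P₀ := withDensity_absolutelyContinuous _ _
  -- a helper: set integrals under P₁star
  have hsetint : ∀ (h : Ω → ℝ) (S : Set Ω), MeasurableSet[ℋ] S →
      ∫ ω in S, h ω ∂P₁star = ∫ ω in S, Y ω * h ω ∂P₀ := by
    intro h S hS
    rw [hP₁star_def, restrict_withDensity (hℋ S hS)]
    rw [show (∫ ω, h ω ∂((P₀.restrict S).withDensity fun ω => (fn ω : ℝ≥0∞)))
        = ∫ ω, fn ω • h ω ∂(P₀.restrict S) from
      integral_withDensity_eq_integral_smul hfn_meas𝒜 h]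
    exact integral_congr_ae (Filter.Eventually.of_forall fun ω => by
      simp [hY_def, NNReal.smul_def, smul_eq_mul])
  have key : ∀ A : Set Ω, MeasurableSet[𝒜] A →
      condExp ℋ P₀ (A.indicator fun _ => (1:ℝ))
        =ᵐ[P₁star] condExp ℋ P₁star (A.indicator fun _ => (1:ℝ)) := by
    intro A hA
    set ind : Ω → ℝ := A.indicator fun _ => (1:ℝ) with hind_def
    set g : Ω → ℝ := condExp ℋ P₀ ind with hg_def
    have hind_int₀ : Integrable ind P₀ := by exact (integrable_const (1:ℝ)).indicator hA
    have hind_int₁ : Integrable ind P₁star := by exact (integrable_const (1:ℝ)).indicator hA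
    have hg0 : 0 ≤ᵐ[P₀] g :=
      condExp_nonneg (Filter.Eventually.of_forall fun ω =>
        Set.indicator_nonneg (fun _ _ => zero_le_one) ω)
    have hg1 : g ≤ᵐ[P₀] fun _ => (1:ℝ) := by
      have h := condExp_mono (m := ℋ) hind_int₀ (integrable_const (1:ℝ))
        (Filter.Eventually.of_forall fun ω => by
          by_cases hω : ω ∈ A <;> simp [hind_def, Set.indicator_apply, hω])
      have hc : condExp ℋ P₀ (fun _ => (1:ℝ)) = fun _ => (1:ℝ) := condExp_const hℋ (1:ℝ)
      calc g ≤ᵐ[P₀] condExp ℋ P₀ (fun _ => (1:ℝ)) := h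
        _ = fun _ => (1:ℝ) := hc
    have hg_bdd : ∀ᵐ ω ∂P₀, ‖g ω‖ ≤ 1 := by
      filter_upwards [hg0, hg1] with ω h0 h1
      simp only [Pi.zero_apply] at h0
      rw [Real.norm_eq_abs, abs_le]; exact ⟨by linarith, h1⟩
    have hg_bdd' : ∀ᵐ ω ∂P₁star, ‖g ω‖ ≤ 1 := habs'.ae_le hg_bdd
    have hg_int : Integrable g P₁star :=
      Integrable.mono' (integrable_const (1:ℝ))
        (stronglyMeasurable_condExp.mono hℋ).aestronglyMeasurable hg_bdd'
    -- integrability of Y * ind under P₀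
    have hYind_int : Integrable (Y * ind) P₀ := by
      refine Integrable.mono' hY_int
        ((hY_sm.mono hℋ).aestronglyMeasurable.mul hind_int₀.aestronglyMeasurable) ?_
      refine Filter.Eventually.of_forall fun ω => ?_
      by_cases hω : ω ∈ A <;>
        simp [hind_def, Set.indicator_apply, hω, abs_mul, hY_def, abs_of_nonneg]
    have hpull : condExp ℋ P₀ (Y * ind) =ᵐ[P₀] Y * g :=
      condExp_mul_of_stronglyMeasurable_left hY_sm hYind_int hind_int₀
    refine ae_eq_condExp_of_forall_setIntegral_eq hℋ hind_int₁
      (fun s _ _ => hg_int.integrableOn) (fun S hS _ => ?_)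
      (stronglyMeasurable_condExp.aestronglyMeasurable)
    rw [hsetint g S hS, hsetint ind S hS]
    have h1 : ∫ ω in S, Y ω * g ω ∂P₀ = ∫ ω in S, (condExp ℋ P₀ (Y * ind)) ω ∂P₀ :=
      (setIntegral_congr_ae (hℋ S hS) (hpull.mono fun ω hω _ => hω)).symm
    rw [show (fun ω => Y ω * g ω) = Y * g from rfl] at h1 ⊢
    calc ∫ ω in S, (Y * g) ω ∂P₀ = ∫ ω in S, (condExp ℋ P₀ (Y * ind)) ω ∂P₀ := h1
      _ = ∫ ω in S, (Y * ind) ω ∂P₀ := setIntegral_condExp hℋ hYind_int hS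
      _ = ∫ ω in S, Y ω * ind ω ∂P₀ := rfl
  refine ⟨P₁star, hP₁star_prob, ?_, htrim, fun A hA => (key A hA).symm⟩
  intro A hA
  have h1 : (P₁star A).toReal = ∫ ω, (A.indicator fun _ => (1:ℝ)) ω ∂P₁star :=
    (integral_indicator_one hA).symm
  rw [h1, ← integral_condExp hℋ (f := A.indicator fun _ => (1:ℝ)),
    integral_congr_ae (key A hA).symm, integral_trim hℋ stronglyMeasurable_condExp, htrim]
end

section
/- Suppose P₁[λ₀ = 1] < 1. Then there exists a solution p₁ ∈ (0,1) to the equation 1 = E₁[1/(p₁ + (1−p₁)·λ₀)] if and only if E₁[λ₀] > 1 and E₁[λ₀⁻¹] > 1; and if a solution p₁ ∈ (0,1) exists, it is unique. -/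
open MeasureTheory Set
open scoped ENNReal

set_option linter.unusedSectionVars false

namespace TotalOdds
variable {Ω : Type*} [MeasurableSpace Ω] (P : Measure Ω) [IsProbabilityMeasure P]
  {l : Ω → ℝ}

/-- denominator positive -/
lemma denom_pos (hpos : ∀ᵐ ω ∂P, 0 < l ω) {p : ℝ} (hp0 : 0 < p) (hp1 : p ≤ 1) :
    ∀ᵐ ω ∂P, 0 < p + (1 - p) * l ω := by
  filter_upwards [hpos] with ω hω
  nlinarith

lemma integrand_meas (hm : Measurable l) (p : ℝ) :
    Measurable (fun ω => 1 / (p + (1 - p) * l ω)) := by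
  exact (measurable_const.add (measurable_const.mul hm)).const_div 1

lemma integrable_integrand (hm : Measurable l) (hpos : ∀ᵐ ω ∂P, 0 < l ω)
    {p : ℝ} (hp0 : 0 < p) (hp1 : p ≤ 1) :
    Integrable (fun ω => 1 / (p + (1 - p) * l ω)) P := by
  refine Integrable.mono' (integrable_const (1/p)) ((integrand_meas hm p).aestronglyMeasurable) ?_
  filter_upwards [hpos] with ω hω
  have hd : p ≤ p + (1 - p) * l ω := by nlinarith
  have hd0 : 0 < p + (1 - p) * l ω := lt_of_lt_of_le hp0 hd
  rw [Real.norm_eq_abs, abs_of_nonneg (by positivity)]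
  exact one_div_le_one_div_of_le hp0 hd

lemma lintegral_eq_one (hm : Measurable l) (hpos : ∀ᵐ ω ∂P, 0 < l ω)
    {p : ℝ} (hp0 : 0 < p) (hp1 : p ≤ 1)
    (h : (1:ℝ) = ∫ ω, 1 / (p + (1 - p) * l ω) ∂P) :
    ∫⁻ ω, ENNReal.ofReal (1 / (p + (1 - p) * l ω)) ∂P = 1 := by
  rw [← ofReal_integral_eq_lintegral_ofReal (integrable_integrand P hm hpos hp0 hp1)
    (by filter_upwards [denom_pos P hpos hp0 hp1] with ω hω; positivity), ← h,
    ENNReal.ofReal_one]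

lemma lintegral_d (hm : Measurable l) (hpos : ∀ᵐ ω ∂P, 0 < l ω)
    {p : ℝ} (hp0 : 0 ≤ p) (hp1 : p ≤ 1) :
    ∫⁻ ω, ENNReal.ofReal (p + (1 - p) * l ω) ∂P
      = ENNReal.ofReal p + ENNReal.ofReal (1 - p) * ∫⁻ ω, ENNReal.ofReal (l ω) ∂P := by
  have h1 : ∫⁻ ω, ENNReal.ofReal (p + (1 - p) * l ω) ∂P
      = ∫⁻ ω, (ENNReal.ofReal p + ENNReal.ofReal (1 - p) * ENNReal.ofReal (l ω)) ∂P := by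
    apply lintegral_congr_ae
    filter_upwards [hpos] with ω hω
    rw [ENNReal.ofReal_add hp0 (by nlinarith), ENNReal.ofReal_mul (by linarith)]
  rw [h1, lintegral_add_left measurable_const,
    lintegral_const_mul _ hm.ennreal_ofReal, lintegral_const]
  simp

end TotalOdds

namespace TotalOdds
variable {Ω : Type*} [MeasurableSpace Ω] (P : Measure Ω) [IsProbabilityMeasure P]
  {l : Ω → ℝ}

lemma ineq1 {d : ℝ} (hd : 0 < d) : 1/d + d - 2 = (d-1)^2 / d := by
  field_simp; ring

lemma ineq2 {p lv : ℝ} (hp0 : 0 < p) (hp1 : p < 1) (hl : 0 < lv) :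
    p + (1 - p) * (1/lv) - 1 / (p + (1 - p) * lv) = p * (1-p) * (lv-1)^2 / (lv * (p + (1-p)*lv)) := by
  have hd : 0 < p + (1 - p) * lv := by nlinarith
  field_simp
  ring

lemma sq_pos' {x : ℝ} (hx : x ≠ 1) : 0 < (x - 1)^2 :=
  lt_of_le_of_ne (sq_nonneg _) (Ne.symm (pow_ne_zero 2 (sub_ne_zero.2 hx)))

lemma forward_l (hm : Measurable l) (hpos : ∀ᵐ ω ∂P, 0 < l ω)
    (hne : P {ω | l ω ≠ 1} ≠ 0) {p : ℝ} (hp0 : 0 < p) (hp1 : p < 1)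
    (h1 : ∫⁻ ω, ENNReal.ofReal (1 / (p + (1 - p) * l ω)) ∂P = 1) :
    1 < ∫⁻ ω, ENNReal.ofReal (l ω) ∂P := by
  have hmi : Measurable fun ω => ENNReal.ofReal (1 / (p + (1 - p) * l ω)) :=
    (TotalOdds.integrand_meas hm p).ennreal_ofReal
  have hmd : Measurable fun ω => ENNReal.ofReal (p + (1 - p) * l ω) :=
    (measurable_const.add (measurable_const.mul hm)).ennreal_ofReal
  set L := ∫⁻ ω, ENNReal.ofReal (l ω) ∂P with hL
  by_contra hcon
  push_neg at hcon
  have key : (∫⁻ _ω, (2:ℝ≥0∞) ∂P) <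
      ∫⁻ ω, (ENNReal.ofReal (1 / (p + (1 - p) * l ω))
        + ENNReal.ofReal (p + (1 - p) * l ω)) ∂P := by
    apply lintegral_strict_mono_of_ae_le_of_ae_lt_on
      ((hmi.add hmd).aemeasurable) (by simp)
    · filter_upwards [hpos] with ω hω
      have hd : 0 < p + (1 - p) * l ω := by nlinarith
      have h2 : (2:ℝ) ≤ 1 / (p + (1 - p) * l ω) + (p + (1 - p) * l ω) := by
        have := ineq1 hd
        have h3 : 0 ≤ (p + (1 - p) * l ω - 1)^2 / (p + (1 - p) * l ω) := by positivity
        linarith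
      calc (2:ℝ≥0∞) = ENNReal.ofReal 2 := by simp
        _ ≤ ENNReal.ofReal (1 / (p + (1 - p) * l ω) + (p + (1 - p) * l ω)) :=
            ENNReal.ofReal_le_ofReal h2
        _ = _ := ENNReal.ofReal_add (by positivity) (le_of_lt hd)
    · exact hne
    · filter_upwards [hpos] with ω hω hω1
      have hl1 : l ω ≠ 1 := hω1
      have hd : 0 < p + (1 - p) * l ω := by nlinarith
      have hdne : p + (1 - p) * l ω ≠ 1 := by
        intro hc; apply hl1; nlinarith
      have h2 : (2:ℝ) < 1 / (p + (1 - p) * l ω) + (p + (1 - p) * l ω) := by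
        have := ineq1 hd
        have h3 : 0 < (p + (1 - p) * l ω - 1)^2 / (p + (1 - p) * l ω) :=
          div_pos (sq_pos' hdne) hd
        linarith
      calc (2:ℝ≥0∞) = ENNReal.ofReal 2 := by simp
        _ < ENNReal.ofReal (1 / (p + (1 - p) * l ω) + (p + (1 - p) * l ω)) := by
            exact (ENNReal.ofReal_lt_ofReal_iff (by positivity)).2 h2
        _ = _ := ENNReal.ofReal_add (by positivity) (le_of_lt hd)
  rw [lintegral_add_left hmi, h1,
    TotalOdds.lintegral_d P hm hpos (le_of_lt hp0) (le_of_lt hp1), lintegral_const] at key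
  simp only [measure_univ, mul_one] at key
  have hsum : ENNReal.ofReal p + ENNReal.ofReal (1 - p) = 1 := by
    rw [← ENNReal.ofReal_add (le_of_lt hp0) (by linarith)]; norm_num
  have h2 : (2:ℝ≥0∞) < 1 + 1 := by
    calc (2:ℝ≥0∞) < 1 + (ENNReal.ofReal p + ENNReal.ofReal (1 - p) * L) := key
      _ ≤ 1 + (ENNReal.ofReal p + ENNReal.ofReal (1 - p) * 1) := by gcongr
      _ = 1 + 1 := by rw [mul_one, hsum]
  norm_num at h2

lemma forward_linv (hm : Measurable l) (hpos : ∀ᵐ ω ∂P, 0 < l ω)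
    (hne : P {ω | l ω ≠ 1} ≠ 0) {p : ℝ} (hp0 : 0 < p) (hp1 : p < 1)
    (h1 : ∫⁻ ω, ENNReal.ofReal (1 / (p + (1 - p) * l ω)) ∂P = 1) :
    1 < ∫⁻ ω, ENNReal.ofReal (1 / l ω) ∂P := by
  have hminv : Measurable fun ω => ENNReal.ofReal (1 / l ω) :=
    (hm.const_div 1).ennreal_ofReal
  set K := ∫⁻ ω, ENNReal.ofReal (1 / l ω) ∂P with hK
  by_contra hcon
  push_neg at hcon
  have key : (∫⁻ ω, ENNReal.ofReal (1 / (p + (1 - p) * l ω)) ∂P) <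
      ∫⁻ ω, (ENNReal.ofReal p + ENNReal.ofReal (1 - p) * ENNReal.ofReal (1 / l ω)) ∂P := by
    apply lintegral_strict_mono_of_ae_le_of_ae_lt_on
      ((measurable_const.add (measurable_const.mul hminv)).aemeasurable) (by rw [h1]; simp)
    · filter_upwards [hpos] with ω hω
      have hd : 0 < p + (1 - p) * l ω := by nlinarith
      have h1p : (0:ℝ) < 1 - p := by linarith
      have hinv : (0:ℝ) < 1 / l ω := by positivity
      have h2 : 1 / (p + (1 - p) * l ω) ≤ p + (1 - p) * (1 / l ω) := by
        have := ineq2 hp0 hp1 hω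
        have h3 : 0 ≤ p * (1-p) * (l ω - 1)^2 / (l ω * (p + (1-p) * l ω)) :=
          div_nonneg (mul_nonneg (mul_nonneg hp0.le h1p.le) (sq_nonneg _))
            (mul_pos hω hd).le
        linarith
      calc ENNReal.ofReal (1 / (p + (1 - p) * l ω))
          ≤ ENNReal.ofReal (p + (1 - p) * (1 / l ω)) := ENNReal.ofReal_le_ofReal h2
        _ = _ := by
            rw [ENNReal.ofReal_add (le_of_lt hp0) (mul_nonneg h1p.le hinv.le),
              ENNReal.ofReal_mul (by linarith)]; rfl
    · exact hne
    · filter_upwards [hpos] with ω hω hω1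
      have hl1 : l ω ≠ 1 := hω1
      have hd : 0 < p + (1 - p) * l ω := by nlinarith
      have h1p : (0:ℝ) < 1 - p := by linarith
      have hinv : (0:ℝ) < 1 / l ω := by positivity
      have h2 : 1 / (p + (1 - p) * l ω) < p + (1 - p) * (1 / l ω) := by
        have := ineq2 hp0 hp1 hω
        have h3 : 0 < p * (1-p) * (l ω - 1)^2 / (l ω * (p + (1-p) * l ω)) :=
          div_pos (mul_pos (mul_pos hp0 h1p) (sq_pos' hl1)) (mul_pos hω hd)
        linarith
      have hrpos : (0:ℝ) < p + (1 - p) * (1 / l ω) := by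
        have := mul_pos h1p hinv; linarith
      calc ENNReal.ofReal (1 / (p + (1 - p) * l ω))
          < ENNReal.ofReal (p + (1 - p) * (1 / l ω)) := by
            exact (ENNReal.ofReal_lt_ofReal_iff hrpos).2 h2
        _ = _ := by
            rw [ENNReal.ofReal_add (le_of_lt hp0) (mul_nonneg h1p.le hinv.le),
              ENNReal.ofReal_mul (by linarith)]; rfl
  rw [h1, lintegral_add_left measurable_const,
    lintegral_const_mul _ hminv, lintegral_const] at key
  simp only [measure_univ, mul_one] at key
  have hsum : ENNReal.ofReal p + ENNReal.ofReal (1 - p) = 1 := by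
    rw [← ENNReal.ofReal_add (le_of_lt hp0) (by linarith)]; norm_num
  have h2 : (1:ℝ≥0∞) < 1 := by
    calc (1:ℝ≥0∞) < ENNReal.ofReal p + ENNReal.ofReal (1 - p) * K := key
      _ ≤ ENNReal.ofReal p + ENNReal.ofReal (1 - p) * 1 := by gcongr
      _ = 1 := by rw [mul_one, hsum]
  exact lt_irrefl _ h2

end TotalOdds

namespace TotalOdds
open TotalOdds
variable {Ω : Type*} [MeasurableSpace Ω] (P : Measure Ω) [IsProbabilityMeasure P]
  {l : Ω → ℝ}

lemma lintegral_ne_top (hpos : ∀ᵐ ω ∂P, 0 < l ω) {p : ℝ} (hp0 : 0 < p) (hp1 : p ≤ 1) :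
    ∫⁻ ω, ENNReal.ofReal (1 / (p + (1 - p) * l ω)) ∂P ≠ ∞ := by
  have hb : ∫⁻ ω, ENNReal.ofReal (1 / (p + (1 - p) * l ω)) ∂P ≤ ENNReal.ofReal (1/p) := by
    calc ∫⁻ ω, ENNReal.ofReal (1 / (p + (1 - p) * l ω)) ∂P
        ≤ ∫⁻ _ω, ENNReal.ofReal (1/p) ∂P := by
          apply lintegral_mono_ae
          filter_upwards [hpos] with ω hω
          exact ENNReal.ofReal_le_ofReal (one_div_le_one_div_of_le hp0 (by nlinarith))
      _ = ENNReal.ofReal (1/p) := by rw [lintegral_const, measure_univ, mul_one]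
  exact ne_top_of_le_ne_top ENNReal.ofReal_ne_top hb

lemma phi_eq (hm : Measurable l) (hpos : ∀ᵐ ω ∂P, 0 < l ω) {p : ℝ}
    (hp0 : 0 < p) (hp1 : p ≤ 1) :
    ∫ ω, 1 / (p + (1 - p) * l ω) ∂P
      = (∫⁻ ω, ENNReal.ofReal (1 / (p + (1 - p) * l ω)) ∂P).toReal :=
  integral_eq_lintegral_of_nonneg_ae
    (by filter_upwards [denom_pos P hpos hp0 hp1] with ω h; positivity)
    (integrand_meas hm p).aestronglyMeasurable

lemma exists_small (hm : Measurable l) (hpos : ∀ᵐ ω ∂P, 0 < l ω)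
    (hS : 1 < ∫⁻ ω, ENNReal.ofReal (1 / l ω) ∂P) :
    ∃ a₀ : ℝ, 0 < a₀ ∧ a₀ < 1 ∧ ∀ a : ℝ, 0 < a → a ≤ a₀ →
      1 < ∫ ω, 1 / (a + (1 - a) * l ω) ∂P := by
  have htend : Filter.Tendsto (fun n : ℕ => ∫⁻ ω, ENNReal.ofReal (1 / (1/((n:ℝ)+1) + l ω)) ∂P)
      Filter.atTop (nhds (∫⁻ ω, ENNReal.ofReal (1 / l ω) ∂P)) := by
    apply lintegral_tendsto_of_tendsto_of_monotone
    · intro n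
      exact ((measurable_const.add hm).const_div 1).ennreal_ofReal.aemeasurable
    · filter_upwards [hpos] with ω hω
      intro m n hmn
      apply ENNReal.ofReal_le_ofReal
      apply one_div_le_one_div_of_le (by positivity)
      have hc : (1:ℝ)/((n:ℝ)+1) ≤ 1/((m:ℝ)+1) := by
        apply one_div_le_one_div_of_le (by positivity)
        have : (m:ℝ) ≤ (n:ℝ) := Nat.cast_le.2 hmn
        linarith
      linarith
    · filter_upwards [hpos] with ω hω
      have h1 : Filter.Tendsto (fun n : ℕ => 1/((n:ℝ)+1) + l ω) Filter.atTop (nhds (0 + l ω)) :=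
        tendsto_one_div_add_atTop_nhds_zero_nat.add tendsto_const_nhds
      rw [zero_add] at h1
      have h2 : Filter.Tendsto (fun n : ℕ => 1 / (1/((n:ℝ)+1) + l ω)) Filter.atTop
          (nhds (1 / l ω)) := Filter.Tendsto.div tendsto_const_nhds h1 (ne_of_gt hω)
      exact (ENNReal.continuous_ofReal.tendsto _).comp h2
  obtain ⟨n, hn⟩ := (htend.eventually_const_lt hS).exists
  refine ⟨min (1/((n:ℝ)+1)) (1/2), by positivity,
    lt_of_le_of_lt (min_le_right _ _) (by norm_num), ?_⟩
  intro a ha0 ha1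
  have haa : a ≤ 1/((n:ℝ)+1) := le_trans ha1 (min_le_left _ _)
  have ha1' : a ≤ 1 := le_trans (le_trans ha1 (min_le_right _ _)) (by norm_num)
  have hmono : ∫⁻ ω, ENNReal.ofReal (1 / (1/((n:ℝ)+1) + l ω)) ∂P
      ≤ ∫⁻ ω, ENNReal.ofReal (1 / (a + (1 - a) * l ω)) ∂P := by
    apply lintegral_mono_ae
    filter_upwards [hpos] with ω hω
    apply ENNReal.ofReal_le_ofReal
    apply one_div_le_one_div_of_le (by nlinarith)
    nlinarith
  have hgt : 1 < ∫⁻ ω, ENNReal.ofReal (1 / (a + (1 - a) * l ω)) ∂P := lt_of_lt_of_le hn hmono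
  rw [phi_eq P hm hpos ha0 ha1']
  have hnt := lintegral_ne_top P hpos ha0 ha1'
  have := (ENNReal.toReal_lt_toReal (by simp) hnt).2 hgt
  simpa using this

end TotalOdds

namespace TotalOdds
open TotalOdds TotalOdds Filter
variable {Ω : Type*} [MeasurableSpace Ω] (P : Measure Ω) [IsProbabilityMeasure P]
  {l : Ω → ℝ}

lemma exists_big (hm : Measurable l) (hpos : ∀ᵐ ω ∂P, 0 < l ω)
    (hA : 1 < ∫⁻ ω, ENNReal.ofReal (l ω) ∂P) :
    ∃ b : ℝ, 0 < b ∧ b < 1 ∧ ∫ ω, 1 / (b + (1 - b) * l ω) ∂P < 1 := by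
  classical
  set gp : Ω → ℝ := fun ω => max (l ω - 1) 0 with hgp
  set gn : Ω → ℝ := fun ω => max (1 - l ω) 0 with hgn
  have hgpm : Measurable gp := (hm.sub measurable_const).max measurable_const
  have hgnm : Measurable gn := (measurable_const.sub hm).max measurable_const
  set A := ∫⁻ ω, ENNReal.ofReal (gp ω) ∂P with hAdef
  set B := ∫⁻ ω, ENNReal.ofReal (gn ω) ∂P with hBdef
  have hB1 : B ≤ 1 := by
    calc B ≤ ∫⁻ _ω, 1 ∂P := by
          apply lintegral_mono_ae
          filter_upwards [hpos] with ω hω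
          exact ENNReal.ofReal_le_one.2 (max_le (by linarith) zero_le_one)
      _ = 1 := by simp
  have hBne : B ≠ ⊤ := ne_top_of_le_ne_top ENNReal.one_ne_top hB1
  -- key identity:  ∫ l + B = 1 + A
  have hkey : (∫⁻ ω, ENNReal.ofReal (l ω) ∂P) + B = 1 + A := by
    have h1 : ∫⁻ ω, (ENNReal.ofReal (l ω) + ENNReal.ofReal (gn ω)) ∂P
        = ∫⁻ ω, ((1:ℝ≥0∞) + ENNReal.ofReal (gp ω)) ∂P := by
      apply lintegral_congr_ae
      filter_upwards [hpos] with ω hω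
      rcases le_total (l ω) 1 with h | h
      · rw [hgn, hgp]
        simp only [max_eq_left (by linarith : (0:ℝ) ≤ 1 - l ω),
          max_eq_right (by linarith : l ω - 1 ≤ (0:ℝ))]
        rw [← ENNReal.ofReal_add hω.le (by linarith)]
        norm_num
      · rw [hgn, hgp]
        simp only [max_eq_right (by linarith : 1 - l ω ≤ (0:ℝ)),
          max_eq_left (by linarith : (0:ℝ) ≤ l ω - 1)]
        rw [← ENNReal.ofReal_one, ← ENNReal.ofReal_add zero_le_one (by linarith)]
        norm_num
    rw [lintegral_add_left hm.ennreal_ofReal, lintegral_add_left measurable_const,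
      lintegral_const, measure_univ, mul_one] at h1
    exact h1
  have hAB : B < A := by
    by_contra hc
    push_neg at hc
    have h2 : (∫⁻ ω, ENNReal.ofReal (l ω) ∂P) + B ≤ 1 + B := by
      rw [hkey]; exact add_le_add le_rfl hc
    rw [ENNReal.add_le_add_iff_right hBne] at h2
    exact absurd hA (not_lt.2 h2)
  obtain ⟨pq, hpqhalf, hpq1, hpq_mono, hpqt⟩ : ∃ pq : ℕ → ℝ,
      (∀ n, 1/2 ≤ pq n) ∧ (∀ n, pq n < 1) ∧ Monotone pq ∧
        Filter.Tendsto pq atTop (nhds 1) := by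
    refine ⟨fun n => 1 - 1/((n:ℝ)+2), ?_, ?_, ?_, ?_⟩
    · intro n
      have h2 : (1:ℝ)/((n:ℝ)+2) ≤ 1/2 := by
        apply one_div_le_one_div_of_le (by norm_num)
        have := Nat.cast_nonneg (α := ℝ) n
        linarith
      simp only
      linarith
    · intro n
      have : (0:ℝ) < 1/((n:ℝ)+2) := by positivity
      simp only
      linarith
    · intro m n hmn
      have hc : (1:ℝ)/((n:ℝ)+2) ≤ 1/((m:ℝ)+2) := by
        apply one_div_le_one_div_of_le (by positivity)
        have : (m:ℝ) ≤ (n:ℝ) := Nat.cast_le.2 hmn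
        linarith
      simp only
      linarith
    · have h0 : Tendsto (fun n : ℕ => 1/((n:ℝ)+2)) atTop (nhds 0) := by
        have hcomp := (tendsto_one_div_add_atTop_nhds_zero_nat (𝕜 := ℝ)).comp (tendsto_add_atTop_nat 1)
        have heq : (fun n : ℕ => 1/((n:ℝ)+2))
            = (fun n : ℕ => 1 / ((n:ℝ) + 1)) ∘ (fun n => n + 1) := by
          funext n
          simp only [Function.comp_apply]
          push_cast
          ring_nf
        rw [heq]
        exact hcomp
      have h1 : Tendsto (fun n : ℕ => 1 - 1/((n:ℝ)+2)) atTop (nhds (1 - 0)) :=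
        tendsto_const_nhds.sub h0
      rw [sub_zero] at h1
      exact h1
  -- denominators
  have hdpos : ∀ n, ∀ ω, 0 < l ω → 0 < pq n + (1 - pq n) * l ω := by
    intro n ω hω
    have h1 := hpqhalf n
    have h2 := hpq1 n
    have h1p : (0:ℝ) < 1 - pq n := by linarith
    have hprod : 0 < (1 - pq n) * l ω := mul_pos h1p hω
    linarith
  -- tendsto of denominators
  have hdt : ∀ ω, 0 < l ω →
      Tendsto (fun n => pq n + (1 - pq n) * l ω) atTop (nhds 1) := by
    intro ω _hω
    have : Tendsto (fun n => pq n + (1 - pq n) * l ω) atTop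
        (nhds (1 + (1 - 1) * l ω)) :=
      hpqt.add ((tendsto_const_nhds.sub hpqt).mul tendsto_const_nhds)
    simpa using this
  -- A_n tendsto A (monotone convergence)
  have htendA : Tendsto (fun n => ∫⁻ ω, ENNReal.ofReal (gp ω / (pq n + (1 - pq n) * l ω)) ∂P)
      atTop (nhds A) := by
    apply lintegral_tendsto_of_tendsto_of_monotone
    · intro n
      exact ((hgpm.div (measurable_const.add (measurable_const.mul hm))).ennreal_ofReal).aemeasurable
    · filter_upwards [hpos] with ω hω
      intro m n hmn
      apply ENNReal.ofReal_le_ofReal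
      rcases le_total (l ω) 1 with h | h
      · have : gp ω = 0 := max_eq_right (by linarith)
        simp [this]
      · have hd1 : 0 < pq n + (1 - pq n) * l ω := hdpos n ω hω
        have hd2 : pq n + (1 - pq n) * l ω ≤ pq m + (1 - pq m) * l ω := by
          have hmono := hpq_mono hmn
          nlinarith
        have hg0 : 0 ≤ gp ω := le_max_right _ _
        exact div_le_div_of_nonneg_left hg0 hd1 hd2
    · filter_upwards [hpos] with ω hω
      have h2 : Tendsto (fun n => gp ω / (pq n + (1 - pq n) * l ω)) atTop
          (nhds (gp ω / 1)) :=
        Filter.Tendsto.div tendsto_const_nhds (hdt ω hω) one_ne_zero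
      rw [div_one] at h2
      exact (ENNReal.continuous_ofReal.tendsto _).comp h2
  -- B_n tendsto B (dominated convergence)
  have htendB : Tendsto (fun n => ∫⁻ ω, ENNReal.ofReal (gn ω / (pq n + (1 - pq n) * l ω)) ∂P)
      atTop (nhds B) := by
    apply tendsto_lintegral_of_dominated_convergence (bound := fun _ => (2:ℝ≥0∞))
    · intro n
      exact (hgnm.div (measurable_const.add (measurable_const.mul hm))).ennreal_ofReal
    · intro n
      filter_upwards [hpos] with ω hω
      have hd1 : 0 < pq n + (1 - pq n) * l ω := hdpos n ω hω
      have hdh : 1/2 ≤ pq n + (1 - pq n) * l ω := by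
        have h1 := hpqhalf n
        have h2 := hpq1 n
        have h1p : (0:ℝ) < 1 - pq n := by linarith
        have hprod : 0 < (1 - pq n) * l ω := mul_pos h1p hω
        linarith
      have hg : gn ω ≤ 1 := max_le (by linarith) zero_le_one
      have h3 : gn ω / (pq n + (1 - pq n) * l ω) ≤ 2 := by
        rw [div_le_iff₀ hd1]
        nlinarith
      calc ENNReal.ofReal (gn ω / (pq n + (1 - pq n) * l ω)) ≤ ENNReal.ofReal 2 :=
            ENNReal.ofReal_le_ofReal h3
        _ = 2 := by norm_num
    · simp
    · filter_upwards [hpos] with ω hω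
      have h2 : Tendsto (fun n => gn ω / (pq n + (1 - pq n) * l ω)) atTop
          (nhds (gn ω / 1)) :=
        Filter.Tendsto.div tendsto_const_nhds (hdt ω hω) one_ne_zero
      rw [div_one] at h2
      exact (ENNReal.continuous_ofReal.tendsto _).comp h2
  -- pick the index
  obtain ⟨c, hc1, hc2⟩ := exists_between hAB
  obtain ⟨n, hnA, hnB⟩ := ((htendA.eventually_const_lt hc2).and
    (htendB.eventually_lt_const hc1)).exists
  obtain ⟨b, hbhalf, hb1, hnA, hnB⟩ : ∃ b : ℝ, 1/2 ≤ b ∧ b < 1 ∧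
      c < ∫⁻ ω, ENNReal.ofReal (gp ω / (b + (1 - b) * l ω)) ∂P ∧
      ∫⁻ ω, ENNReal.ofReal (gn ω / (b + (1 - b) * l ω)) ∂P < c :=
    ⟨pq n, hpqhalf n, hpq1 n, hnA, hnB⟩
  have hb0 : (0:ℝ) < b := by linarith
  have h1b : (0:ℝ) < 1 - b := by linarith
  refine ⟨b, hb0, hb1, ?_⟩
  have hdpos' : ∀ ω, 0 < l ω → 0 < b + (1 - b) * l ω := by
    intro ω hω
    have hprod : 0 < (1 - b) * l ω := mul_pos h1b hω
    linarith
  set An := ∫⁻ ω, ENNReal.ofReal (gp ω / (b + (1 - b) * l ω)) ∂P with hAndef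
  set Bn := ∫⁻ ω, ENNReal.ofReal (gn ω / (b + (1 - b) * l ω)) ∂P with hBndef
  have hBA : Bn < An := lt_trans hnB hnA
  have hAnne : An ≠ ⊤ := by
    have hbound : An ≤ ENNReal.ofReal (1/(1-b)) := by
      calc An ≤ ∫⁻ _ω, ENNReal.ofReal (1/(1-b)) ∂P := by
            apply lintegral_mono_ae
            filter_upwards [hpos] with ω hω
            apply ENNReal.ofReal_le_ofReal
            have hd1 : 0 < b + (1 - b) * l ω := hdpos' ω hω
            have hgle : gp ω ≤ l ω := max_le (by linarith) hω.le
            rw [div_le_div_iff₀ hd1 h1b]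
            nlinarith
        _ = ENNReal.ofReal (1/(1-b)) := by rw [lintegral_const, measure_univ, mul_one]
    exact ne_top_of_le_ne_top ENNReal.ofReal_ne_top hbound
  have hBnne : Bn ≠ ⊤ := ne_top_of_lt hBA
  -- real-valued functions
  have hGpm : Measurable (fun ω => gp ω / (b + (1 - b) * l ω)) :=
    hgpm.div (measurable_const.add (measurable_const.mul hm))
  have hGmm : Measurable (fun ω => gn ω / (b + (1 - b) * l ω)) :=
    hgnm.div (measurable_const.add (measurable_const.mul hm))
  have hGp0 : ∀ᵐ ω ∂P, 0 ≤ gp ω / (b + (1 - b) * l ω) := by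
    filter_upwards [hpos] with ω hω
    exact div_nonneg (le_max_right _ _) (hdpos' ω hω).le
  have hGm0 : ∀ᵐ ω ∂P, 0 ≤ gn ω / (b + (1 - b) * l ω) := by
    filter_upwards [hpos] with ω hω
    exact div_nonneg (le_max_right _ _) (hdpos' ω hω).le
  have hIGp : Integrable (fun ω => gp ω / (b + (1 - b) * l ω)) P := by
    refine Integrable.mono' (integrable_const (1/(1-b))) hGpm.aestronglyMeasurable ?_
    filter_upwards [hpos] with ω hω
    have hd1 : 0 < b + (1 - b) * l ω := hdpos' ω hω
    have hgle : gp ω ≤ l ω := max_le (by linarith) hω.le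
    rw [Real.norm_eq_abs, abs_of_nonneg (div_nonneg (le_max_right _ _) hd1.le),
      div_le_div_iff₀ hd1 h1b]
    nlinarith
  have hIGm : Integrable (fun ω => gn ω / (b + (1 - b) * l ω)) P := by
    refine Integrable.mono' (integrable_const 2) hGmm.aestronglyMeasurable ?_
    filter_upwards [hpos] with ω hω
    have hd1 : 0 < b + (1 - b) * l ω := hdpos' ω hω
    have hdh : 1/2 ≤ b + (1 - b) * l ω := by
      have hprod : 0 < (1 - b) * l ω := mul_pos h1b hω
      linarith
    have hg : gn ω ≤ 1 := max_le (by linarith) zero_le_one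
    rw [Real.norm_eq_abs, abs_of_nonneg (div_nonneg (le_max_right _ _) hd1.le),
      div_le_iff₀ hd1]
    nlinarith
  have hintGp : ∫ ω, gp ω / (b + (1 - b) * l ω) ∂P = An.toReal :=
    integral_eq_lintegral_of_nonneg_ae hGp0 hGpm.aestronglyMeasurable
  have hintGm : ∫ ω, gn ω / (b + (1 - b) * l ω) ∂P = Bn.toReal :=
    integral_eq_lintegral_of_nonneg_ae hGm0 hGmm.aestronglyMeasurable
  have hdiff : 0 < (∫ ω, gp ω / (b + (1 - b) * l ω) ∂P)
      - ∫ ω, gn ω / (b + (1 - b) * l ω) ∂P := by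
    rw [hintGp, hintGm, sub_pos]
    exact (ENNReal.toReal_lt_toReal hBnne hAnne).2 hBA
  -- pointwise identity
  have hpoint : ∀ᵐ ω ∂P, 1 / (b + (1 - b) * l ω)
      = 1 - (1 - b) * (gp ω / (b + (1 - b) * l ω) - gn ω / (b + (1 - b) * l ω)) := by
    filter_upwards [hpos] with ω hω
    have hd1 : 0 < b + (1 - b) * l ω := hdpos' ω hω
    have hdne : b + (1 - b) * l ω ≠ 0 := ne_of_gt hd1
    have hsub : gp ω / (b + (1 - b) * l ω) - gn ω / (b + (1 - b) * l ω)
        = (l ω - 1) / (b + (1 - b) * l ω) := by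
      rcases le_total (l ω) 1 with h | h
      · rw [hgp, hgn]
        simp only [max_eq_right (by linarith : l ω - 1 ≤ (0:ℝ)),
          max_eq_left (by linarith : (0:ℝ) ≤ 1 - l ω)]
        ring
      · rw [hgp, hgn]
        simp only [max_eq_left (by linarith : (0:ℝ) ≤ l ω - 1),
          max_eq_right (by linarith : 1 - l ω ≤ (0:ℝ))]
        ring
    rw [hsub]
    field_simp
    ring
  calc ∫ ω, 1 / (b + (1 - b) * l ω) ∂P
      = ∫ ω, (1 - (1 - b) * (gp ω / (b + (1 - b) * l ω)
          - gn ω / (b + (1 - b) * l ω))) ∂P := integral_congr_ae hpoint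
    _ = 1 - (1 - b) * ((∫ ω, gp ω / (b + (1 - b) * l ω) ∂P)
          - ∫ ω, gn ω / (b + (1 - b) * l ω) ∂P) := by
        have hI2 : Integrable (fun ω => (1 - b) * (gp ω / (b + (1 - b) * l ω)
            - gn ω / (b + (1 - b) * l ω))) P := (hIGp.sub hIGm).const_mul (1 - b)
        rw [integral_sub (integrable_const 1) hI2, integral_const_mul,
          integral_sub hIGp hIGm, integral_const]
        simp
    _ < 1 := by nlinarith

end TotalOdds

namespace TotalOdds
open TotalOdds TotalOdds TotalOdds Filter
variable {Ω : Type*} [MeasurableSpace Ω] (P : Measure Ω) [IsProbabilityMeasure P]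
  {l : Ω → ℝ}

lemma phi_continuousAt (hm : Measurable l) (hpos : ∀ᵐ ω ∂P, 0 < l ω)
    {p : ℝ} (hp0 : 0 < p) (hp1 : p < 1) :
    ContinuousAt (fun x => ∫ ω, 1 / (x + (1 - x) * l ω) ∂P) p := by
  apply continuousAt_of_dominated (bound := fun _ => 2/p)
  · filter_upwards with x
    exact (integrand_meas hm x).aestronglyMeasurable
  · have hmem : Set.Ioo (p/2) 1 ∈ nhds p := Ioo_mem_nhds (by linarith) hp1
    filter_upwards [hmem] with x hx
    filter_upwards [hpos] with ω hω
    have hx0 : p/2 < x := hx.1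
    have hx1 : x < 1 := hx.2
    have hd : x ≤ x + (1 - x) * l ω := by nlinarith
    have hd0 : 0 < x + (1 - x) * l ω := by nlinarith
    rw [Real.norm_eq_abs, abs_of_nonneg (by positivity)]
    calc 1 / (x + (1 - x) * l ω) ≤ 1 / x := one_div_le_one_div_of_le (by linarith) hd
      _ ≤ 2/p := by
          rw [div_le_div_iff₀ (by linarith) hp0]
          linarith
  · exact integrable_const _
  · filter_upwards [hpos] with ω hω
    have hd0 : 0 < p + (1 - p) * l ω := by nlinarith
    apply ContinuousAt.div continuousAt_const
    · exact ((continuous_id.add ((continuous_const.sub continuous_id).mul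
        continuous_const))).continuousAt
    · exact ne_of_gt hd0

lemma exists_solution (hm : Measurable l) (hpos : ∀ᵐ ω ∂P, 0 < l ω)
    (hS : 1 < ∫⁻ ω, ENNReal.ofReal (1 / l ω) ∂P)
    (hL : 1 < ∫⁻ ω, ENNReal.ofReal (l ω) ∂P) :
    ∃ p₁ ∈ Set.Ioo (0:ℝ) 1, (1:ℝ) = ∫ ω, 1 / (p₁ + (1 - p₁) * l ω) ∂P := by
  obtain ⟨a₀, ha₀0, ha₀1, ha⟩ := exists_small P hm hpos hS
  obtain ⟨b, hb0, hb1, hb⟩ := exists_big P hm hpos hL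
  set a := min a₀ (b/2) with hadef
  have ha0 : 0 < a := lt_min ha₀0 (by linarith)
  have hab : a < b := lt_of_le_of_lt (min_le_right _ _) (by linarith)
  have haphi : 1 < ∫ ω, 1 / (a + (1 - a) * l ω) ∂P := ha a ha0 (min_le_left _ _)
  have hcont : ContinuousOn (fun x => ∫ ω, 1 / (x + (1 - x) * l ω) ∂P) (Set.Icc a b) := by
    intro x hx
    exact (phi_continuousAt P hm hpos (lt_of_lt_of_le ha0 hx.1)
      (lt_of_le_of_lt hx.2 hb1)).continuousWithinAt
  have hivt := intermediate_value_Icc' (le_of_lt hab) hcont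
  have h1mem : (1:ℝ) ∈ Set.Icc (∫ ω, 1 / (b + (1 - b) * l ω) ∂P)
      (∫ ω, 1 / (a + (1 - a) * l ω) ∂P) := ⟨le_of_lt hb, le_of_lt haphi⟩
  obtain ⟨p₁, hp₁mem, hp₁⟩ := hivt h1mem
  exact ⟨p₁, ⟨lt_of_lt_of_le ha0 hp₁mem.1, lt_of_le_of_lt hp₁mem.2 hb1⟩, hp₁.symm⟩

lemma ineq3 {t a : ℝ} (ht0 : 0 < t) (ht1 : t < 1) (ha : 0 < a) :
    t * (1/a) + (1 - t) - 1/(t*a + (1-t))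
      = t*(1-t)*(a-1)^2 / (a*(t*a + (1-t))) := by
  have hd : 0 < t*a + (1-t) := by nlinarith
  field_simp
  ring

lemma unique_solution (hm : Measurable l) (hpos : ∀ᵐ ω ∂P, 0 < l ω)
    (hne : P {ω | l ω ≠ 1} ≠ 0) :
    ∀ p₁ ∈ Set.Ioo (0:ℝ) 1, ∀ q₁ ∈ Set.Ioo (0:ℝ) 1,
      (1:ℝ) = ∫ ω, 1 / (p₁ + (1 - p₁) * l ω) ∂P →
      (1:ℝ) = ∫ ω, 1 / (q₁ + (1 - q₁) * l ω) ∂P → p₁ = q₁ := by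
  have key : ∀ p q : ℝ, p ∈ Set.Ioo (0:ℝ) 1 → q ∈ Set.Ioo (0:ℝ) 1 → p < q →
      (1:ℝ) = ∫ ω, 1 / (p + (1 - p) * l ω) ∂P →
      (1:ℝ) = ∫ ω, 1 / (q + (1 - q) * l ω) ∂P → False := by
    intro p q hp hq hpq hip hiq
    obtain ⟨hp0, hp1⟩ := hp
    obtain ⟨hq0, hq1⟩ := hq
    set t : ℝ := (1 - q)/(1 - p) with htdef
    have h1p : (0:ℝ) < 1 - p := by linarith
    have h1q : (0:ℝ) < 1 - q := by linarith
    have ht0 : 0 < t := div_pos h1q h1p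
    have ht1 : t < 1 := (div_lt_one h1p).2 (by linarith)
    have hdq : ∀ ω, q + (1 - q) * l ω = t * (p + (1 - p) * l ω) + (1 - t) := by
      intro ω
      rw [htdef]
      field_simp
      ring
    set h : Ω → ℝ := fun ω =>
      t * (1 / (p + (1 - p) * l ω)) + (1 - t) - 1 / (q + (1 - q) * l ω) with hhdef
    have hnonneg : ∀ᵐ ω ∂P, 0 ≤ h ω := by
      filter_upwards [hpos] with ω hω
      have hd : 0 < p + (1 - p) * l ω := by nlinarith
      have := ineq3 ht0 ht1 hd
      rw [hhdef]
      simp only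
      rw [hdq ω, this]
      have hd2 : 0 < t * (p + (1 - p) * l ω) + (1 - t) := by nlinarith
      exact div_nonneg (mul_nonneg (mul_nonneg ht0.le (by linarith)) (sq_nonneg _))
        (mul_nonneg hd.le hd2.le)
    have hIp : Integrable (fun ω => 1 / (p + (1 - p) * l ω)) P :=
      integrable_integrand P hm hpos hp0 (le_of_lt hp1)
    have hIq : Integrable (fun ω => 1 / (q + (1 - q) * l ω)) P :=
      integrable_integrand P hm hpos hq0 (le_of_lt hq1)
    have hIh : Integrable h P := by
      rw [hhdef]
      exact ((hIp.const_mul t).add (integrable_const (1 - t))).sub hIq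
    have hint : ∫ ω, h ω ∂P = 0 := by
      rw [hhdef]
      simp only
      have hI1 : Integrable (fun ω => t * (1 / (p + (1 - p) * l ω)) + (1 - t)) P :=
        (hIp.const_mul t).add (integrable_const (1 - t))
      have hI1a : Integrable (fun ω => t * (1 / (p + (1 - p) * l ω))) P := hIp.const_mul t
      rw [integral_sub hI1 hIq, integral_add hI1a (integrable_const (1 - t)),
        integral_const_mul, integral_const, ← hip, ← hiq]
      simp
    have hzero : h =ᵐ[P] 0 := (integral_eq_zero_iff_of_nonneg_ae hnonneg hIh).1 hint
    have hall : ∀ᵐ ω ∂P, l ω = 1 := by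
      filter_upwards [hpos, hzero] with ω hω hz
      by_contra hlne
      have hd : 0 < p + (1 - p) * l ω := by nlinarith
      have hdne1 : p + (1 - p) * l ω ≠ 1 := by
        intro hc
        apply hlne
        nlinarith
      have hid := ineq3 ht0 ht1 hd
      have hz' : h ω = 0 := hz
      rw [hhdef] at hz'
      simp only at hz'
      rw [hdq ω, hid] at hz'
      have hd2 : 0 < t * (p + (1 - p) * l ω) + (1 - t) := by nlinarith
      have hnum : 0 < t * (1 - t) * (p + (1 - p) * l ω - 1)^2 :=
        mul_pos (mul_pos ht0 (by linarith))
          (TotalOdds.sq_pos' hdne1)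
      have : 0 < t * (1 - t) * (p + (1 - p) * l ω - 1)^2
          / ((p + (1 - p) * l ω) * (t * (p + (1 - p) * l ω) + (1 - t))) :=
        div_pos hnum (mul_pos hd hd2)
      linarith
    exact hne (ae_iff.1 hall)
  intro p hp q hq hip hiq
  rcases lt_trichotomy p q with h | h | h
  · exact absurd (key p q hp hq h hip hiq) (by simp)
  · exact h
  · exact absurd (key q p hq hp h hiq hip) (by simp)

end TotalOdds

/-- **Law of total odds, part (i).** Suppose `P₁[λ₀ = 1] < 1`. Then there
exists a solution `p₁ ∈ (0,1)` to `1 = E₁[1/(p₁ + (1−p₁)·λ₀)]` if and only if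
`E₁[λ₀] > 1` and `E₁[λ₀⁻¹] > 1` (values possibly `+∞`); and any solution in `(0,1)`
is unique. -/
theorem total_odds_existence_uniqueness
    {Ω : Type*} {𝒜 ℋ : MeasurableSpace Ω} (hℋ : ℋ ≤ 𝒜)
    (P₀ : @Measure Ω 𝒜) [IsProbabilityMeasure P₀]
    (P₁ : @Measure Ω ℋ) [IsProbabilityMeasure P₁] (habs : P₁ ≪ P₀.trim hℋ)
    (A : Set Ω) (hA : MeasurableSet[𝒜] A)
    (p₀ : ℝ) (hp₀ : p₀ = (P₀ A).toReal) (hp₀0 : 0 < p₀) (hp₀1 : p₀ < 1)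
    (μ : @Measure Ω ℋ) [SigmaFinite μ]
    (fA fAc : Ω → ℝ)
    (hfA_meas : @Measurable Ω ℝ ℋ _ fA) (hfAc_meas : @Measurable Ω ℝ ℋ _ fAc)
    (hfA_int : Integrable fA μ) (hfAc_int : Integrable fAc μ)
    (hfA_pos : ∀ᵐ ω ∂μ, 0 < fA ω) (hfAc_pos : ∀ᵐ ω ∂μ, 0 < fAc ω)
    (hdensA : ∀ H : Set Ω, MeasurableSet[ℋ] H →
      (P₀ (H ∩ A)).toReal = p₀ * ∫ ω in H, fA ω ∂μ)
    (hdensAc : ∀ H : Set Ω, MeasurableSet[ℋ] H →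
      (P₀ (H ∩ Aᶜ)).toReal = (1 - p₀) * ∫ ω in H, fAc ω ∂μ)
    (hlam : P₁ {ω | fAc ω / fA ω = 1} < 1) :
    ((∃ p₁ ∈ Set.Ioo (0:ℝ) 1,
        (1:ℝ) = ∫ ω, 1 / (p₁ + (1 - p₁) * (fAc ω / fA ω)) ∂P₁) ↔
      (1 < ∫⁻ ω, ENNReal.ofReal (fAc ω / fA ω) ∂P₁ ∧
        1 < ∫⁻ ω, ENNReal.ofReal (fA ω / fAc ω) ∂P₁)) ∧
    (∀ p₁ ∈ Set.Ioo (0:ℝ) 1, ∀ q₁ ∈ Set.Ioo (0:ℝ) 1,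
      (1:ℝ) = ∫ ω, 1 / (p₁ + (1 - p₁) * (fAc ω / fA ω)) ∂P₁ →
      (1:ℝ) = ∫ ω, 1 / (q₁ + (1 - q₁) * (fAc ω / fA ω)) ∂P₁ → p₁ = q₁) := by
  classical
  -- a.e. positivity of the densities under P₁
  have hN : ∀ᵐ ω ∂P₁, 0 < fA ω ∧ 0 < fAc ω := by
    set N : Set Ω := {ω | ¬ (0 < fA ω)} ∪ {ω | ¬ (0 < fAc ω)} with hNdef
    have hNm : MeasurableSet[ℋ] N := by
      have h1 : MeasurableSet[ℋ] {ω | (0:ℝ) < fA ω} :=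
        measurableSet_lt measurable_const hfA_meas
      have h2 : MeasurableSet[ℋ] {ω | (0:ℝ) < fAc ω} :=
        measurableSet_lt measurable_const hfAc_meas
      exact (h1.compl).union (h2.compl)
    have hμN : μ N = 0 :=
      measure_union_null (ae_iff.1 hfA_pos) (ae_iff.1 hfAc_pos)
    have hres : μ.restrict N = 0 := Measure.restrict_eq_zero.2 hμN
    have hiA : ∫ ω in N, fA ω ∂μ = 0 := by rw [hres, integral_zero_measure]
    have hiAc : ∫ ω in N, fAc ω ∂μ = 0 := by rw [hres, integral_zero_measure]
    have hP0A : P₀ (N ∩ A) = 0 := by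
      have h := hdensA N hNm
      rw [hiA, mul_zero] at h
      rcases (ENNReal.toReal_eq_zero_iff _).1 h with h' | h'
      · exact h'
      · exact absurd h' (measure_ne_top _ _)
    have hP0Ac : P₀ (N ∩ Aᶜ) = 0 := by
      have h := hdensAc N hNm
      rw [hiAc, mul_zero] at h
      rcases (ENNReal.toReal_eq_zero_iff _).1 h with h' | h'
      · exact h'
      · exact absurd h' (measure_ne_top _ _)
    have hP0N : P₀ N = 0 := by
      have hle : P₀ N ≤ P₀ (N ∩ A) + P₀ (N ∩ Aᶜ) := by
        refine le_trans (measure_mono ?_) (measure_union_le _ _)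
        rw [Set.inter_union_compl N A]
      rw [hP0A, hP0Ac, add_zero] at hle
      exact le_antisymm hle zero_le
    have hP1N : P₁ N = 0 := by
      apply habs
      rwa [trim_measurableSet_eq hℋ hNm]
    rw [ae_iff]
    refine measure_mono_null ?_ hP1N
    intro ω hω
    simp only [Set.mem_setOf_eq, not_and] at hω
    rw [hNdef]
    by_cases h0 : 0 < fA ω
    · exact Or.inr (fun hc => (hω h0) hc)
    · exact Or.inl h0
  have hl_meas : @Measurable Ω ℝ ℋ _ (fun ω => fAc ω / fA ω) := hfAc_meas.div hfA_meas
  have hl_pos : ∀ᵐ ω ∂P₁, 0 < fAc ω / fA ω := by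
    filter_upwards [hN] with ω hω
    exact div_pos hω.2 hω.1
  have hne : P₁ {ω | fAc ω / fA ω ≠ 1} ≠ 0 := by
    intro h0
    have h1 : P₁ Set.univ ≤ P₁ {ω | fAc ω / fA ω = 1} + P₁ {ω | fAc ω / fA ω ≠ 1} := by
      refine le_trans (measure_mono ?_) (measure_union_le _ _)
      intro ω _
      by_cases h : fAc ω / fA ω = 1
      · exact Or.inl h
      · exact Or.inr h
    rw [measure_univ, h0, add_zero] at h1
    exact absurd hlam (not_lt.2 h1)
  have hcongr : ∫⁻ ω, ENNReal.ofReal (fA ω / fAc ω) ∂P₁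
      = ∫⁻ ω, ENNReal.ofReal (1 / (fAc ω / fA ω)) ∂P₁ := by
    apply lintegral_congr_ae
    filter_upwards [hN] with ω hω
    rw [one_div, inv_div]
  constructor
  · constructor
    · rintro ⟨p₁, hp₁, heq⟩
      have h1 := TotalOdds.lintegral_eq_one P₁ hl_meas hl_pos hp₁.1 hp₁.2.le heq
      refine ⟨TotalOdds.forward_l P₁ hl_meas hl_pos hne hp₁.1 hp₁.2 h1, ?_⟩
      rw [hcongr]
      exact TotalOdds.forward_linv P₁ hl_meas hl_pos hne hp₁.1 hp₁.2 h1
    · rintro ⟨hL, hK⟩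
      rw [hcongr] at hK
      exact TotalOdds.exists_solution P₁ hl_meas hl_pos hK hL
  · exact TotalOdds.unique_solution P₁ hl_meas hl_pos hne
end

section
/- Suppose P₁[λ₀ = 1] < 1 and p₁ ∈ (0,1) solves 1 = E₁[1/(p₁ + (1−p₁)·λ₀)]. Define, for B ∈ ℋ^A with any representation B = (A ∩ H) ∪ (A^c ∩ G) where H, G ∈ ℋ, P₁*[B] = E₁[1_H · p₁/(p₁ + (1−p₁)λ₀)] + E₁[1_G · (1−p₁)λ₀/(p₁ + (1−p₁)λ₀)]. Then P₁* is well defined (independent of the chosen representation), is a probability measure on ℋ^A, and its restriction to ℋ equals P₁. -/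
open MeasureTheory Set

private lemma aux_setLIntegral
    {Ω : Type*} {𝒜 ℋ : MeasurableSpace Ω} (hℋ : ℋ ≤ 𝒜)
    (P : @Measure Ω 𝒜) (μ : @Measure Ω ℋ)
    (S : Set Ω) (d : Ω → ENNReal) (hd : @Measurable Ω ENNReal ℋ _ d)
    (hE : (P.restrict S).trim hℋ = μ.withDensity d)
    (ρ : Ω → ENNReal) (hρ : @Measurable Ω ENNReal ℋ _ ρ)
    {H : Set Ω} (hH : MeasurableSet[ℋ] H) :
    ∫⁻ ω in S ∩ H, ρ ω ∂P = ∫⁻ ω in H, d ω * ρ ω ∂μ := by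
  have h1 : ∫⁻ ω in S ∩ H, ρ ω ∂P = ∫⁻ ω, H.indicator ρ ω ∂(P.restrict S) := by
    rw [lintegral_indicator (hℋ H hH), Measure.restrict_restrict (hℋ H hH), inter_comm]
  have hind : @Measurable Ω ENNReal ℋ _ (H.indicator ρ) := hρ.indicator hH
  rw [h1, ← lintegral_trim hℋ hind, hE,
    lintegral_withDensity_eq_lintegral_mul μ hd hind]
  have h2 : ∀ ω, (d * H.indicator ρ) ω = H.indicator (fun ω => d ω * ρ ω) ω := by
    intro ω
    by_cases hω : ω ∈ H <;>
      simp [hω, Set.indicator_of_mem, Set.indicator_of_notMem]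
  rw [lintegral_congr h2, lintegral_indicator hH]

/-- **Law of total odds, part (iii).** Suppose `P₁[λ₀ = 1] < 1` and
`p₁ ∈ (0,1)` solves `1 = E₁[1/(p₁ + (1−p₁)·λ₀)]`. Then the set function
`P₁*[(A ∩ H) ∪ (A^c ∩ G)] = E₁[1_H·p₁/(p₁+(1−p₁)λ₀)] + E₁[1_G·(1−p₁)λ₀/(p₁+(1−p₁)λ₀)]`
is well defined (independent of the representation), is a probability measure on
`ℋ^A = σ(ℋ ∪ {A})`, and restricts to `P₁` on `ℋ`. -/
theorem total_odds_extension_exists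
    {Ω : Type*} {𝒜 ℋ : MeasurableSpace Ω} (hℋ : ℋ ≤ 𝒜)
    (P₀ : @Measure Ω 𝒜) [IsProbabilityMeasure P₀]
    (P₁ : @Measure Ω ℋ) [IsProbabilityMeasure P₁] (habs : P₁ ≪ P₀.trim hℋ)
    (A : Set Ω) (hA : MeasurableSet[𝒜] A)
    (p₀ : ℝ) (hp₀ : p₀ = (P₀ A).toReal) (hp₀0 : 0 < p₀) (hp₀1 : p₀ < 1)
    (μ : @Measure Ω ℋ) [SigmaFinite μ]
    (fA fAc : Ω → ℝ)
    (hfA_meas : @Measurable Ω ℝ ℋ _ fA) (hfAc_meas : @Measurable Ω ℝ ℋ _ fAc)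
    (hfA_int : Integrable fA μ) (hfAc_int : Integrable fAc μ)
    (hfA_pos : ∀ᵐ ω ∂μ, 0 < fA ω) (hfAc_pos : ∀ᵐ ω ∂μ, 0 < fAc ω)
    (hdensA : ∀ H : Set Ω, MeasurableSet[ℋ] H →
      (P₀ (H ∩ A)).toReal = p₀ * ∫ ω in H, fA ω ∂μ)
    (hdensAc : ∀ H : Set Ω, MeasurableSet[ℋ] H →
      (P₀ (H ∩ Aᶜ)).toReal = (1 - p₀) * ∫ ω in H, fAc ω ∂μ)
    (hlam : P₁ {ω | fAc ω / fA ω = 1} < 1)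
    (p₁ : ℝ) (hp₁ : p₁ ∈ Set.Ioo (0:ℝ) 1)
    (heq : (1:ℝ) = ∫ ω, 1 / (p₁ + (1 - p₁) * (fAc ω / fA ω)) ∂P₁) :
    ∃ P₁star : @Measure Ω (ℋ ⊔ MeasurableSpace.generateFrom {A}),
      IsProbabilityMeasure P₁star ∧
      (∀ H G : Set Ω, MeasurableSet[ℋ] H → MeasurableSet[ℋ] G →
        (P₁star ((A ∩ H) ∪ (Aᶜ ∩ G))).toReal =
          (∫ ω, H.indicator (fun _ => (1:ℝ)) ω *
              (p₁ / (p₁ + (1 - p₁) * (fAc ω / fA ω))) ∂P₁) +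
          (∫ ω, G.indicator (fun _ => (1:ℝ)) ω *
              ((1 - p₁) * (fAc ω / fA ω) / (p₁ + (1 - p₁) * (fAc ω / fA ω))) ∂P₁)) ∧
      (∀ H : Set Ω, MeasurableSet[ℋ] H → P₁star H = P₁ H) := by
  classical
  obtain ⟨hp₁0, hp₁1⟩ := hp₁
  set lam : Ω → ℝ := fun ω => fAc ω / fA ω with hlam_def
  set Dd : Ω → ℝ := fun ω => p₁ + (1 - p₁) * lam ω with hDd_def
  set g : Ω → ℝ := fun ω => p₁ / Dd ω with hg_def
  set hR : Ω → ℝ := fun ω => (1 - p₁) * lam ω / Dd ω with hhR_def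
  have hlam_meas : @Measurable Ω ℝ ℋ _ lam := hfAc_meas.div hfA_meas
  have hDd_meas : @Measurable Ω ℝ ℋ _ Dd :=
    measurable_const.add (measurable_const.mul hlam_meas)
  have hg_meas : @Measurable Ω ℝ ℋ _ g := measurable_const.div hDd_meas
  have hhR_meas : @Measurable Ω ℝ ℋ _ hR :=
    (measurable_const.mul hlam_meas).div hDd_meas
  set g' : Ω → ENNReal := fun ω => ENNReal.ofReal (g ω) with hg'_def
  set h' : Ω → ENNReal := fun ω => ENNReal.ofReal (hR ω) with hh'_def
  have hg'_meas : @Measurable Ω ENNReal ℋ _ g' := ENNReal.measurable_ofReal.comp hg_meas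
  have hh'_meas : @Measurable Ω ENNReal ℋ _ h' := ENNReal.measurable_ofReal.comp hhR_meas
  set k : Ω → ENNReal := fun ω => ENNReal.ofReal (p₀ * fA ω + (1 - p₀) * fAc ω) with hk_def
  set dA : Ω → ENNReal := fun ω => ENNReal.ofReal (p₀ * fA ω) with hdA_def
  set dAc : Ω → ENNReal := fun ω => ENNReal.ofReal ((1 - p₀) * fAc ω) with hdAc_def
  have hk_meas : @Measurable Ω ENNReal ℋ _ k :=
    ENNReal.measurable_ofReal.comp
      ((measurable_const.mul hfA_meas).add (measurable_const.mul hfAc_meas))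
  have hdA_meas : @Measurable Ω ENNReal ℋ _ dA :=
    ENNReal.measurable_ofReal.comp (measurable_const.mul hfA_meas)
  have hdAc_meas : @Measurable Ω ENNReal ℋ _ dAc :=
    ENNReal.measurable_ofReal.comp (measurable_const.mul hfAc_meas)
  -- the trimmed measure is a (probability) measure
  haveI hTP : IsProbabilityMeasure (P₀.trim hℋ) := by
    constructor
    rw [trim_measurableSet_eq hℋ MeasurableSet.univ]
    exact measure_univ
  -- E0 : trim of P₀ has density k w.r.t. μ
  have E0 : P₀.trim hℋ = μ.withDensity k := by
    ext H hH
    rw [trim_measurableSet_eq hℋ hH, withDensity_apply _ hH]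
    have hsplit : P₀ H = P₀ (H ∩ A) + P₀ (H ∩ Aᶜ) := by
      rw [← measure_inter_add_diff H hA, diff_eq]
    have hint : Integrable (fun ω => p₀ * fA ω + (1 - p₀) * fAc ω) (μ.restrict H) :=
      ((hfA_int.const_mul p₀).add (hfAc_int.const_mul (1 - p₀))).restrict
    have hnn : 0 ≤ᵐ[μ.restrict H] (fun ω => p₀ * fA ω + (1 - p₀) * fAc ω) := by
      refine ae_restrict_of_ae ?_
      filter_upwards [hfA_pos, hfAc_pos] with ω h1 h2
      have : (0:ℝ) < 1 - p₀ := by linarith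
      positivity
    have hlint : ∫⁻ ω in H, k ω ∂μ
        = ENNReal.ofReal (∫ ω in H, (p₀ * fA ω + (1 - p₀) * fAc ω) ∂μ) :=
      (ofReal_integral_eq_lintegral_ofReal hint hnn).symm
    have hval : ∫ ω in H, (p₀ * fA ω + (1 - p₀) * fAc ω) ∂μ = (P₀ H).toReal := by
      rw [integral_add ((hfA_int.const_mul p₀).restrict) ((hfAc_int.const_mul _).restrict),
        integral_const_mul, integral_const_mul, ← hdensA H hH, ← hdensAc H hH, hsplit,
        ENNReal.toReal_add (measure_ne_top _ _) (measure_ne_top _ _)]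
    rw [hlint, hval, ENNReal.ofReal_toReal (measure_ne_top _ _)]
  -- EA : trim of P₀ restricted to A has density dA
  have EA : (P₀.restrict A).trim hℋ = μ.withDensity dA := by
    ext H hH
    rw [trim_measurableSet_eq hℋ hH, withDensity_apply _ hH,
      Measure.restrict_apply (hℋ H hH)]
    have hint : Integrable (fun ω => p₀ * fA ω) (μ.restrict H) :=
      (hfA_int.const_mul p₀).restrict
    have hnn : 0 ≤ᵐ[μ.restrict H] (fun ω => p₀ * fA ω) := by
      refine ae_restrict_of_ae ?_
      filter_upwards [hfA_pos] with ω h1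
      positivity
    have hlint : ∫⁻ ω in H, dA ω ∂μ = ENNReal.ofReal (∫ ω in H, p₀ * fA ω ∂μ) :=
      (ofReal_integral_eq_lintegral_ofReal hint hnn).symm
    rw [hlint, integral_const_mul, ← hdensA H hH,
      ENNReal.ofReal_toReal (measure_ne_top _ _)]
  have EAc : (P₀.restrict Aᶜ).trim hℋ = μ.withDensity dAc := by
    ext H hH
    rw [trim_measurableSet_eq hℋ hH, withDensity_apply _ hH,
      Measure.restrict_apply (hℋ H hH)]
    have hint : Integrable (fun ω => (1 - p₀) * fAc ω) (μ.restrict H) :=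
      (hfAc_int.const_mul (1 - p₀)).restrict
    have hnn : 0 ≤ᵐ[μ.restrict H] (fun ω => (1 - p₀) * fAc ω) := by
      refine ae_restrict_of_ae ?_
      filter_upwards [hfAc_pos] with ω h1
      have : (0:ℝ) < 1 - p₀ := by linarith
      positivity
    have hlint : ∫⁻ ω in H, dAc ω ∂μ = ENNReal.ofReal (∫ ω in H, (1 - p₀) * fAc ω ∂μ) :=
      (ofReal_integral_eq_lintegral_ofReal hint hnn).symm
    rw [hlint, integral_const_mul, ← hdensAc H hH,
      ENNReal.ofReal_toReal (measure_ne_top _ _)]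
  -- P₁ ≪ μ
  have hP₁μ : P₁ ≪ μ := habs.trans (by rw [E0]; exact withDensity_absolutelyContinuous μ k)
  -- base a.e. facts under P₁
  have hbase : ∀ᵐ ω ∂P₁, 0 < fA ω ∧ 0 < fAc ω := hP₁μ.ae_le (hfA_pos.and hfAc_pos)
  have hDfacts : ∀ᵐ ω ∂P₁, 0 < lam ω ∧ 0 < Dd ω := by
    filter_upwards [hbase] with ω hω
    have hl : 0 < lam ω := div_pos hω.2 hω.1
    refine ⟨hl, ?_⟩
    have h1p : (0:ℝ) < 1 - p₁ := by linarith
    simp only [hDd_def]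
    nlinarith
  have hgh : ∀ᵐ ω ∂P₁, 0 ≤ g ω ∧ g ω ≤ 1 ∧ 0 ≤ hR ω ∧ hR ω ≤ 1 ∧ g ω + hR ω = 1 := by
    filter_upwards [hDfacts] with ω ⟨hl, hD⟩
    have h1p : (0:ℝ) < 1 - p₁ := by linarith
    have hgle : g ω ≤ 1 := by
      simp only [hg_def]
      rw [div_le_one hD]
      simp only [hDd_def]
      nlinarith
    have hhle : hR ω ≤ 1 := by
      simp only [hhR_def]
      rw [div_le_one hD]
      simp only [hDd_def]
      nlinarith
    refine ⟨le_of_lt (div_pos hp₁0 hD), hgle,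
      le_of_lt (div_pos (by positivity) hD), hhle, ?_⟩
    have hD' := hD
    simp only [hDd_def] at hD'
    simp only [hg_def, hhR_def, ← add_div, hDd_def]
    exact div_self (ne_of_gt hD')
  -- integrability
  have hg_int : Integrable g P₁ := by
    refine Integrable.mono' (integrable_const 1) hg_meas.aestronglyMeasurable ?_
    filter_upwards [hgh] with ω hω
    rw [Real.norm_eq_abs, abs_of_nonneg hω.1]
    exact hω.2.1
  have hhR_int : Integrable hR P₁ := by
    refine Integrable.mono' (integrable_const 1) hhR_meas.aestronglyMeasurable ?_
    filter_upwards [hgh] with ω hω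
    rw [Real.norm_eq_abs, abs_of_nonneg hω.2.2.1]
    exact hω.2.2.2.1
  -- total masses
  have heq' : (1:ℝ) = ∫ ω, 1 / Dd ω ∂P₁ := heq
  have hint_g : ∫ ω, g ω ∂P₁ = p₁ := by
    have h1 : ∫ ω, g ω ∂P₁ = ∫ ω, p₁ * (1 / Dd ω) ∂P₁ := by
      refine integral_congr_ae (Filter.Eventually.of_forall fun ω => ?_)
      simp only [hg_def]
      rw [mul_one_div]
    rw [h1, integral_const_mul, ← heq', mul_one]
  have hint_h : ∫ ω, hR ω ∂P₁ = 1 - p₁ := by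
    have h1 : ∫ ω, hR ω ∂P₁ = ∫ ω, (1 - g ω) ∂P₁ := by
      refine integral_congr_ae ?_
      filter_upwards [hgh] with ω hω
      linarith [hω.2.2.2.2]
    rw [h1, integral_sub (integrable_const 1) hg_int, hint_g]
    simp
  -- Radon–Nikodym derivative
  set r : Ω → ENNReal := P₁.rnDeriv (P₀.trim hℋ) with hr_def
  have hr_meas : @Measurable Ω ENNReal ℋ _ r := Measure.measurable_rnDeriv _ _
  have hP₁eq : (P₀.trim hℋ).withDensity r = P₁ :=
    Measure.withDensity_rnDeriv_eq _ _ habs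
  -- densities for Q
  set α : Ω → ENNReal := fun ω => k ω * r ω * g' ω / dA ω with hα_def
  set β : Ω → ENNReal := fun ω => k ω * r ω * h' ω / dAc ω with hβ_def
  have hα_meas : @Measurable Ω ENNReal ℋ _ α := ((hk_meas.mul hr_meas).mul hg'_meas).div hdA_meas
  have hβ_meas : @Measurable Ω ENNReal ℋ _ β := ((hk_meas.mul hr_meas).mul hh'_meas).div hdAc_meas
  set w : Ω → ENNReal := A.piecewise α β with hw_def
  have hw_meas : @Measurable Ω ENNReal 𝒜 _ w :=
    Measurable.piecewise hA (hα_meas.mono hℋ le_rfl) (hβ_meas.mono hℋ le_rfl)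
  set Q : @Measure Ω 𝒜 := P₀.withDensity w with hQ_def
  -- chain lemma: ∫⁻_H k r ρ dμ = ∫⁻_H ρ dP₁ for ℋ-measurable ρ
  have chain : ∀ (ρ : Ω → ENNReal), @Measurable Ω ENNReal ℋ _ ρ →
      ∀ (H : Set Ω), MeasurableSet[ℋ] H →
      ∫⁻ ω in H, k ω * r ω * ρ ω ∂μ = ∫⁻ ω in H, ρ ω ∂P₁ := by
    intro ρ hρ H hH
    rw [← hP₁eq, E0, restrict_withDensity hH, restrict_withDensity hH,
      lintegral_withDensity_eq_lintegral_mul _ hr_meas hρ]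
    simp only [Pi.mul_apply]
    rw [lintegral_withDensity_eq_lintegral_mul _ hk_meas (g := fun a => r a * ρ a) (hr_meas.mul hρ)]
    refine lintegral_congr fun ω => ?_
    simp [Pi.mul_apply, mul_assoc]
  -- values of Q on the two pieces
  have QA : ∀ H : Set Ω, MeasurableSet[ℋ] H → Q (A ∩ H) = ∫⁻ ω in H, g' ω ∂P₁ := by
    intro H hH
    rw [hQ_def, withDensity_apply _ (hA.inter (hℋ H hH))]
    have h1 : ∫⁻ ω in A ∩ H, w ω ∂P₀ = ∫⁻ ω in A ∩ H, α ω ∂P₀ :=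
      setLIntegral_congr_fun_ae (hA.inter (hℋ H hH))
        (Filter.Eventually.of_forall fun ω hω => Set.piecewise_eq_of_mem _ _ _ hω.1)
    rw [h1, aux_setLIntegral hℋ P₀ μ A dA hdA_meas EA α hα_meas hH]
    have h2 : ∫⁻ ω in H, dA ω * α ω ∂μ = ∫⁻ ω in H, k ω * r ω * g' ω ∂μ := by
      refine setLIntegral_congr_fun_ae hH ?_
      filter_upwards [hfA_pos] with ω hω _
      rw [hα_def]
      exact ENNReal.mul_div_cancel
        (by simp only [hdA_def, ne_eq, ENNReal.ofReal_eq_zero, not_le]; positivity)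
        ENNReal.ofReal_ne_top
    rw [h2, chain g' hg'_meas H hH]
  have QAc : ∀ G : Set Ω, MeasurableSet[ℋ] G → Q (Aᶜ ∩ G) = ∫⁻ ω in G, h' ω ∂P₁ := by
    intro G hG
    rw [hQ_def, withDensity_apply _ (hA.compl.inter (hℋ G hG))]
    have h1 : ∫⁻ ω in Aᶜ ∩ G, w ω ∂P₀ = ∫⁻ ω in Aᶜ ∩ G, β ω ∂P₀ :=
      setLIntegral_congr_fun_ae (hA.compl.inter (hℋ G hG))
        (Filter.Eventually.of_forall fun ω hω => Set.piecewise_eq_of_notMem _ _ _ hω.1)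
    rw [h1, aux_setLIntegral hℋ P₀ μ Aᶜ dAc hdAc_meas EAc β hβ_meas hG]
    have h2 : ∫⁻ ω in G, dAc ω * β ω ∂μ = ∫⁻ ω in G, k ω * r ω * h' ω ∂μ := by
      refine setLIntegral_congr_fun_ae hG ?_
      filter_upwards [hfAc_pos] with ω hω _
      rw [hβ_def]
      refine ENNReal.mul_div_cancel ?_ ENNReal.ofReal_ne_top
      simp only [hdAc_def, ne_eq, ENNReal.ofReal_eq_zero, not_le]
      have : (0:ℝ) < 1 - p₀ := by linarith
      positivity
    rw [h2, chain h' hh'_meas G hG]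
  -- set-integral representations
  have hg_nonneg : 0 ≤ᵐ[P₁] g := by filter_upwards [hgh] with ω hω; exact hω.1
  have hh_nonneg : 0 ≤ᵐ[P₁] hR := by filter_upwards [hgh] with ω hω; exact hω.2.2.1
  have lintA : ∀ H : Set Ω, MeasurableSet[ℋ] H →
      ∫⁻ ω in H, g' ω ∂P₁ = ENNReal.ofReal (∫ ω in H, g ω ∂P₁) := by
    intro H hH
    exact (ofReal_integral_eq_lintegral_ofReal hg_int.restrict
      (ae_restrict_of_ae hg_nonneg)).symm
  have lintAc : ∀ G : Set Ω, MeasurableSet[ℋ] G →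
      ∫⁻ ω in G, h' ω ∂P₁ = ENNReal.ofReal (∫ ω in G, hR ω ∂P₁) := by
    intro G hG
    exact (ofReal_integral_eq_lintegral_ofReal hhR_int.restrict
      (ae_restrict_of_ae hh_nonneg)).symm
  -- the σ-algebra ℋ^A
  have hle : ℋ ⊔ MeasurableSpace.generateFrom {A} ≤ 𝒜 := by
    refine sup_le hℋ (MeasurableSpace.generateFrom_le ?_)
    rintro s rfl
    exact hA
  have hAm : MeasurableSet[ℋ ⊔ MeasurableSpace.generateFrom {A}] A :=
    (le_sup_right : MeasurableSpace.generateFrom {A} ≤ _) A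
      (MeasurableSpace.measurableSet_generateFrom rfl)
  have hlift : ∀ {H : Set Ω}, MeasurableSet[ℋ] H →
      MeasurableSet[ℋ ⊔ MeasurableSpace.generateFrom {A}] H :=
    fun hH => (le_sup_left : ℋ ≤ _) _ hH
  have hdisj : ∀ (H G : Set Ω), Disjoint (A ∩ H) (Aᶜ ∩ G) := fun H G =>
    disjoint_compl_right.mono inf_le_left inf_le_left
  refine ⟨Q.trim hle, ?_, ?_, ?_⟩
  · -- probability measure
    constructor
    rw [trim_measurableSet_eq hle MeasurableSet.univ]
    have huniv : (univ : Set Ω) = (A ∩ univ) ∪ (Aᶜ ∩ univ) := by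
      simp [union_compl_self]
    rw [huniv, measure_union ?_ (hA.compl.inter MeasurableSet.univ),
      QA univ MeasurableSet.univ, QAc univ MeasurableSet.univ,
      lintA univ MeasurableSet.univ, lintAc univ MeasurableSet.univ]
    · rw [Measure.restrict_univ, hint_g, hint_h, ← ENNReal.ofReal_add (le_of_lt hp₁0) (by linarith)]
      norm_num
    · exact hdisj univ univ
  · -- the formula
    intro H G hH hG
    rw [trim_measurableSet_eq hle
      (((hAm.inter (hlift hH))).union (hAm.compl.inter (hlift hG)))]
    rw [measure_union (hdisj H G)
      ((hle _ (hAm.compl.inter (hlift hG)))),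
      QA H hH, QAc G hG, lintA H hH, lintAc G hG,
      ENNReal.toReal_add ENNReal.ofReal_ne_top ENNReal.ofReal_ne_top,
      ENNReal.toReal_ofReal (integral_nonneg_of_ae (ae_restrict_of_ae hg_nonneg)),
      ENNReal.toReal_ofReal (integral_nonneg_of_ae (ae_restrict_of_ae hh_nonneg))]
    have e1 : ∫ ω in H, g ω ∂P₁ = ∫ ω, H.indicator (fun _ => (1:ℝ)) ω * g ω ∂P₁ := by
      rw [← integral_indicator hH]
      refine integral_congr_ae (Filter.Eventually.of_forall fun ω => ?_)
      by_cases hω : ω ∈ H <;> simp [hω]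
    have e2 : ∫ ω in G, hR ω ∂P₁ = ∫ ω, G.indicator (fun _ => (1:ℝ)) ω * hR ω ∂P₁ := by
      rw [← integral_indicator hG]
      refine integral_congr_ae (Filter.Eventually.of_forall fun ω => ?_)
      by_cases hω : ω ∈ G <;> simp [hω]
    rw [e1, e2]
  · -- restriction to ℋ
    intro H hH
    rw [trim_measurableSet_eq hle (hlift hH)]
    have hsplit : H = (A ∩ H) ∪ (Aᶜ ∩ H) := by
      rw [← union_inter_distrib_right, union_compl_self, univ_inter]
    rw [show Q H = Q ((A ∩ H) ∪ (Aᶜ ∩ H)) from by rw [← hsplit],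
      measure_union (hdisj H H)
        (hle _ (hAm.compl.inter (hlift hH))),
      QA H hH, QAc H hH, ← lintegral_add_left hg'_meas]
    have h1 : ∫⁻ ω in H, (g' ω + h' ω) ∂P₁ = ∫⁻ ω in H, 1 ∂P₁ := by
      refine setLIntegral_congr_fun_ae hH ?_
      filter_upwards [hgh] with ω hω _
      rw [hg'_def, hh'_def, ← ENNReal.ofReal_add hω.1 hω.2.2.1, hω.2.2.2.2]
      simp
    rw [h1, setLIntegral_one]
end

section
/- Suppose P₁[λ₀ = 1] < 1 and p₁ ∈ (0,1) solves 1 = E₁[1/(p₁ + (1−p₁)·λ₀)], and let P₁* be the probability measure on ℋ^A given by P₁*[(A ∩ H) ∪ (A^c ∩ G)] = E₁[1_H · p₁/(p₁ + (1−p₁)λ₀)] + E₁[1_G · (1−p₁)λ₀/(p₁ + (1−p₁)λ₀)] for H, G ∈ ℋ. Then the ℋ-conditional probability of A under P₁* satisfies P₁*[A|ℋ] = p₁/(p₁ + (1−p₁)·λ₀) P₁*-almost surely; in particular P₁*[A] = p₁. -/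
open MeasureTheory Set

/-- **Law of total odds, part (iv).** Suppose `P₁[λ₀ = 1] < 1` and
`p₁ ∈ (0,1)` solves `1 = E₁[1/(p₁ + (1−p₁)·λ₀)]`, and let `P₁*` be the probability
measure on `ℋ^A` given by the total-odds formula. Then
`P₁*[A|ℋ] = p₁/(p₁ + (1−p₁)·λ₀)` `P₁*`-almost surely; in particular `P₁*[A] = p₁`. -/
theorem total_odds_condexp
    {Ω : Type*} {𝒜 ℋ : MeasurableSpace Ω} (hℋ : ℋ ≤ 𝒜)
    (P₀ : @Measure Ω 𝒜) [IsProbabilityMeasure P₀]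
    (P₁ : @Measure Ω ℋ) [IsProbabilityMeasure P₁] (habs : P₁ ≪ P₀.trim hℋ)
    (A : Set Ω) (hA : MeasurableSet[𝒜] A)
    (p₀ : ℝ) (hp₀ : p₀ = (P₀ A).toReal) (hp₀0 : 0 < p₀) (hp₀1 : p₀ < 1)
    (μ : @Measure Ω ℋ) [SigmaFinite μ]
    (fA fAc : Ω → ℝ)
    (hfA_meas : @Measurable Ω ℝ ℋ _ fA) (hfAc_meas : @Measurable Ω ℝ ℋ _ fAc)
    (hfA_int : Integrable fA μ) (hfAc_int : Integrable fAc μ)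
    (hfA_pos : ∀ᵐ ω ∂μ, 0 < fA ω) (hfAc_pos : ∀ᵐ ω ∂μ, 0 < fAc ω)
    (hdensA : ∀ H : Set Ω, MeasurableSet[ℋ] H →
      (P₀ (H ∩ A)).toReal = p₀ * ∫ ω in H, fA ω ∂μ)
    (hdensAc : ∀ H : Set Ω, MeasurableSet[ℋ] H →
      (P₀ (H ∩ Aᶜ)).toReal = (1 - p₀) * ∫ ω in H, fAc ω ∂μ)
    (hlam : P₁ {ω | fAc ω / fA ω = 1} < 1)
    (p₁ : ℝ) (hp₁ : p₁ ∈ Set.Ioo (0:ℝ) 1)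
    (heq : (1:ℝ) = ∫ ω, 1 / (p₁ + (1 - p₁) * (fAc ω / fA ω)) ∂P₁)
    (P₁star : @Measure Ω (ℋ ⊔ MeasurableSpace.generateFrom {A}))
    [IsProbabilityMeasure P₁star]
    (hstar : ∀ H G : Set Ω, MeasurableSet[ℋ] H → MeasurableSet[ℋ] G →
      (P₁star ((A ∩ H) ∪ (Aᶜ ∩ G))).toReal =
        (∫ ω, H.indicator (fun _ => (1:ℝ)) ω *
            (p₁ / (p₁ + (1 - p₁) * (fAc ω / fA ω))) ∂P₁) +
        (∫ ω, G.indicator (fun _ => (1:ℝ)) ω *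
            ((1 - p₁) * (fAc ω / fA ω) / (p₁ + (1 - p₁) * (fAc ω / fA ω))) ∂P₁)) :
    (condExp ℋ P₁star (A.indicator fun _ => (1:ℝ))
      =ᵐ[P₁star] fun ω => p₁ / (p₁ + (1 - p₁) * (fAc ω / fA ω))) ∧
    (P₁star A).toReal = p₁ := by
  classical
  obtain ⟨hp₁0, hp₁1⟩ := hp₁
  have hle : ℋ ≤ ℋ ⊔ MeasurableSpace.generateFrom {A} := le_sup_left
  have hA' : MeasurableSet[MeasurableSpace.generateFrom {A}] A :=
    MeasurableSpace.measurableSet_generateFrom (mem_singleton _)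
  have hAm : MeasurableSet[ℋ ⊔ MeasurableSpace.generateFrom {A}] A :=
    (le_sup_right : MeasurableSpace.generateFrom {A} ≤ _) _ hA'
  set g : Ω → ℝ := fun ω => p₁ / (p₁ + (1 - p₁) * (fAc ω / fA ω)) with hg_def
  set h : Ω → ℝ :=
    fun ω => (1 - p₁) * (fAc ω / fA ω) / (p₁ + (1 - p₁) * (fAc ω / fA ω)) with hh_def
  have hgω : ∀ ω, p₁ / (p₁ + (1 - p₁) * (fAc ω / fA ω)) = g ω := fun ω => rfl
  have hhω : ∀ ω,
      (1 - p₁) * (fAc ω / fA ω) / (p₁ + (1 - p₁) * (fAc ω / fA ω)) = h ω := fun ω => rfl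
  have hg_meas : Measurable[ℋ] g :=
    measurable_const.div (measurable_const.add (measurable_const.mul (hfAc_meas.div hfA_meas)))
  have hh_meas : Measurable[ℋ] h :=
    (measurable_const.mul (hfAc_meas.div hfA_meas)).div
      (measurable_const.add (measurable_const.mul (hfAc_meas.div hfA_meas)))
  -- the bad set
  set N : Set Ω := {ω | ¬ (0 < fA ω ∧ 0 < fAc ω)} with hN_def
  have hN_meas : MeasurableSet[ℋ] N := by
    have : MeasurableSet[ℋ] {ω | 0 < fA ω ∧ 0 < fAc ω} :=
      (measurableSet_lt measurable_const hfA_meas).inter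
        (measurableSet_lt measurable_const hfAc_meas)
    exact this.compl
  have hμN : μ N = 0 := by
    have := hfA_pos.and hfAc_pos
    rwa [ae_iff] at this
  have hP₀N : P₀ N = 0 := by
    have h1 : (P₀ (N ∩ A)).toReal = 0 := by
      rw [hdensA N hN_meas, Measure.restrict_eq_zero.mpr hμN, integral_zero_measure, mul_zero]
    have h2 : (P₀ (N ∩ Aᶜ)).toReal = 0 := by
      rw [hdensAc N hN_meas, Measure.restrict_eq_zero.mpr hμN, integral_zero_measure, mul_zero]
    have h1' : P₀ (N ∩ A) = 0 := by
      have := measure_ne_top P₀ (N ∩ A)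
      simp only [ENNReal.toReal_eq_zero_iff] at h1
      tauto
    have h2' : P₀ (N ∩ Aᶜ) = 0 := by
      have := measure_ne_top P₀ (N ∩ Aᶜ)
      simp only [ENNReal.toReal_eq_zero_iff] at h2
      tauto
    have hsub : N ⊆ (N ∩ A) ∪ (N ∩ Aᶜ) := by
      intro ω hω
      by_cases hωA : ω ∈ A
      · exact Or.inl ⟨hω, hωA⟩
      · exact Or.inr ⟨hω, hωA⟩
    refine le_antisymm ?_ (zero_le)
    calc P₀ N ≤ P₀ ((N ∩ A) ∪ (N ∩ Aᶜ)) := measure_mono hsub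
      _ ≤ P₀ (N ∩ A) + P₀ (N ∩ Aᶜ) := measure_union_le _ _
      _ = 0 := by rw [h1', h2', add_zero]
  have hP₁N : P₁ N = 0 := by
    apply habs
    rw [trim_measurableSet_eq hℋ hN_meas, hP₀N]
  -- pointwise facts on the good set
  have hpt : ∀ ω, 0 < fA ω ∧ 0 < fAc ω →
      0 ≤ g ω ∧ g ω ≤ 1 ∧ 0 ≤ h ω ∧ h ω ≤ 1 ∧ g ω + h ω = 1 := by
    rintro ω ⟨h1, h2⟩
    have hlam_pos : 0 < fAc ω / fA ω := div_pos h2 h1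
    have hd : 0 < p₁ + (1 - p₁) * (fAc ω / fA ω) := by nlinarith
    have hg0 : 0 ≤ g ω := div_nonneg hp₁0.le hd.le
    have hh0 : 0 ≤ h ω := div_nonneg (by nlinarith) hd.le
    have hg1 : g ω ≤ 1 := by
      show p₁ / (p₁ + (1 - p₁) * (fAc ω / fA ω)) ≤ 1
      rw [div_le_one hd]; nlinarith
    have hh1 : h ω ≤ 1 := by
      show (1 - p₁) * (fAc ω / fA ω) / (p₁ + (1 - p₁) * (fAc ω / fA ω)) ≤ 1
      rw [div_le_one hd]; nlinarith
    have hsum : g ω + h ω = 1 := by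
      show p₁ / (p₁ + (1 - p₁) * (fAc ω / fA ω)) +
        (1 - p₁) * (fAc ω / fA ω) / (p₁ + (1 - p₁) * (fAc ω / fA ω)) = 1
      rw [← add_div, div_self hd.ne']
    exact ⟨hg0, hg1, hh0, hh1, hsum⟩
  have hP₁pt : ∀ᵐ ω ∂P₁, 0 ≤ g ω ∧ g ω ≤ 1 ∧ 0 ≤ h ω ∧ h ω ≤ 1 ∧ g ω + h ω = 1 := by
    refine measure_mono_null ?_ hP₁N
    intro ω hω
    by_contra hN'
    exact hω (hpt ω (not_not.mp hN'))
  -- integrability helper w.r.t. P₁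
  have hint : ∀ φ : Ω → ℝ, Measurable[ℋ] φ → (∀ᵐ ω ∂P₁, 0 ≤ φ ω ∧ φ ω ≤ 1) →
      Integrable φ P₁ := by
    intro φ hφ hb
    refine Integrable.mono' (integrable_const 1) hφ.aestronglyMeasurable ?_
    filter_upwards [hb] with ω hω
    rw [Real.norm_eq_abs, abs_le]
    exact ⟨by linarith [hω.1], hω.2⟩
  have hg_int : Integrable g P₁ := hint g hg_meas (hP₁pt.mono fun ω hω => ⟨hω.1, hω.2.1⟩)
  have hh_int : Integrable h P₁ :=
    hint h hh_meas (hP₁pt.mono fun ω hω => ⟨hω.2.2.1, hω.2.2.2.1⟩)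
  -- indicator-times-function rewriting
  have hind : ∀ (H : Set Ω) (φ : Ω → ℝ),
      (fun ω => H.indicator (fun _ => (1:ℝ)) ω * φ ω) = H.indicator φ := by
    intro H φ
    funext ω
    by_cases hω : ω ∈ H <;> simp [hω]
  -- P₁star agrees with P₁ on ℋ
  have hQ : ∀ H : Set Ω, MeasurableSet[ℋ] H → P₁star H = P₁ H := by
    intro H hH
    have hset : (A ∩ H) ∪ (Aᶜ ∩ H) = H := by
      rw [← union_inter_distrib_right, union_compl_self, univ_inter]
    have hs := hstar H H hH hH
    rw [hset] at hs
    have hswap : (∫ ω, H.indicator (fun _ => (1:ℝ)) ω * g ω ∂P₁) +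
        (∫ ω, H.indicator (fun _ => (1:ℝ)) ω * h ω ∂P₁) = (P₁ H).toReal := by
      rw [← integral_add ((hind H g) ▸ hg_int.indicator hH) ((hind H h) ▸ hh_int.indicator hH)]
      have : (fun ω => H.indicator (fun _ => (1:ℝ)) ω * g ω +
          H.indicator (fun _ => (1:ℝ)) ω * h ω) =ᵐ[P₁]
          (fun ω => H.indicator (fun _ => (1:ℝ)) ω) := by
        filter_upwards [hP₁pt] with ω hω
        have := hω.2.2.2.2
        by_cases hωH : ω ∈ H <;> simp [hωH, this]
      rw [integral_congr_ae this, integral_indicator_const (1:ℝ) hH, smul_eq_mul, mul_one, measureReal_def]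
    simp only [hgω, hhω] at hs
    rw [hswap] at hs
    exact ENNReal.toReal_eq_toReal_iff' (measure_ne_top _ _) (measure_ne_top _ _) |>.mp hs
  have htrim : P₁star.trim hle = P₁ := by
    refine Measure.ext fun s hs => ?_
    rw [trim_measurableSet_eq hle hs, hQ s hs]
  -- a.e. facts under P₁star
  have hstarN : P₁star N = 0 := by rw [hQ N hN_meas]; exact hP₁N
  have hstarpt : ∀ᵐ ω ∂P₁star, 0 ≤ g ω ∧ g ω ≤ 1 ∧ 0 ≤ h ω ∧ h ω ≤ 1 ∧ g ω + h ω = 1 := by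
    refine ae_iff.mpr (measure_mono_null ?_ hstarN)
    intro ω hω
    by_contra hN'
    exact hω (hpt ω (not_not.mp hN'))
  have hg_int_star : Integrable g P₁star := by
    refine Integrable.mono' (integrable_const 1)
      ((hg_meas.mono hle le_rfl).aestronglyMeasurable) ?_
    filter_upwards [hstarpt] with ω hω
    rw [Real.norm_eq_abs, abs_le]
    exact ⟨by linarith [hω.1], hω.2.1⟩
  have hfind : Integrable (A.indicator fun _ => (1:ℝ)) P₁star := by
    have h1 : Integrable (fun _ => (1:ℝ)) P₁star := integrable_const _
    exact h1.indicator hAm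
  -- set integrals agree
  have hsetint : ∀ s : Set Ω, MeasurableSet[ℋ] s →
      ∫ x in s, g x ∂P₁star = ∫ x in s, (A.indicator fun _ => (1:ℝ)) x ∂P₁star := by
    intro s hs
    have hL : ∫ x in s, g x ∂P₁star = ∫ ω, s.indicator (fun _ => (1:ℝ)) ω * g ω ∂P₁ := by
      rw [setIntegral_trim hle hg_meas.stronglyMeasurable hs, htrim, hind s g,
        integral_indicator hs]
    have hR : ∫ x in s, (A.indicator fun _ => (1:ℝ)) x ∂P₁star =
        (P₁star (A ∩ s)).toReal := by
      rw [@setIntegral_indicator Ω ℝ (ℋ ⊔ MeasurableSpace.generateFrom {A}) _ _ _ s A P₁star hAm,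
        @setIntegral_const Ω ℝ (ℋ ⊔ MeasurableSpace.generateFrom {A}) _ _ (s ∩ A) P₁star _ (1:ℝ),
        smul_eq_mul, mul_one, inter_comm, measureReal_def]
    have hs2 := hstar s ∅ hs MeasurableSet.empty
    rw [inter_empty, union_empty] at hs2
    simp only [hgω, hhω] at hs2
    have hzero : (∫ ω, (∅ : Set Ω).indicator (fun _ => (1:ℝ)) ω * h ω ∂P₁) = 0 := by
      simp
    rw [hzero, add_zero] at hs2
    rw [hL, hR, hs2]
  haveI hsf : SigmaFinite (P₁star.trim hle) := by rw [htrim]; infer_instance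
  have hcond : g =ᵐ[P₁star] condExp ℋ P₁star (A.indicator fun _ => (1:ℝ)) := by
    refine ae_eq_condExp_of_forall_setIntegral_eq hle hfind
      (fun s _ _ => hg_int_star.integrableOn (s := s)) (fun s hs _ => hsetint s hs) ?_
    exact ⟨g, hg_meas.stronglyMeasurable, Filter.EventuallyEq.refl _ _⟩
  refine ⟨hcond.symm, ?_⟩
  -- P₁star A = p₁
  have hs3 := hstar univ ∅ MeasurableSet.univ MeasurableSet.empty
  rw [inter_univ, inter_empty, union_empty] at hs3
  simp only [hgω, hhω] at hs3
  have hzero : (∫ ω, (∅ : Set Ω).indicator (fun _ => (1:ℝ)) ω * h ω ∂P₁) = 0 := by simp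
  have huniv : (∫ ω, (univ : Set Ω).indicator (fun _ => (1:ℝ)) ω * g ω ∂P₁) =
      ∫ ω, g ω ∂P₁ := by
    simp [hind]
  rw [hzero, add_zero, huniv] at hs3
  have hgp : (∫ ω, g ω ∂P₁) = p₁ := by
    have : (fun ω => g ω) = fun ω => p₁ * (1 / (p₁ + (1 - p₁) * (fAc ω / fA ω))) := by
      funext ω
      rw [mul_one_div]
    rw [this, integral_const_mul, ← heq, mul_one]
  rw [hs3, hgp]
end

section
/- Suppose P₁[λ₀ = 1] < 1 and p₁ ∈ (0,1) solves 1 = E₁[1/(p₁ + (1−p₁)·λ₀)], and let P₁* be the associated probability measure on ℋ^A. Then the relative odds of A^c are the same under P₀ and P₁*: (P₀[A^c|ℋ]/P₀[A|ℋ])·(p₀/(1−p₀)) = λ₀ = (P₁*[A^c|ℋ]/P₁*[A|ℋ])·(p₁/(1−p₁)) almost surely. -/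
open MeasureTheory Set
open scoped ENNReal NNReal


set_option maxHeartbeats 1000000 in
private lemma aux_setIntegral_withDensity {Ω : Type*} {𝒜 ℋ : MeasurableSpace Ω} (hℋ : ℋ ≤ 𝒜)
    (P₀ : @MeasureTheory.Measure Ω 𝒜)
    (μ : @MeasureTheory.Measure Ω ℋ)
    (D : Ω → ℝ) (hDmeas : @Measurable Ω ℝ ℋ _ D)
    (hDpos : ∀ᵐ ω ∂μ, 0 < D ω)
    (htrim : P₀.trim hℋ = μ.withDensity (fun ω => ENNReal.ofReal (D ω)))
    (g : Ω → ℝ) (hg : @Measurable Ω ℝ ℋ _ g) (H : Set Ω) (hH : MeasurableSet[ℋ] H) :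
    ∫ ω in H, g ω ∂P₀ = ∫ ω in H, D ω * g ω ∂μ := by
  have h1 : ∫ ω in H, g ω ∂P₀ = ∫ ω, g ω ∂((P₀.restrict H).trim hℋ) :=
    integral_trim (μ := P₀.restrict H) hℋ hg.stronglyMeasurable
  rw [h1, ← restrict_trim hℋ P₀ hH, htrim, restrict_withDensity hH]
  have hcoe : (fun ω => ENNReal.ofReal (D ω)) = fun ω => ((Real.toNNReal (D ω) : ℝ≥0) : ℝ≥0∞) := rfl
  rw [hcoe, integral_withDensity_eq_integral_smul (hDmeas.real_toNNReal) g]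
  refine integral_congr_ae ?_
  filter_upwards [ae_restrict_of_ae hDpos] with ω h
  simp [NNReal.smul_def, Real.coe_toNNReal _ h.le]


private lemma aux_setIntegral_indicator_one {Ω : Type*} {m : MeasurableSpace Ω}
    (P : MeasureTheory.Measure Ω) (A s : Set Ω) (hA : MeasurableSet A) :
    ∫ x in s, A.indicator (fun _ => (1:ℝ)) x ∂P = (P (s ∩ A)).toReal := by
  rw [integral_indicator_const (1:ℝ) hA, measureReal_def, Measure.restrict_apply hA, inter_comm A s,
    smul_eq_mul, mul_one]

private lemma aux_integrable_indicator_one {Ω : Type*} {m : MeasurableSpace Ω}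
    (P : MeasureTheory.Measure Ω) [MeasureTheory.IsFiniteMeasure P] {A : Set Ω}
    (hA : MeasurableSet A) :
    MeasureTheory.Integrable (A.indicator (fun _ => (1:ℝ))) P :=
  (MeasureTheory.integrable_const _).indicator hA


private lemma aux_integrableOn {Ω : Type*} {m : MeasurableSpace Ω} {P : MeasureTheory.Measure Ω}
    {g : Ω → ℝ} (h : MeasureTheory.Integrable g P) (s : Set Ω) :
    MeasureTheory.IntegrableOn g s P := h.integrableOn

set_option maxHeartbeats 2000000 in
private lemma aux_main
    {Ω : Type*} {𝒜 ℋ : MeasurableSpace Ω} (hℋ : ℋ ≤ 𝒜)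
    (P₀ : @Measure Ω 𝒜) [IsProbabilityMeasure P₀]
    (P₁ : @Measure Ω ℋ) [IsProbabilityMeasure P₁] (habs : P₁ ≪ P₀.trim hℋ)
    (A : Set Ω) (hA : MeasurableSet[𝒜] A)
    (p₀ : ℝ) (hp₀ : p₀ = (P₀ A).toReal) (hp₀0 : 0 < p₀) (hp₀1 : p₀ < 1)
    (μ : @Measure Ω ℋ) [SigmaFinite μ]
    (fA fAc : Ω → ℝ)
    (hfA_meas : @Measurable Ω ℝ ℋ _ fA) (hfAc_meas : @Measurable Ω ℝ ℋ _ fAc)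
    (hfA_int : Integrable fA μ) (hfAc_int : Integrable fAc μ)
    (hfA_pos : ∀ᵐ ω ∂μ, 0 < fA ω) (hfAc_pos : ∀ᵐ ω ∂μ, 0 < fAc ω)
    (hdensA : ∀ H : Set Ω, MeasurableSet[ℋ] H →
      (P₀ (H ∩ A)).toReal = p₀ * ∫ ω in H, fA ω ∂μ)
    (hdensAc : ∀ H : Set Ω, MeasurableSet[ℋ] H →
      (P₀ (H ∩ Aᶜ)).toReal = (1 - p₀) * ∫ ω in H, fAc ω ∂μ)
    (hlam : P₁ {ω | fAc ω / fA ω = 1} < 1)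
    (p₁ : ℝ) (hp₁ : p₁ ∈ Set.Ioo (0:ℝ) 1)
    (heq : (1:ℝ) = ∫ ω, 1 / (p₁ + (1 - p₁) * (fAc ω / fA ω)) ∂P₁)
    (P₁star : @Measure Ω (ℋ ⊔ MeasurableSpace.generateFrom {A}))
    [IsProbabilityMeasure P₁star]
    (hstar : ∀ H G : Set Ω, MeasurableSet[ℋ] H → MeasurableSet[ℋ] G →
      (P₁star ((A ∩ H) ∪ (Aᶜ ∩ G))).toReal =
        (∫ ω, H.indicator (fun _ => (1:ℝ)) ω *
            (p₁ / (p₁ + (1 - p₁) * (fAc ω / fA ω))) ∂P₁) +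
        (∫ ω, G.indicator (fun _ => (1:ℝ)) ω *
            ((1 - p₁) * (fAc ω / fA ω) / (p₁ + (1 - p₁) * (fAc ω / fA ω))) ∂P₁)) :
    (∀ᵐ ω ∂P₀,
      (condExp ℋ P₀ (Aᶜ.indicator fun _ => (1:ℝ)) ω /
        condExp ℋ P₀ (A.indicator fun _ => (1:ℝ)) ω) * (p₀ / (1 - p₀)) =
          fAc ω / fA ω) ∧
    (∀ᵐ ω ∂P₁star,
      (condExp ℋ P₁star (Aᶜ.indicator fun _ => (1:ℝ)) ω /
        condExp ℋ P₁star (A.indicator fun _ => (1:ℝ)) ω) * (p₁ / (1 - p₁)) =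
          fAc ω / fA ω) := by
  classical
  obtain ⟨hp₁0, hp₁1⟩ := hp₁
  have hp₀1' : (0:ℝ) < 1 - p₀ := by linarith
  have hp₁1' : (0:ℝ) < 1 - p₁ := by linarith
  set D : Ω → ℝ := fun ω => p₀ * fA ω + (1 - p₀) * fAc ω with hDdef
  have hDmeas : @Measurable Ω ℝ ℋ _ D :=
    (hfA_meas.const_mul p₀).add (hfAc_meas.const_mul (1 - p₀))
  have hDint : Integrable D μ := (hfA_int.const_mul _).add (hfAc_int.const_mul _)
  have hpos : ∀ᵐ ω ∂μ, 0 < fA ω ∧ 0 < fAc ω := hfA_pos.and hfAc_pos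
  have hDpos : ∀ᵐ ω ∂μ, 0 < D ω := by
    filter_upwards [hpos] with ω h
    have := h.1; have := h.2
    simp only [hDdef]
    nlinarith
  -- the restriction of P₀ to ℋ as an integral of D
  have h_int_H : ∀ H : Set Ω, MeasurableSet[ℋ] H →
      (P₀ H).toReal = ∫ ω in H, D ω ∂μ := by
    intro H hH
    have h1 : P₀ (H ∩ A) + P₀ (H \ A) = P₀ H := measure_inter_add_diff H hA
    have h2 : (P₀ H).toReal = (P₀ (H ∩ A)).toReal + (P₀ (H ∩ Aᶜ)).toReal := by
      rw [← h1, ENNReal.toReal_add (measure_ne_top _ _) (measure_ne_top _ _), diff_eq]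
    rw [h2, hdensA H hH, hdensAc H hH]
    rw [show (fun ω => D ω) = (fun ω => p₀ * fA ω + (1 - p₀) * fAc ω) from rfl]
    rw [integral_add ((hfA_int.const_mul p₀).integrableOn)
      ((hfAc_int.const_mul (1 - p₀)).integrableOn), integral_const_mul, integral_const_mul]
  have htrim : P₀.trim hℋ = μ.withDensity (fun ω => ENNReal.ofReal (D ω)) := by
    refine @Measure.ext _ ℋ _ _ fun H hH => ?_
    rw [trim_measurableSet_eq hℋ hH, withDensity_apply _ hH]
    have hnn : 0 ≤ᵐ[μ.restrict H] D :=
      ae_restrict_of_ae (hDpos.mono fun ω h => h.le)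
    rw [← ofReal_integral_eq_lintegral_ofReal hDint.integrableOn hnn,
      ← h_int_H H hH, ENNReal.ofReal_toReal (measure_ne_top _ _)]
  have hnull₀ : ∀ S : Set Ω, MeasurableSet[ℋ] S → μ S = 0 → P₀ S = 0 := by
    intro S hS hμS
    have h : P₀.trim hℋ S = 0 := by
      rw [htrim, withDensity_apply _ hS, setLIntegral_measure_zero _ _ hμS]
    rwa [trim_measurableSet_eq hℋ hS] at h
  have hposP₀ : ∀ᵐ ω ∂P₀, 0 < fA ω ∧ 0 < fAc ω := by
    have hSmeas : MeasurableSet[ℋ] {ω | ¬ (0 < fA ω ∧ 0 < fAc ω)} := by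
      have h1 : MeasurableSet[ℋ] {ω | 0 < fA ω ∧ 0 < fAc ω} :=
        (hfA_meas measurableSet_Ioi).inter (hfAc_meas measurableSet_Ioi)
      exact h1.compl
    exact ae_iff.mpr (hnull₀ _ hSmeas (ae_iff.mp hpos))
  -- integrals of ℋ-measurable functions against P₀
  have hInt₀ : ∀ (g : Ω → ℝ), @Measurable Ω ℝ ℋ _ g → ∀ H : Set Ω, MeasurableSet[ℋ] H →
      ∫ ω in H, g ω ∂P₀ = ∫ ω in H, D ω * g ω ∂μ :=
    fun g hg H hH => aux_setIntegral_withDensity hℋ P₀ μ D hDmeas hDpos htrim g hg H hH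
  set gA0 : Ω → ℝ := fun ω => p₀ * fA ω / D ω with hgA0def
  set gAc0 : Ω → ℝ := fun ω => (1 - p₀) * fAc ω / D ω with hgAc0def
  have hgA0_meas : @Measurable Ω ℝ ℋ _ gA0 := (hfA_meas.const_mul p₀).div hDmeas
  have hgAc0_meas : @Measurable Ω ℝ ℋ _ gAc0 := (hfAc_meas.const_mul (1 - p₀)).div hDmeas
  have hDpos_of : ∀ ω, 0 < fA ω → 0 < fAc ω → 0 < D ω := by
    intro ω h1 h2
    have := mul_pos hp₀0 h1
    have := mul_pos hp₀1' h2
    simp only [hDdef]; linarith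
  have hgA0_int : Integrable gA0 P₀ := by
    refine Integrable.mono' (integrable_const (1:ℝ))
      ((hgA0_meas.mono hℋ le_rfl).stronglyMeasurable.aestronglyMeasurable) ?_
    filter_upwards [hposP₀] with ω h
    have hD : 0 < D ω := hDpos_of ω h.1 h.2
    have h1 : 0 < p₀ * fA ω := mul_pos hp₀0 h.1
    have h2 : 0 < (1 - p₀) * fAc ω := mul_pos hp₀1' h.2
    rw [Real.norm_eq_abs, hgA0def, abs_of_nonneg (div_nonneg h1.le hD.le), div_le_one hD]
    simp only [hDdef]; linarith
  have hgAc0_int : Integrable gAc0 P₀ := by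
    refine Integrable.mono' (integrable_const (1:ℝ))
      ((hgAc0_meas.mono hℋ le_rfl).stronglyMeasurable.aestronglyMeasurable) ?_
    filter_upwards [hposP₀] with ω h
    have hD : 0 < D ω := hDpos_of ω h.1 h.2
    have h1 : 0 < p₀ * fA ω := mul_pos hp₀0 h.1
    have h2 : 0 < (1 - p₀) * fAc ω := mul_pos hp₀1' h.2
    rw [Real.norm_eq_abs, hgAc0def, abs_of_nonneg (div_nonneg h2.le hD.le), div_le_one hD]
    simp only [hDdef]; linarith
  have hindA : ∀ s : Set Ω, MeasurableSet[ℋ] s →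
      ∫ x in s, A.indicator (fun _ => (1:ℝ)) x ∂P₀ = (P₀ (s ∩ A)).toReal :=
    fun s _ => aux_setIntegral_indicator_one P₀ A s hA
  have hindAc : ∀ s : Set Ω, MeasurableSet[ℋ] s →
      ∫ x in s, Aᶜ.indicator (fun _ => (1:ℝ)) x ∂P₀ = (P₀ (s ∩ Aᶜ)).toReal :=
    fun s _ => aux_setIntegral_indicator_one P₀ Aᶜ s hA.compl
  have hcondA₀ : gA0 =ᵐ[P₀] condExp ℋ P₀ (A.indicator fun _ => (1:ℝ)) := by
    refine ae_eq_condExp_of_forall_setIntegral_eq hℋ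
      (aux_integrable_indicator_one P₀ hA)
      (fun s hs _ => aux_integrableOn hgA0_int s) (fun s hs _ => ?_)
      (hgA0_meas.stronglyMeasurable.aestronglyMeasurable)
    rw [hInt₀ _ hgA0_meas s hs, hindA s hs, hdensA s hs, ← integral_const_mul]
    refine integral_congr_ae ?_
    filter_upwards [ae_restrict_of_ae hDpos] with ω h
    rw [hgA0def]
    field_simp
  have hcondAc₀ : gAc0 =ᵐ[P₀] condExp ℋ P₀ (Aᶜ.indicator fun _ => (1:ℝ)) := by
    refine ae_eq_condExp_of_forall_setIntegral_eq hℋ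
      (aux_integrable_indicator_one P₀ hA.compl)
      (fun s hs _ => aux_integrableOn hgAc0_int s) (fun s hs _ => ?_)
      (hgAc0_meas.stronglyMeasurable.aestronglyMeasurable)
    rw [hInt₀ _ hgAc0_meas s hs, hindAc s hs, hdensAc s hs, ← integral_const_mul]
    refine integral_congr_ae ?_
    filter_upwards [ae_restrict_of_ae hDpos] with ω h
    rw [hgAc0def]
    field_simp
  have part1 : ∀ᵐ ω ∂P₀,
      (condExp ℋ P₀ (Aᶜ.indicator fun _ => (1:ℝ)) ω /
        condExp ℋ P₀ (A.indicator fun _ => (1:ℝ)) ω) * (p₀ / (1 - p₀)) =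
          fAc ω / fA ω := by
    filter_upwards [hcondA₀, hcondAc₀, hposP₀] with ω h1 h2 hp
    rw [← h1, ← h2, hgA0def, hgAc0def]
    have hD : 0 < D ω := hDpos_of ω hp.1 hp.2
    have hfane : fA ω ≠ 0 := hp.1.ne'
    field_simp
  -- Part 2
  have hle : ℋ ≤ ℋ ⊔ MeasurableSpace.generateFrom {A} := le_sup_left
  have hAm' : MeasurableSet[ℋ ⊔ MeasurableSpace.generateFrom {A}] A :=
    (le_sup_right : MeasurableSpace.generateFrom {A} ≤ ℋ ⊔ MeasurableSpace.generateFrom {A}) _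
      (MeasurableSpace.measurableSet_generateFrom rfl)
  have hP₁μ : P₁ ≪ μ := by
    refine habs.trans ?_
    rw [htrim]
    exact withDensity_absolutelyContinuous μ _
  have hposP₁ : ∀ᵐ ω ∂P₁, 0 < fA ω ∧ 0 < fAc ω := hpos.filter_mono hP₁μ.ae_le
  have hden_pos : ∀ ω, 0 < fA ω → 0 < fAc ω →
      0 < p₁ + (1 - p₁) * (fAc ω / fA ω) := by
    intro ω h1 h2
    have h3 : 0 < fAc ω / fA ω := div_pos h2 h1
    nlinarith [mul_pos hp₁1' h3]
  have hmeas_gA1 : @Measurable Ω ℝ ℋ _ (fun ω => p₁ / (p₁ + (1 - p₁) * (fAc ω / fA ω))) :=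
    measurable_const.div (measurable_const.add ((hfAc_meas.div hfA_meas).const_mul _))
  have hmeas_gAc1 : @Measurable Ω ℝ ℋ _
      (fun ω => (1 - p₁) * (fAc ω / fA ω) / (p₁ + (1 - p₁) * (fAc ω / fA ω))) :=
    ((hfAc_meas.div hfA_meas).const_mul _).div
      (measurable_const.add ((hfAc_meas.div hfA_meas).const_mul _))
  have hbA1 : ∀ ω, 0 < fA ω → 0 < fAc ω →
      ‖p₁ / (p₁ + (1 - p₁) * (fAc ω / fA ω))‖ ≤ 1 := by
    intro ω h1 h2
    have hd := hden_pos ω h1 h2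
    have h3 : 0 < fAc ω / fA ω := div_pos h2 h1
    rw [Real.norm_eq_abs, abs_of_nonneg (div_nonneg hp₁0.le hd.le), div_le_one hd]
    nlinarith [mul_pos hp₁1' h3]
  have hbAc1 : ∀ ω, 0 < fA ω → 0 < fAc ω →
      ‖(1 - p₁) * (fAc ω / fA ω) / (p₁ + (1 - p₁) * (fAc ω / fA ω))‖ ≤ 1 := by
    intro ω h1 h2
    have hd := hden_pos ω h1 h2
    have h3 : 0 < fAc ω / fA ω := div_pos h2 h1
    rw [Real.norm_eq_abs,
      abs_of_nonneg (div_nonneg (mul_pos hp₁1' h3).le hd.le), div_le_one hd]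
    linarith
  have hbind : ∀ (s : Set Ω) (ω : Ω), ‖s.indicator (fun _ => (1:ℝ)) ω‖ ≤ 1 := by
    intro s ω
    by_cases hω : ω ∈ s <;> simp [hω]
  have hint_ind : ∀ (s : Set Ω), MeasurableSet[ℋ] s → ∀ (q : Ω → ℝ),
      @Measurable Ω ℝ ℋ _ q → (∀ ω, 0 < fA ω → 0 < fAc ω → ‖q ω‖ ≤ 1) →
      Integrable (fun ω => s.indicator (fun _ => (1:ℝ)) ω * q ω) P₁ := by
    intro s hs q hq hb
    refine Integrable.mono' (integrable_const (1:ℝ))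
      (((measurable_const.indicator hs).mul hq).stronglyMeasurable.aestronglyMeasurable) ?_
    filter_upwards [hposP₁] with ω h
    rw [norm_mul]
    exact mul_le_one₀ (hbind s ω) (norm_nonneg _) (hb ω h.1 h.2)
  have htrim₁ : P₁star.trim hle = P₁ := by
    refine @Measure.ext _ ℋ _ _ fun H hH => ?_
    rw [trim_measurableSet_eq hle hH]
    have hH' := hstar H H hH hH
    rw [show (A ∩ H) ∪ (Aᶜ ∩ H) = H by
      rw [← union_inter_distrib_right, union_compl_self, univ_inter]] at hH'
    rw [← integral_add (hint_ind H hH _ hmeas_gA1 (fun ω a b => hbA1 ω a b))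
      (hint_ind H hH _ hmeas_gAc1 (fun ω a b => hbAc1 ω a b))] at hH'
    have h2 : ∫ ω, (H.indicator (fun _ => (1:ℝ)) ω * (p₁ / (p₁ + (1 - p₁) * (fAc ω / fA ω))) +
        H.indicator (fun _ => (1:ℝ)) ω *
          ((1 - p₁) * (fAc ω / fA ω) / (p₁ + (1 - p₁) * (fAc ω / fA ω)))) ∂P₁
        = ∫ ω, H.indicator (fun _ => (1:ℝ)) ω ∂P₁ := by
      refine integral_congr_ae ?_
      filter_upwards [hposP₁] with ω h
      have hd := hden_pos ω h.1 h.2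
      rw [← mul_add]
      rw [show p₁ / (p₁ + (1 - p₁) * (fAc ω / fA ω)) +
          (1 - p₁) * (fAc ω / fA ω) / (p₁ + (1 - p₁) * (fAc ω / fA ω)) = 1 by
        rw [← add_div, div_eq_one_iff_eq hd.ne']]
      rw [mul_one]
    rw [h2] at hH'
    have h3 : ∫ ω, H.indicator (fun _ => (1:ℝ)) ω ∂P₁ = (P₁ H).toReal := by
      rw [integral_indicator_const (1:ℝ) hH, smul_eq_mul, mul_one, measureReal_def]
    rw [h3] at hH'
    exact (ENNReal.toReal_eq_toReal_iff' (measure_ne_top _ _) (measure_ne_top _ _)).mp hH'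
  have hInt₁ : ∀ (g : Ω → ℝ), @Measurable Ω ℝ ℋ _ g → ∀ H : Set Ω, MeasurableSet[ℋ] H →
      ∫ ω in H, g ω ∂P₁star = ∫ ω in H, g ω ∂P₁ := by
    intro g hg H hH
    have h1 : ∫ ω in H, g ω ∂P₁star = ∫ ω, g ω ∂((P₁star.restrict H).trim hle) :=
      integral_trim (μ := P₁star.restrict H) hle hg.stronglyMeasurable
    rw [h1, ← restrict_trim hle P₁star hH, htrim₁]
  have hposP₁star : ∀ᵐ ω ∂P₁star, 0 < fA ω ∧ 0 < fAc ω := by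
    refine ae_iff.mpr ?_
    have hSmeas : MeasurableSet[ℋ] {ω | ¬ (0 < fA ω ∧ 0 < fAc ω)} :=
      ((hfA_meas measurableSet_Ioi).inter (hfAc_meas measurableSet_Ioi)).compl
    have h : P₁star.trim hle {ω | ¬ (0 < fA ω ∧ 0 < fAc ω)} = 0 := by
      rw [htrim₁]
      exact ae_iff.mp hposP₁
    rwa [trim_measurableSet_eq hle hSmeas] at h
  have hindmul : ∀ (s : Set Ω) (q : Ω → ℝ),
      (fun ω => s.indicator (fun _ => (1:ℝ)) ω * q ω) = s.indicator q := by
    intro s q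
    funext ω
    by_cases hω : ω ∈ s <;> simp [hω]
  have hstarA : ∀ s : Set Ω, MeasurableSet[ℋ] s → (P₁star (s ∩ A)).toReal =
      ∫ ω in s, p₁ / (p₁ + (1 - p₁) * (fAc ω / fA ω)) ∂P₁ := by
    intro s hs
    have h := hstar s ∅ hs MeasurableSet.empty
    rw [inter_empty, union_empty] at h
    rw [show ∫ ω, (∅ : Set Ω).indicator (fun _ => (1:ℝ)) ω *
        ((1 - p₁) * (fAc ω / fA ω) / (p₁ + (1 - p₁) * (fAc ω / fA ω))) ∂P₁ = 0 by
      simp] at h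
    rw [add_zero, hindmul s _, integral_indicator hs] at h
    rw [inter_comm s A]
    exact h
  have hstarAc : ∀ s : Set Ω, MeasurableSet[ℋ] s → (P₁star (s ∩ Aᶜ)).toReal =
      ∫ ω in s, (1 - p₁) * (fAc ω / fA ω) / (p₁ + (1 - p₁) * (fAc ω / fA ω)) ∂P₁ := by
    intro s hs
    have h := hstar ∅ s MeasurableSet.empty hs
    rw [inter_empty, empty_union] at h
    rw [show ∫ ω, (∅ : Set Ω).indicator (fun _ => (1:ℝ)) ω *
        (p₁ / (p₁ + (1 - p₁) * (fAc ω / fA ω))) ∂P₁ = 0 by simp] at h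
    rw [zero_add, hindmul s _, integral_indicator hs] at h
    rw [inter_comm s Aᶜ]
    exact h
  have hgA1star_int : Integrable (fun ω => p₁ / (p₁ + (1 - p₁) * (fAc ω / fA ω))) P₁star := by
    refine Integrable.mono' (integrable_const (1:ℝ))
      ((hmeas_gA1.mono hle le_rfl).stronglyMeasurable.aestronglyMeasurable) ?_
    filter_upwards [hposP₁star] with ω h
    exact hbA1 ω h.1 h.2
  have hgAc1star_int : Integrable
      (fun ω => (1 - p₁) * (fAc ω / fA ω) / (p₁ + (1 - p₁) * (fAc ω / fA ω))) P₁star := by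
    refine Integrable.mono' (integrable_const (1:ℝ))
      ((hmeas_gAc1.mono hle le_rfl).stronglyMeasurable.aestronglyMeasurable) ?_
    filter_upwards [hposP₁star] with ω h
    exact hbAc1 ω h.1 h.2
  haveI : SigmaFinite (P₁star.trim hle) := by
    rw [htrim₁]
    infer_instance
  have hcondA₁ : (fun ω => p₁ / (p₁ + (1 - p₁) * (fAc ω / fA ω))) =ᵐ[P₁star]
      condExp ℋ P₁star (A.indicator fun _ => (1:ℝ)) := by
    refine ae_eq_condExp_of_forall_setIntegral_eq hle
      (aux_integrable_indicator_one P₁star hAm')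
      (fun s hs _ => aux_integrableOn hgA1star_int s) (fun s hs _ => ?_)
      (hmeas_gA1.stronglyMeasurable.aestronglyMeasurable)
    rw [hInt₁ _ hmeas_gA1 s hs, ← hstarA s hs,
      aux_setIntegral_indicator_one P₁star A s hAm']
  have hcondAc₁ : (fun ω => (1 - p₁) * (fAc ω / fA ω) / (p₁ + (1 - p₁) * (fAc ω / fA ω)))
      =ᵐ[P₁star] condExp ℋ P₁star (Aᶜ.indicator fun _ => (1:ℝ)) := by
    refine ae_eq_condExp_of_forall_setIntegral_eq hle
      (aux_integrable_indicator_one P₁star hAm'.compl)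
      (fun s hs _ => aux_integrableOn hgAc1star_int s) (fun s hs _ => ?_)
      (hmeas_gAc1.stronglyMeasurable.aestronglyMeasurable)
    rw [hInt₁ _ hmeas_gAc1 s hs, ← hstarAc s hs,
      aux_setIntegral_indicator_one P₁star Aᶜ s hAm'.compl]
  refine ⟨part1, ?_⟩
  filter_upwards [hcondA₁, hcondAc₁, hposP₁star] with ω h1 h2 hp
  rw [← h1, ← h2]
  have hd := hden_pos ω hp.1 hp.2
  generalize hLdef : fAc ω / fA ω = L at hd ⊢
  field_simp



/-- **relative odds are invariant.** Suppose `P₁[λ₀ = 1] < 1` and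
`p₁ ∈ (0,1)` solves `1 = E₁[1/(p₁ + (1−p₁)·λ₀)]`, and let `P₁*` be the associated
probability measure on `ℋ^A`. Then the relative odds of `A^c` are the same under `P₀`
and `P₁*`:
`(P₀[A^c|ℋ]/P₀[A|ℋ])·(p₀/(1−p₀)) = λ₀ = (P₁*[A^c|ℋ]/P₁*[A|ℋ])·(p₁/(1−p₁))` a.s. -/
theorem total_odds_relative_odds_invariant
    {Ω : Type*} {𝒜 ℋ : MeasurableSpace Ω} (hℋ : ℋ ≤ 𝒜)
    (P₀ : @Measure Ω 𝒜) [IsProbabilityMeasure P₀]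
    (P₁ : @Measure Ω ℋ) [IsProbabilityMeasure P₁] (habs : P₁ ≪ P₀.trim hℋ)
    (A : Set Ω) (hA : MeasurableSet[𝒜] A)
    (p₀ : ℝ) (hp₀ : p₀ = (P₀ A).toReal) (hp₀0 : 0 < p₀) (hp₀1 : p₀ < 1)
    (μ : @Measure Ω ℋ) [SigmaFinite μ]
    (fA fAc : Ω → ℝ)
    (hfA_meas : @Measurable Ω ℝ ℋ _ fA) (hfAc_meas : @Measurable Ω ℝ ℋ _ fAc)
    (hfA_int : Integrable fA μ) (hfAc_int : Integrable fAc μ)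
    (hfA_pos : ∀ᵐ ω ∂μ, 0 < fA ω) (hfAc_pos : ∀ᵐ ω ∂μ, 0 < fAc ω)
    (hdensA : ∀ H : Set Ω, MeasurableSet[ℋ] H →
      (P₀ (H ∩ A)).toReal = p₀ * ∫ ω in H, fA ω ∂μ)
    (hdensAc : ∀ H : Set Ω, MeasurableSet[ℋ] H →
      (P₀ (H ∩ Aᶜ)).toReal = (1 - p₀) * ∫ ω in H, fAc ω ∂μ)
    (hlam : P₁ {ω | fAc ω / fA ω = 1} < 1)
    (p₁ : ℝ) (hp₁ : p₁ ∈ Set.Ioo (0:ℝ) 1)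
    (heq : (1:ℝ) = ∫ ω, 1 / (p₁ + (1 - p₁) * (fAc ω / fA ω)) ∂P₁)
    (P₁star : @Measure Ω (ℋ ⊔ MeasurableSpace.generateFrom {A}))
    [IsProbabilityMeasure P₁star]
    (hstar : ∀ H G : Set Ω, MeasurableSet[ℋ] H → MeasurableSet[ℋ] G →
      (P₁star ((A ∩ H) ∪ (Aᶜ ∩ G))).toReal =
        (∫ ω, H.indicator (fun _ => (1:ℝ)) ω *
            (p₁ / (p₁ + (1 - p₁) * (fAc ω / fA ω))) ∂P₁) +
        (∫ ω, G.indicator (fun _ => (1:ℝ)) ω *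
            ((1 - p₁) * (fAc ω / fA ω) / (p₁ + (1 - p₁) * (fAc ω / fA ω))) ∂P₁)) :
    (∀ᵐ ω ∂P₀,
      (condExp ℋ P₀ (Aᶜ.indicator fun _ => (1:ℝ)) ω /
        condExp ℋ P₀ (A.indicator fun _ => (1:ℝ)) ω) * (p₀ / (1 - p₀)) =
          fAc ω / fA ω) ∧
    (∀ᵐ ω ∂P₁star,
      (condExp ℋ P₁star (Aᶜ.indicator fun _ => (1:ℝ)) ω /
        condExp ℋ P₁star (A.indicator fun _ => (1:ℝ)) ω) * (p₁ / (1 - p₁)) =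
          fAc ω / fA ω) :=
  aux_main hℋ P₀ P₁ habs A hA p₀ hp₀ hp₀0 hp₀1 μ fA fAc hfA_meas hfAc_meas hfA_int hfAc_int
    hfA_pos hfAc_pos hdensA hdensAc hlam p₁ hp₁ heq P₁star hstar
end

section
/- Suppose P₁[λ₀ = 1] < 1 and p₁ ∈ (0,1) solves 1 = E₁[1/(p₁ + (1−p₁)·λ₀)], and let P₁* be the associated probability measure on ℋ^A. If P̃₁ is any probability measure on ℋ^A with P̃₁[A] ∈ (0,1), whose restriction to ℋ equals P₁, and which satisfies (P̃₁[A^c|ℋ]/P̃₁[A|ℋ])·(P̃₁[A]/P̃₁[A^c]) = λ₀ almost surely, then P̃₁ = P₁*. -/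
open MeasureTheory Set

section Aux
lemma join_rep {Ω : Type*} (ℋ : MeasurableSpace Ω) (A : Set Ω) {s : Set Ω}
    (hs : MeasurableSet[ℋ ⊔ MeasurableSpace.generateFrom {A}] s) :
    ∃ H G : Set Ω, MeasurableSet[ℋ] H ∧ MeasurableSet[ℋ] G ∧
      s = (A ∩ H) ∪ (Aᶜ ∩ G) := by
  let m' : MeasurableSpace Ω :=
    { MeasurableSet' := fun s => ∃ H G, MeasurableSet[ℋ] H ∧ MeasurableSet[ℋ] G ∧
        s = (A ∩ H) ∪ (Aᶜ ∩ G)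
      measurableSet_empty := ⟨∅, ∅, MeasurableSet.empty, MeasurableSet.empty, by simp⟩
      measurableSet_compl := by
        rintro s ⟨H, G, hH, hG, rfl⟩
        exact ⟨Hᶜ, Gᶜ, hH.compl, hG.compl, by
          ext ω; by_cases hω : ω ∈ A <;> simp [hω]⟩
      measurableSet_iUnion := by
        intro f hf
        choose H G hH hG hfeq using hf
        exact ⟨⋃ n, H n, ⋃ n, G n, MeasurableSet.iUnion hH, MeasurableSet.iUnion hG, by
          simp_rw [hfeq]; ext ω; by_cases hω : ω ∈ A <;> simp [hω]⟩ }
  have hle : ℋ ⊔ MeasurableSpace.generateFrom {A} ≤ m' := by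
    refine sup_le (fun t ht => ⟨t, t, ht, ht, by
      ext ω; by_cases hω : ω ∈ A <;> simp [hω]⟩) ?_
    refine MeasurableSpace.generateFrom_le ?_
    rintro t (rfl : t = A)
    exact ⟨univ, ∅, @MeasurableSet.univ Ω ℋ, @MeasurableSet.empty Ω ℋ, by simp⟩
  exact hle s hs
-- integrability of the basic integrand
lemma u_integrable {Ω : Type*} {ℋ : MeasurableSpace Ω} (P₁ : Measure Ω)
    [IsProbabilityMeasure P₁] (lam : Ω → ℝ) (hmeas : Measurable lam)
    (hpos : ∀ᵐ ω ∂P₁, 0 < lam ω) {p : ℝ} (hp : p ∈ Set.Ioo (0:ℝ) 1) :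
    Integrable (fun ω => 1 / (p + (1 - p) * lam ω)) P₁ := by
  obtain ⟨hp0, hp1⟩ := hp
  have hmeas' : Measurable (fun ω => 1 / (p + (1 - p) * lam ω)) :=
    (measurable_const.add (measurable_const.mul hmeas)).const_div 1
  refine Integrable.mono' (integrable_const (1/p)) hmeas'.aestronglyMeasurable ?_
  filter_upwards [hpos] with ω hω
  have hD : p ≤ p + (1 - p) * lam ω := by nlinarith
  rw [Real.norm_eq_abs, abs_div, abs_one]
  rw [abs_of_pos (lt_of_lt_of_le hp0 hD)]
  exact one_div_le_one_div_of_le hp0 hD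

lemma h_integrable {Ω : Type*} {ℋ : MeasurableSpace Ω} (P₁ : Measure Ω)
    [IsProbabilityMeasure P₁] (lam : Ω → ℝ) (hmeas : Measurable lam)
    (hpos : ∀ᵐ ω ∂P₁, 0 < lam ω) {p : ℝ} (hp : p ∈ Set.Ioo (0:ℝ) 1) :
    Integrable (fun ω => (1 - lam ω) / (p + (1 - p) * lam ω)) P₁ := by
  obtain ⟨hp0, hp1⟩ := hp
  have hmeas' : Measurable (fun ω => (1 - lam ω) / (p + (1 - p) * lam ω)) :=
    (measurable_const.sub hmeas).div (measurable_const.add (measurable_const.mul hmeas))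
  refine Integrable.mono' (integrable_const (1/p + 1/(1-p)))
    hmeas'.aestronglyMeasurable ?_
  filter_upwards [hpos] with ω hω
  have hD : 0 < p + (1 - p) * lam ω := by nlinarith
  rw [Real.norm_eq_abs, abs_div, abs_of_pos hD]
  rw [div_le_iff₀ hD]
  rcases le_or_gt (lam ω) 1 with h1 | h1
  · rw [abs_of_nonneg (by linarith)]
    have : (1:ℝ) ≤ (1/p) * (p + (1 - p) * lam ω) := by
      rw [one_div, inv_mul_eq_div, le_div_iff₀ hp0]; nlinarith
    have h2p : 0 < 1/(1-p) := by
      apply div_pos one_pos; linarith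
    nlinarith
  · rw [abs_of_neg (by linarith)]
    have : lam ω - 1 ≤ (1/(1-p)) * (p + (1 - p) * lam ω) := by
      rw [one_div, inv_mul_eq_div, le_div_iff₀ (by linarith : (0:ℝ) < 1 - p)]
      nlinarith
    have h1p : 0 ≤ (1/p) * (p + (1 - p) * lam ω) := by positivity
    nlinarith

lemma solution_lt_absurd {Ω : Type*} {ℋ : MeasurableSpace Ω} (P₁ : Measure Ω)
    [IsProbabilityMeasure P₁] (lam : Ω → ℝ) (hmeas : Measurable lam)
    (hpos : ∀ᵐ ω ∂P₁, 0 < lam ω)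
    (hne : P₁ {ω | lam ω = 1} < 1)
    {p q : ℝ} (hp : p ∈ Set.Ioo (0:ℝ) 1) (hq : q ∈ Set.Ioo (0:ℝ) 1)
    (hpq : p < q)
    (hep : ∫ ω, 1 / (p + (1 - p) * lam ω) ∂P₁ = 1)
    (heq : ∫ ω, 1 / (q + (1 - q) * lam ω) ∂P₁ = 1) : False := by
  obtain ⟨hp0, hp1⟩ := hp
  obtain ⟨hq0, hq1⟩ := hq
  -- the transformed integrands
  set f : Ω → ℝ := fun ω => (1 - lam ω) / (p + (1 - p) * lam ω) with hf_def
  set g : Ω → ℝ := fun ω => (1 - lam ω) / (q + (1 - q) * lam ω) with hg_def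
  have hf_int : Integrable f P₁ := h_integrable P₁ lam hmeas hpos ⟨hp0, hp1⟩
  have hg_int : Integrable g P₁ := h_integrable P₁ lam hmeas hpos ⟨hq0, hq1⟩
  have hu_int : Integrable (fun ω => 1 / (p + (1 - p) * lam ω)) P₁ :=
    u_integrable P₁ lam hmeas hpos ⟨hp0, hp1⟩
  have hv_int : Integrable (fun ω => 1 / (q + (1 - q) * lam ω)) P₁ :=
    u_integrable P₁ lam hmeas hpos ⟨hq0, hq1⟩
  -- ∫ f = 0
  have hf0 : ∫ ω, f ω ∂P₁ = 0 := by
    have hcong : f =ᵐ[P₁] fun ω =>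
        (1/(1-p)) * (1 / (p + (1 - p) * lam ω) - 1) := by
      filter_upwards [hpos] with ω hω
      have hD : 0 < p + (1 - p) * lam ω := by nlinarith
      show (1 - lam ω) / (p + (1 - p) * lam ω) = _
      field_simp [hD.ne', sub_ne_zero.mpr hp1.ne']
      ring
    rw [integral_congr_ae hcong, integral_const_mul,
      integral_sub hu_int (integrable_const 1), hep]
    simp
  have hg0 : ∫ ω, g ω ∂P₁ = 0 := by
    have hcong : g =ᵐ[P₁] fun ω =>
        (1/(1-q)) * (1 / (q + (1 - q) * lam ω) - 1) := by
      filter_upwards [hpos] with ω hω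
      have hD : 0 < q + (1 - q) * lam ω := by nlinarith
      show (1 - lam ω) / (q + (1 - q) * lam ω) = _
      field_simp [hD.ne', sub_ne_zero.mpr hq1.ne']
      ring
    rw [integral_congr_ae hcong, integral_const_mul,
      integral_sub hv_int (integrable_const 1), heq]
    simp
  -- pointwise g ≤ f
  have hle : g ≤ᵐ[P₁] f := by
    filter_upwards [hpos] with ω hω
    have hDp : 0 < p + (1 - p) * lam ω := by nlinarith
    have hDq : 0 < q + (1 - q) * lam ω := by nlinarith
    rw [hg_def, hf_def]
    dsimp only
    rw [div_le_div_iff₀ hDq hDp]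
    nlinarith [sq_nonneg (1 - lam ω)]
  -- hence a.e. equal
  have hae : g =ᵐ[P₁] f := by
    rw [← integral_eq_iff_of_ae_le hg_int hf_int hle, hf0, hg0]
  -- a.e. lam = 1
  have hlam1 : ∀ᵐ ω ∂P₁, lam ω = 1 := by
    filter_upwards [hpos, hae] with ω hω heqω
    have hDp : 0 < p + (1 - p) * lam ω := by nlinarith
    have hDq : 0 < q + (1 - q) * lam ω := by nlinarith
    rw [hg_def, hf_def] at heqω
    dsimp only at heqω
    rw [div_eq_div_iff hDq.ne' hDp.ne'] at heqω
    have key : (q - p) * (1 - lam ω)^2 = 0 := by linear_combination -heqω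
    have h2 : (1 - lam ω)^2 = 0 := by
      rcases mul_eq_zero.mp key with h | h
      · exfalso; linarith [sub_pos.mpr hpq]
      · exact h
    have h3 : 1 - lam ω = 0 := by
      exact pow_eq_zero_iff two_ne_zero |>.mp h2
    linarith
  -- contradiction with hne
  have hset : MeasurableSet {ω | lam ω = 1} :=
    measurableSet_eq_fun hmeas measurable_const
  have hc : P₁ {ω | lam ω = 1}ᶜ = 0 := by
    have := ae_iff.mp hlam1
    simpa [compl_setOf] using this
  have h1 : P₁ {ω | lam ω = 1} = 1 := (prob_compl_eq_zero_iff hset).mp hc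
  rw [h1] at hne
  exact lt_irrefl _ hne
end Aux


/-- **uniqueness of the total-odds extension.** Suppose `P₁[λ₀ = 1] < 1`,
`p₁ ∈ (0,1)` solves the total-odds equation, and `P₁*` is the associated probability
measure on `ℋ^A`. If `P̃₁` is any probability measure on `ℋ^A` with `P̃₁[A] ∈ (0,1)`,
restricting to `P₁` on `ℋ`, whose relative odds of `A^c` equal `λ₀` a.s., then
`P̃₁ = P₁*`. -/
theorem total_odds_extension_unique
    {Ω : Type*} {𝒜 ℋ : MeasurableSpace Ω} (hℋ : ℋ ≤ 𝒜)
    (P₀ : @Measure Ω 𝒜) [IsProbabilityMeasure P₀]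
    (P₁ : @Measure Ω ℋ) [IsProbabilityMeasure P₁] (habs : P₁ ≪ P₀.trim hℋ)
    (A : Set Ω) (hA : MeasurableSet[𝒜] A)
    (p₀ : ℝ) (hp₀ : p₀ = (P₀ A).toReal) (hp₀0 : 0 < p₀) (hp₀1 : p₀ < 1)
    (μ : @Measure Ω ℋ) [SigmaFinite μ]
    (fA fAc : Ω → ℝ)
    (hfA_meas : @Measurable Ω ℝ ℋ _ fA) (hfAc_meas : @Measurable Ω ℝ ℋ _ fAc)
    (hfA_int : Integrable fA μ) (hfAc_int : Integrable fAc μ)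
    (hfA_pos : ∀ᵐ ω ∂μ, 0 < fA ω) (hfAc_pos : ∀ᵐ ω ∂μ, 0 < fAc ω)
    (hdensA : ∀ H : Set Ω, MeasurableSet[ℋ] H →
      (P₀ (H ∩ A)).toReal = p₀ * ∫ ω in H, fA ω ∂μ)
    (hdensAc : ∀ H : Set Ω, MeasurableSet[ℋ] H →
      (P₀ (H ∩ Aᶜ)).toReal = (1 - p₀) * ∫ ω in H, fAc ω ∂μ)
    (hlam : P₁ {ω | fAc ω / fA ω = 1} < 1)
    (p₁ : ℝ) (hp₁ : p₁ ∈ Set.Ioo (0:ℝ) 1)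
    (heq : (1:ℝ) = ∫ ω, 1 / (p₁ + (1 - p₁) * (fAc ω / fA ω)) ∂P₁)
    (P₁star : @Measure Ω (ℋ ⊔ MeasurableSpace.generateFrom {A}))
    [IsProbabilityMeasure P₁star]
    (hstar : ∀ H G : Set Ω, MeasurableSet[ℋ] H → MeasurableSet[ℋ] G →
      (P₁star ((A ∩ H) ∪ (Aᶜ ∩ G))).toReal =
        (∫ ω, H.indicator (fun _ => (1:ℝ)) ω *
            (p₁ / (p₁ + (1 - p₁) * (fAc ω / fA ω))) ∂P₁) +
        (∫ ω, G.indicator (fun _ => (1:ℝ)) ω *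
            ((1 - p₁) * (fAc ω / fA ω) / (p₁ + (1 - p₁) * (fAc ω / fA ω))) ∂P₁))
    (Ptilde : @Measure Ω (ℋ ⊔ MeasurableSpace.generateFrom {A}))
    [IsProbabilityMeasure Ptilde]
    (htildeA : (Ptilde A).toReal ∈ Set.Ioo (0:ℝ) 1)
    (htilde_restr : ∀ H : Set Ω, MeasurableSet[ℋ] H → Ptilde H = P₁ H)
    (htilde_odds : ∀ᵐ ω ∂Ptilde,
      (condExp ℋ Ptilde (Aᶜ.indicator fun _ => (1:ℝ)) ω /
        condExp ℋ Ptilde (A.indicator fun _ => (1:ℝ)) ω) *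
        ((Ptilde A).toReal / (Ptilde Aᶜ).toReal) = fAc ω / fA ω) :
    Ptilde = P₁star := by
  obtain ⟨hp₁0, hp₁1⟩ := hp₁
  obtain ⟨ht0, ht1⟩ := htildeA
  have hm : ℋ ≤ ℋ ⊔ MeasurableSpace.generateFrom {A} := le_sup_left
  have hAm : MeasurableSet[ℋ ⊔ MeasurableSpace.generateFrom {A}] A :=
    (le_sup_right : MeasurableSpace.generateFrom {A} ≤ _) A
      (MeasurableSpace.measurableSet_generateFrom rfl)
  have hlam_meas : @Measurable Ω ℝ ℋ _ (fun ω => fAc ω / fA ω) :=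
    hfAc_meas.div hfA_meas
  -- Section 1 : a.e. positivity under P₁ and Ptilde
  have hN_meas : MeasurableSet[ℋ] {ω | ¬ (0 < fA ω ∧ 0 < fAc ω)} := by
    have h1 : MeasurableSet[ℋ] {ω | 0 < fA ω ∧ 0 < fAc ω} :=
      ((measurableSet_lt measurable_const hfA_meas).inter
        (measurableSet_lt measurable_const hfAc_meas))
    simpa [compl_setOf] using h1.compl
  have hμN : μ {ω | ¬ (0 < fA ω ∧ 0 < fAc ω)} = 0 := ae_iff.mp (hfA_pos.and hfAc_pos)
  have hP₀N : P₀ {ω | ¬ (0 < fA ω ∧ 0 < fAc ω)} = 0 := by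
    set N := {ω | ¬ (0 < fA ω ∧ 0 < fAc ω)} with hN_def
    have h1 : (P₀ (N ∩ A)).toReal = 0 := by
      rw [hdensA N hN_meas, setIntegral_measure_zero _ hμN, mul_zero]
    have h2 : (P₀ (N ∩ Aᶜ)).toReal = 0 := by
      rw [hdensAc N hN_meas, setIntegral_measure_zero _ hμN, mul_zero]
    have h1' : P₀ (N ∩ A) = 0 := by
      rcases (ENNReal.toReal_eq_zero_iff _).mp h1 with h | h
      · exact h
      · exact absurd h (measure_ne_top _ _)
    have h2' : P₀ (N ∩ Aᶜ) = 0 := by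
      rcases (ENNReal.toReal_eq_zero_iff _).mp h2 with h | h
      · exact h
      · exact absurd h (measure_ne_top _ _)
    have : N = (N ∩ A) ∪ (N ∩ Aᶜ) := by rw [inter_union_compl]
    rw [this]
    exact le_antisymm (le_trans (measure_union_le _ _) (by rw [h1', h2', add_zero])) (by simp)
  have hP₁N : P₁ {ω | ¬ (0 < fA ω ∧ 0 < fAc ω)} = 0 := by
    apply habs
    rw [trim_measurableSet_eq hℋ hN_meas]
    exact hP₀N
  have hPtN : Ptilde {ω | ¬ (0 < fA ω ∧ 0 < fAc ω)} = 0 := by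
    rw [htilde_restr _ hN_meas]; exact hP₁N
  have hpos₁ : ∀ᵐ ω ∂P₁, 0 < fAc ω / fA ω := by
    have h := ae_iff.mpr hP₁N
    filter_upwards [h] with ω hω
    exact div_pos hω.2 hω.1
  have hposT : ∀ᵐ ω ∂Ptilde, 0 < fAc ω / fA ω := by
    have h := ae_iff.mpr hPtN
    filter_upwards [h] with ω hω
    exact div_pos hω.2 hω.1
  -- Section 2 : trim equality and condexp facts
  have hPt_trim : Ptilde.trim hm = P₁ := by
    ext s hs
    rw [trim_measurableSet_eq hm hs]
    exact htilde_restr s hs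
  haveI hsf : SigmaFinite (Ptilde.trim hm) := by
    rw [hPt_trim]; infer_instance
  have hind_A : Integrable (A.indicator fun _ => (1:ℝ)) Ptilde := by
    letI m2 : MeasurableSpace Ω := ℋ ⊔ MeasurableSpace.generateFrom {A}
    exact (integrable_const (1:ℝ) (μ := Ptilde)).indicator hAm
  have hind_Ac : Integrable (Aᶜ.indicator fun _ => (1:ℝ)) Ptilde := by
    letI m2 : MeasurableSpace Ω := ℋ ⊔ MeasurableSpace.generateFrom {A}
    exact (integrable_const (1:ℝ) (μ := Ptilde)).indicator hAm.compl
  set g := condExp ℋ Ptilde (A.indicator fun _ => (1:ℝ)) with hg_def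
  have hgm : StronglyMeasurable[ℋ] g := stronglyMeasurable_condExp
  have hsub : (Aᶜ.indicator fun _ => (1:ℝ))
      = (fun _ => (1:ℝ)) - (A.indicator fun _ => (1:ℝ)) := by
    funext ω; by_cases hω : ω ∈ A <;> simp [hω]
  have hgc : condExp ℋ Ptilde (Aᶜ.indicator fun _ => (1:ℝ))
      =ᵐ[Ptilde] fun ω => 1 - g ω := by
    rw [hsub]
    filter_upwards [condExp_sub (integrable_const (1:ℝ)) hind_A ℋ] with ω hω
    rw [hω]
    simp [condExp_const hm, hg_def]
  -- Section 3 : solve the odds equation for g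
  set pt := (Ptilde A).toReal with hpt_def
  have htAc : (Ptilde Aᶜ).toReal = 1 - pt := by
    rw [prob_compl_eq_one_sub hAm,
      ENNReal.toReal_sub_of_le prob_le_one ENNReal.one_ne_top, ENNReal.toReal_one]
  have hg_eq : ∀ᵐ ω ∂Ptilde, g ω = pt / (pt + (1 - pt) * (fAc ω / fA ω)) := by
    filter_upwards [htilde_odds, hgc, hposT] with ω hodds hgcω hlamω
    rw [hgcω, htAc] at hodds
    have hgne : g ω ≠ 0 := by
      intro h0
      rw [h0, div_zero, zero_mul] at hodds
      exact hlamω.ne hodds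
    have hD : 0 < pt + (1 - pt) * (fAc ω / fA ω) := by nlinarith
    have h1pt : (1:ℝ) - pt ≠ 0 := by intro h; rw [sub_eq_zero] at h; exact ht1.ne h.symm
    rw [div_mul_div_comm, div_eq_iff (mul_ne_zero hgne h1pt)] at hodds
    rw [eq_div_iff hD.ne']
    linear_combination -hodds
  -- transfer a.e. statements to P₁
  have hrhs_meas : @Measurable Ω ℝ ℋ _
      (fun ω => pt / (pt + (1 - pt) * (fAc ω / fA ω))) :=
    (measurable_const.add (measurable_const.mul hlam_meas)).const_div pt
  have hg_eqP₁ : ∀ᵐ ω ∂P₁, g ω = pt / (pt + (1 - pt) * (fAc ω / fA ω)) := by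
    have hset : MeasurableSet[ℋ] {ω | ¬ g ω = pt / (pt + (1 - pt) * (fAc ω / fA ω))} := by
      have h1 : MeasurableSet[ℋ] {ω | g ω = pt / (pt + (1 - pt) * (fAc ω / fA ω))} :=
        measurableSet_eq_fun hgm.measurable hrhs_meas
      simpa [compl_setOf] using h1.compl
    rw [ae_iff, ← htilde_restr _ hset]
    exact ae_iff.mp hg_eq
  -- Section 4 : piece formulas
  have piece : ∀ H : Set Ω, MeasurableSet[ℋ] H →
      (Ptilde (A ∩ H)).toReal = ∫ ω in H, g ω ∂P₁ := by
    intro H hH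
    have h3 : ∫ ω in H, g ω ∂P₁ = ∫ ω in H, g ω ∂Ptilde := by
      rw [← hPt_trim, restrict_trim hm Ptilde hH]
      exact (integral_trim hm hgm).symm
    have h1 : ∫ ω in H, g ω ∂Ptilde
        = ∫ ω in H, (A.indicator fun _ => (1:ℝ)) ω ∂Ptilde :=
      setIntegral_condExp hm hind_A hH
    have h2 : ∫ ω in H, (A.indicator fun _ => (1:ℝ)) ω ∂Ptilde
        = (Ptilde (A ∩ H)).toReal := by
      letI m2 : MeasurableSpace Ω := ℋ ⊔ MeasurableSpace.generateFrom {A}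
      rw [setIntegral_indicator hAm, setIntegral_const, smul_eq_mul, mul_one, inter_comm, measureReal_def]
    rw [h3, h1, h2]
  have piece_c : ∀ G : Set Ω, MeasurableSet[ℋ] G →
      (Ptilde (Aᶜ ∩ G)).toReal = ∫ ω in G, (1 - g ω) ∂P₁ := by
    intro G hG
    have h3 : ∫ ω in G, (1 - g ω) ∂P₁ = ∫ ω in G, (1 - g ω) ∂Ptilde := by
      rw [← hPt_trim, restrict_trim hm Ptilde hG]
      exact (integral_trim hm (stronglyMeasurable_const.sub hgm)).symm
    have h1 : ∫ ω in G, condExp ℋ Ptilde (Aᶜ.indicator fun _ => (1:ℝ)) ω ∂Ptilde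
        = ∫ ω in G, (Aᶜ.indicator fun _ => (1:ℝ)) ω ∂Ptilde :=
      setIntegral_condExp hm hind_Ac hG
    have h1' : ∫ ω in G, condExp ℋ Ptilde (Aᶜ.indicator fun _ => (1:ℝ)) ω ∂Ptilde
        = ∫ ω in G, (1 - g ω) ∂Ptilde :=
      integral_congr_ae (ae_restrict_of_ae hgc)
    have h2 : ∫ ω in G, (Aᶜ.indicator fun _ => (1:ℝ)) ω ∂Ptilde
        = (Ptilde (Aᶜ ∩ G)).toReal := by
      letI m2 : MeasurableSpace Ω := ℋ ⊔ MeasurableSpace.generateFrom {A}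
      rw [setIntegral_indicator hAm.compl, setIntegral_const, smul_eq_mul, mul_one,
        inter_comm, measureReal_def]
    rw [h3, ← h1', h1, h2]
  -- Section 5 : pt solves the total-odds equation, hence pt = p₁
  have hpt_sol : ∫ ω, 1 / (pt + (1 - pt) * (fAc ω / fA ω)) ∂P₁ = 1 := by
    have h0 : (Ptilde (A ∩ univ)).toReal = ∫ ω in univ, g ω ∂P₁ :=
      piece univ MeasurableSet.univ
    rw [inter_univ, Measure.restrict_univ] at h0
    have h1 : ∫ ω, g ω ∂P₁
        = ∫ ω, pt * (1 / (pt + (1 - pt) * (fAc ω / fA ω))) ∂P₁ := by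
      refine integral_congr_ae ?_
      filter_upwards [hg_eqP₁] with ω hω
      rw [hω]; ring
    rw [h1, integral_const_mul] at h0
    have h2 : pt * 1 = pt * ∫ ω, 1 / (pt + (1 - pt) * (fAc ω / fA ω)) ∂P₁ := by
      rw [mul_one]; exact h0
    exact (mul_left_cancel₀ ht0.ne' h2).symm
  have hpt_p₁ : pt = p₁ := by
    rcases lt_trichotomy pt p₁ with h | h | h
    · exact (solution_lt_absurd P₁ _ hlam_meas hpos₁ hlam ⟨ht0, ht1⟩
        ⟨hp₁0, hp₁1⟩ h hpt_sol heq.symm).elim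
    · exact h
    · exact (solution_lt_absurd P₁ _ hlam_meas hpos₁ hlam ⟨hp₁0, hp₁1⟩
        ⟨ht0, ht1⟩ h heq.symm hpt_sol).elim
  -- Section 6 : conclude
  have hDpos : ∀ᵐ ω ∂P₁, 0 < p₁ + (1 - p₁) * (fAc ω / fA ω) := by
    filter_upwards [hpos₁] with ω h
    nlinarith
  suffices hfin : ∀ s : Set Ω, MeasurableSet[ℋ ⊔ MeasurableSpace.generateFrom {A}] s →
      Ptilde s = P₁star s by
    letI m2 : MeasurableSpace Ω := ℋ ⊔ MeasurableSpace.generateFrom {A}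
    exact Measure.ext hfin
  intro s hs
  obtain ⟨H, G, hH, hG, rfl⟩ := join_rep ℋ A hs
  have hdisj : Disjoint (A ∩ H) (Aᶜ ∩ G) :=
    Disjoint.mono inter_subset_left inter_subset_left disjoint_compl_right
  have hmG : MeasurableSet[ℋ ⊔ MeasurableSpace.generateFrom {A}] (Aᶜ ∩ G) :=
    hAm.compl.inter (hm G hG)
  have hkey : (Ptilde (A ∩ H ∪ Aᶜ ∩ G)).toReal = (P₁star (A ∩ H ∪ Aᶜ ∩ G)).toReal := by
    rw [measure_union hdisj hmG,
      ENNReal.toReal_add (measure_ne_top _ _) (measure_ne_top _ _), hstar H G hH hG]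
    congr 1
    · rw [piece H hH, ← integral_indicator hH]
      refine integral_congr_ae ?_
      filter_upwards [hg_eqP₁] with ω hω
      by_cases hmem : ω ∈ H
      · simp only [indicator_of_mem hmem, one_mul]
        rw [hω, hpt_p₁]
      · simp [indicator_of_notMem hmem]
    · rw [piece_c G hG, ← integral_indicator hG]
      refine integral_congr_ae ?_
      filter_upwards [hg_eqP₁, hDpos] with ω hω hDω
      by_cases hmem : ω ∈ G
      · simp only [indicator_of_mem hmem, one_mul]
        rw [hω, hpt_p₁]
        rw [eq_div_iff hDω.ne', sub_mul, one_mul, div_mul_cancel₀ _ hDω.ne']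
        ring
      · simp [indicator_of_notMem hmem]
  exact (ENNReal.toReal_eq_toReal_iff' (measure_ne_top _ _) (measure_ne_top _ _)).mp hkey
end

section
/- Suppose P₀[λ₀ = 1] < 1 and let P₁ = Q, where Q is the mixture measure Q[H] = q·∫_H f_A dμ + (1−q)·∫_H f_{A^c} dμ on (Ω, ℋ) for a fixed q ∈ (0,1). Then p₁ = q is the unique solution in (0,1) of 1 = E₁[1/(p₁ + (1−p₁)·λ₀)], and the associated extension P₁* of P₁ to ℋ^A satisfies P₁*[A] = q. -/
open MeasureTheory Set

set_option maxHeartbeats 1000000 in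
/-- **unbiasedness of the total-odds estimator.** Suppose
`P₀[λ₀ = 1] < 1` and let `P₁ = Q`, where `Q[H] = q·∫_H f_A dμ + (1−q)·∫_H f_{A^c} dμ`
for a fixed `q ∈ (0,1)`. Then `p₁ = q` is the unique solution in `(0,1)` of
`1 = E₁[1/(p₁ + (1−p₁)·λ₀)]`, and the associated extension `P₁*` of `P₁` to `ℋ^A`
satisfies `P₁*[A] = q`. -/
theorem total_odds_unbiased
    {Ω : Type*} {𝒜 ℋ : MeasurableSpace Ω} (hℋ : ℋ ≤ 𝒜)
    (P₀ : @Measure Ω 𝒜) [IsProbabilityMeasure P₀]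
    (A : Set Ω) (hA : MeasurableSet[𝒜] A)
    (p₀ : ℝ) (hp₀ : p₀ = (P₀ A).toReal) (hp₀0 : 0 < p₀) (hp₀1 : p₀ < 1)
    (μ : @Measure Ω ℋ) [SigmaFinite μ]
    (fA fAc : Ω → ℝ)
    (hfA_meas : @Measurable Ω ℝ ℋ _ fA) (hfAc_meas : @Measurable Ω ℝ ℋ _ fAc)
    (hfA_int : Integrable fA μ) (hfAc_int : Integrable fAc μ)
    (hfA_pos : ∀ᵐ ω ∂μ, 0 < fA ω) (hfAc_pos : ∀ᵐ ω ∂μ, 0 < fAc ω)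
    (hdensA : ∀ H : Set Ω, MeasurableSet[ℋ] H →
      (P₀ (H ∩ A)).toReal = p₀ * ∫ ω in H, fA ω ∂μ)
    (hdensAc : ∀ H : Set Ω, MeasurableSet[ℋ] H →
      (P₀ (H ∩ Aᶜ)).toReal = (1 - p₀) * ∫ ω in H, fAc ω ∂μ)
    (hlam : P₀ {ω | fAc ω / fA ω = 1} < 1)
    (q : ℝ) (hq : q ∈ Set.Ioo (0:ℝ) 1)
    (Q : @Measure Ω ℋ) [IsProbabilityMeasure Q]
    (hQ : ∀ H : Set Ω, MeasurableSet[ℋ] H →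
      (Q H).toReal = q * (∫ ω in H, fA ω ∂μ) + (1 - q) * (∫ ω in H, fAc ω ∂μ)) :
    ((1:ℝ) = ∫ ω, 1 / (q + (1 - q) * (fAc ω / fA ω)) ∂Q) ∧
    (∀ p₁ ∈ Set.Ioo (0:ℝ) 1,
      (1:ℝ) = ∫ ω, 1 / (p₁ + (1 - p₁) * (fAc ω / fA ω)) ∂Q → p₁ = q) ∧
    (∀ P₁star : @Measure Ω (ℋ ⊔ MeasurableSpace.generateFrom {A}),
      (∀ H G : Set Ω, MeasurableSet[ℋ] H → MeasurableSet[ℋ] G →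
        (P₁star ((A ∩ H) ∪ (Aᶜ ∩ G))).toReal =
          (∫ ω, H.indicator (fun _ => (1:ℝ)) ω *
              (q / (q + (1 - q) * (fAc ω / fA ω))) ∂Q) +
          (∫ ω, G.indicator (fun _ => (1:ℝ)) ω *
              ((1 - q) * (fAc ω / fA ω) / (q + (1 - q) * (fAc ω / fA ω))) ∂Q)) →
      (P₁star A).toReal = q) := by
  obtain ⟨hq0, hq1⟩ := hq
  have hq1' : (0:ℝ) < 1 - q := by linarith
  have hpos : ∀ᵐ ω ∂μ, 0 < fA ω ∧ 0 < fAc ω := hfA_pos.and hfAc_pos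
  set w : Ω → ℝ := fun ω => q * fA ω + (1 - q) * fAc ω with hw_def
  have hw_meas : @Measurable Ω ℝ ℋ _ w :=
    (hfA_meas.const_mul q).add (hfAc_meas.const_mul (1 - q))
  have hw_int : Integrable w μ := (hfA_int.const_mul q).add (hfAc_int.const_mul (1 - q))
  have hw_pos : ∀ᵐ ω ∂μ, 0 < w ω := by
    filter_upwards [hpos] with ω hω
    exact add_pos (mul_pos hq0 hω.1) (mul_pos hq1' hω.2)
  -- total masses
  have hIfA : ∫ ω, fA ω ∂μ = 1 := by
    have h := hdensA univ MeasurableSet.univ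
    rw [Set.univ_inter, setIntegral_univ, ← hp₀] at h
    have : p₀ * 1 = p₀ * ∫ ω, fA ω ∂μ := by rw [mul_one]; exact h
    exact (mul_left_cancel₀ hp₀0.ne' this).symm
  have hIfAc : ∫ ω, fAc ω ∂μ = 1 := by
    have h := hdensAc univ MeasurableSet.univ
    have hc : (P₀ Aᶜ).toReal = 1 - p₀ := by
      rw [prob_compl_eq_one_sub hA, ENNReal.toReal_sub_of_le prob_le_one ENNReal.one_ne_top,
        ENNReal.toReal_one, hp₀]
    rw [Set.univ_inter, setIntegral_univ, hc] at h
    have hne : (1 - p₀) ≠ 0 := by linarith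
    have : (1 - p₀) * 1 = (1 - p₀) * ∫ ω, fAc ω ∂μ := by rw [mul_one]; exact h
    exact (mul_left_cancel₀ hne this).symm
  have hIw : ∫ ω, w ω ∂μ = 1 := by
    rw [hw_def]
    rw [integral_add (hfA_int.const_mul q) (hfAc_int.const_mul (1 - q)),
      integral_const_mul, integral_const_mul, hIfA, hIfAc]
    ring
  -- Q is the density measure
  have hQeq : Q = μ.withDensity (fun ω => ENNReal.ofReal (w ω)) := by
    ext s hs
    rw [withDensity_apply _ hs]
    have hint : Integrable w (μ.restrict s) := hw_int.restrict
    have hnn : 0 ≤ᵐ[μ.restrict s] w := ae_restrict_of_ae (hw_pos.mono fun ω h => h.le)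
    rw [← ofReal_integral_eq_lintegral_ofReal hint hnn]
    have hval : ∫ ω in s, w ω ∂μ
        = q * (∫ ω in s, fA ω ∂μ) + (1 - q) * (∫ ω in s, fAc ω ∂μ) := by
      rw [hw_def]
      rw [integral_add (hfA_int.restrict.const_mul q) (hfAc_int.restrict.const_mul (1 - q)),
        integral_const_mul, integral_const_mul]
    rw [hval, ← hQ s hs, ENNReal.ofReal_toReal (measure_ne_top Q s)]
  -- change of variables
  have key : ∀ g : Ω → ℝ, ∫ ω, g ω ∂Q = ∫ ω, w ω * g ω ∂μ := by
    intro g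
    rw [hQeq]
    have hwm : AEMeasurable (fun ω => (w ω).toNNReal) μ :=
      (measurable_real_toNNReal.comp hw_meas).aemeasurable
    have heq : (fun ω => ENNReal.ofReal (w ω)) = fun ω => ((w ω).toNNReal : ENNReal) := rfl
    rw [heq, integral_withDensity_eq_integral_smul₀ hwm g]
    refine integral_congr_ae ?_
    filter_upwards [hw_pos] with ω h
    simp [NNReal.smul_def, Real.coe_toNNReal _ h.le]
  -- part 1
  have part1 : (1:ℝ) = ∫ ω, 1 / (q + (1 - q) * (fAc ω / fA ω)) ∂Q := by
    rw [key]
    have hcong : ∫ ω, w ω * (1 / (q + (1 - q) * (fAc ω / fA ω))) ∂μ = ∫ ω, fA ω ∂μ := by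
      refine integral_congr_ae ?_
      filter_upwards [hpos] with ω hω
      obtain ⟨h1, h2⟩ := hω
      have hw0 : 0 < w ω := add_pos (mul_pos hq0 h1) (mul_pos hq1' h2)
      have hden : q + (1 - q) * (fAc ω / fA ω) = w ω / fA ω := by
        rw [hw_def]; field_simp
      rw [hden, one_div_div, mul_comm, div_mul_cancel₀ _ hw0.ne']
    rw [hcong, hIfA]
  -- λ₀ is not a.e. 1
  have hcontra : ¬ (fA =ᵐ[μ] fAc) := by
    intro hae
    set S : Set Ω := {ω | fAc ω / fA ω = 1} with hS_def
    have hS : MeasurableSet[ℋ] S := (hfAc_meas.div hfA_meas) (measurableSet_singleton 1)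
    have hmemS : ∀ᵐ ω ∂μ, ω ∈ S := by
      filter_upwards [hae, hfA_pos] with ω h1 h2
      show fAc ω / fA ω = 1
      rw [← h1, div_self h2.ne']
    have hres : μ.restrict S = μ := Measure.restrict_eq_self_of_ae_mem hmemS
    have hiA : ∫ ω in S, fA ω ∂μ = 1 := by rw [hres]; exact hIfA
    have hiAc : ∫ ω in S, fAc ω ∂μ = 1 := by rw [hres]; exact hIfAc
    have hPA : (P₀ (S ∩ A)).toReal = p₀ := by rw [hdensA S hS, hiA, mul_one]
    have hPAc : (P₀ (S ∩ Aᶜ)).toReal = 1 - p₀ := by rw [hdensAc S hS, hiAc, mul_one]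
    have hsplit : P₀ S = P₀ (S ∩ A) + P₀ (S ∩ Aᶜ) := by
      rw [← Set.diff_eq] at *
      exact (measure_inter_add_diff S hA).symm
    have h1 : (P₀ S).toReal = 1 := by
      rw [hsplit, ENNReal.toReal_add (measure_ne_top _ _) (measure_ne_top _ _), hPA, hPAc]
      ring
    rw [ENNReal.toReal_eq_one_iff] at h1
    rw [hS_def] at h1
    rw [h1] at hlam
    exact lt_irrefl _ hlam
  -- part 2
  have part2 : ∀ p₁ ∈ Set.Ioo (0:ℝ) 1,
      (1:ℝ) = ∫ ω, 1 / (p₁ + (1 - p₁) * (fAc ω / fA ω)) ∂Q → p₁ = q := by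
    rintro p₁ ⟨hp1, hp2⟩ heq
    by_contra hne
    have hp1' : (0:ℝ) < 1 - p₁ := by linarith
    set den : Ω → ℝ := fun ω => p₁ * fA ω + (1 - p₁) * fAc ω with hden_def
    set c : ℝ := min p₁ (1 - p₁) with hc_def
    have hc : 0 < c := lt_min hp1 hp1'
    have hden_meas : @Measurable Ω ℝ ℋ _ den :=
      (hfA_meas.const_mul p₁).add (hfAc_meas.const_mul (1 - p₁))
    have hfacts : ∀ᵐ ω ∂μ, 0 < fA ω ∧ 0 < fAc ω ∧ 0 < den ω ∧
        c * (fA ω + fAc ω) ≤ den ω ∧ |fA ω - fAc ω| ≤ fA ω + fAc ω := by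
      filter_upwards [hpos] with ω hω
      obtain ⟨h1, h2⟩ := hω
      have hd : 0 < den ω := add_pos (mul_pos hp1 h1) (mul_pos hp1' h2)
      refine ⟨h1, h2, hd, ?_, abs_le.mpr ⟨by linarith, by linarith⟩⟩
      have hcp : c ≤ p₁ := min_le_left _ _
      have hcp' : c ≤ 1 - p₁ := min_le_right _ _
      simp only [hden_def]
      nlinarith [mul_le_mul_of_nonneg_right hcp h1.le, mul_le_mul_of_nonneg_right hcp' h2.le]
    set k : Ω → ℝ := fun ω => w ω * (fA ω - fAc ω) / den ω with hk_def
    set m : Ω → ℝ := fun ω => (fA ω - fAc ω) ^ 2 / den ω with hm_def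
    have hk_int : Integrable k μ := by
      refine Integrable.mono' (hw_int.div_const c)
        ((hw_meas.mul (hfA_meas.sub hfAc_meas)).div hden_meas).aestronglyMeasurable ?_
      filter_upwards [hfacts] with ω hω
      obtain ⟨h1, h2, hd, hge, habs⟩ := hω
      have hw0 : 0 ≤ w ω := le_of_lt (add_pos (mul_pos hq0 h1) (mul_pos hq1' h2))
      rw [Real.norm_eq_abs, hk_def, abs_div, abs_mul, abs_of_nonneg hw0, abs_of_pos hd,
        div_le_div_iff₀ hd hc]
      nlinarith [mul_le_mul_of_nonneg_left habs hw0, mul_le_mul_of_nonneg_left hge hw0]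
    have hm_int : Integrable m μ := by
      refine Integrable.mono' ((hfA_int.add hfAc_int).div_const c)
        (((hfA_meas.sub hfAc_meas).pow_const 2).div hden_meas).aestronglyMeasurable ?_
      filter_upwards [hfacts] with ω hω
      obtain ⟨h1, h2, hd, hge, habs⟩ := hω
      have hsq : (0:ℝ) ≤ (fA ω - fAc ω) ^ 2 := sq_nonneg _
      rw [Real.norm_eq_abs, hm_def, abs_div, abs_of_nonneg hsq, abs_of_pos hd,
        div_le_div_iff₀ hd hc]
      simp only [Pi.add_apply]
      have hb : (fA ω - fAc ω) ^ 2 ≤ (fA ω + fAc ω) ^ 2 := by nlinarith [mul_pos h1 h2]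
      nlinarith [mul_le_mul_of_nonneg_right hb hc.le,
        mul_le_mul_of_nonneg_left hge (show (0:ℝ) ≤ fA ω + fAc ω by linarith)]
    -- step 1: ∫ k = 0
    have hstep1 : ∫ ω, k ω ∂μ = 0 := by
      have h0 : (1:ℝ) = ∫ ω, w ω * (1 / (p₁ + (1 - p₁) * (fAc ω / fA ω))) ∂μ := by
        rw [← key]; exact heq
      have hcong : ∫ ω, w ω * (1 / (p₁ + (1 - p₁) * (fAc ω / fA ω))) ∂μ
          = ∫ ω, (w ω + (1 - p₁) * k ω) ∂μ := by
        refine integral_congr_ae ?_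
        filter_upwards [hfacts] with ω hω
        obtain ⟨h1, h2, hd, -, -⟩ := hω
        have hdd : p₁ + (1 - p₁) * (fAc ω / fA ω) = den ω / fA ω := by
          rw [hden_def]; field_simp
        rw [hdd, hk_def, hw_def]
        rw [hden_def] at hd ⊢
        field_simp
        ring
      rw [hcong, integral_add hw_int (hk_int.const_mul _), integral_const_mul, hIw] at h0
      have : (1 - p₁) * ∫ ω, k ω ∂μ = 0 := by linarith
      exact (mul_eq_zero.mp this).resolve_left hp1'.ne' 
    -- step 2: (q - p₁) ∫ m = 0
    have hstep2 : ∫ ω, m ω ∂μ = 0 := by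
      have hcong : ∫ ω, k ω ∂μ = ∫ ω, ((fA ω - fAc ω) + (q - p₁) * m ω) ∂μ := by
        refine integral_congr_ae ?_
        filter_upwards [hfacts] with ω hω
        obtain ⟨h1, h2, hd, -, -⟩ := hω
        rw [hk_def, hm_def, hw_def]
        rw [hden_def] at hd ⊢
        field_simp
        ring
      rw [hcong, integral_add (show Integrable (fun ω => fA ω - fAc ω) μ from hfA_int.sub hfAc_int) (hm_int.const_mul _),
        integral_sub hfA_int hfAc_int, hIfA, hIfAc, integral_const_mul] at hstep1
      have h2 : (q - p₁) * ∫ ω, m ω ∂μ = 0 := by linarith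
      have hne' : q - p₁ ≠ 0 := sub_ne_zero.mpr (Ne.symm hne)
      exact (mul_eq_zero.mp h2).resolve_left hne'
    have hm_nn : 0 ≤ᵐ[μ] m := by
      filter_upwards [hfacts] with ω hω
      exact div_nonneg (sq_nonneg _) hω.2.2.1.le
    have hm0 : m =ᵐ[μ] 0 := (integral_eq_zero_iff_of_nonneg_ae hm_nn hm_int).mp hstep2
    have : fA =ᵐ[μ] fAc := by
      filter_upwards [hm0, hfacts] with ω h0 hω
      obtain ⟨h1, h2, hd, -, -⟩ := hω
      rw [hm_def] at h0
      have : (fA ω - fAc ω) ^ 2 = 0 := by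
        by_contra hnz
        exact hnz (by
          have := div_eq_zero_iff.mp h0
          rcases this with h | h
          · exact h
          · exact absurd h hd.ne')
      have := sq_eq_zero_iff.mp this
      linarith
    exact hcontra this
  refine ⟨part1, part2, ?_⟩
  -- part 3
  intro P₁star hP
  have h := hP univ ∅ MeasurableSet.univ MeasurableSet.empty
  simp only [Set.inter_univ, Set.inter_empty, Set.union_empty] at h
  have h2 : ∫ ω, (∅ : Set Ω).indicator (fun _ => (1:ℝ)) ω *
      ((1 - q) * (fAc ω / fA ω) / (q + (1 - q) * (fAc ω / fA ω))) ∂Q = 0 := by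
    simp
  have h1 : ∫ ω, (univ : Set Ω).indicator (fun _ => (1:ℝ)) ω *
      (q / (q + (1 - q) * (fAc ω / fA ω))) ∂Q = q := by
    simp only [Set.indicator_univ, one_mul]
    have heq2 : ∀ ω, q / (q + (1 - q) * (fAc ω / fA ω))
        = q * (1 / (q + (1 - q) * (fAc ω / fA ω))) := fun ω => (mul_one_div _ _).symm
    simp_rw [heq2]
    rw [integral_const_mul, ← part1, mul_one]
  rw [h, h1, h2, add_zero]
end

section
/- Let Q be the mixture measure Q[H] = q·∫_H f_A dμ + (1−q)·∫_H f_{A^c} dμ on (Ω, ℋ) for a fixed q ∈ (0,1). Then |q − p₀| · ∫ min(f_A, f_{A^c}) dμ ≤ |∫ P₀[A|ℋ] dQ − q| ≤ |q − p₀|. -/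
open MeasureTheory Set

/-- **bias bounds for the total-probability estimator.** Let `Q` be the
mixture measure `Q[H] = q·∫_H f_A dμ + (1−q)·∫_H f_{A^c} dμ` for `q ∈ (0,1)`. Then
`|q − p₀| · ∫ min(f_A, f_{A^c}) dμ ≤ |∫ P₀[A|ℋ] dQ − q| ≤ |q − p₀|`. -/
theorem total_probability_bias_bounds
    {Ω : Type*} {𝒜 ℋ : MeasurableSpace Ω} (hℋ : ℋ ≤ 𝒜)
    (P₀ : @Measure Ω 𝒜) [IsProbabilityMeasure P₀]
    (A : Set Ω) (hA : MeasurableSet[𝒜] A)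
    (p₀ : ℝ) (hp₀ : p₀ = (P₀ A).toReal) (hp₀0 : 0 < p₀) (hp₀1 : p₀ < 1)
    (μ : @Measure Ω ℋ) [SigmaFinite μ]
    (fA fAc : Ω → ℝ)
    (hfA_meas : @Measurable Ω ℝ ℋ _ fA) (hfAc_meas : @Measurable Ω ℝ ℋ _ fAc)
    (hfA_int : Integrable fA μ) (hfAc_int : Integrable fAc μ)
    (hfA_pos : ∀ᵐ ω ∂μ, 0 < fA ω) (hfAc_pos : ∀ᵐ ω ∂μ, 0 < fAc ω)
    (hdensA : ∀ H : Set Ω, MeasurableSet[ℋ] H →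
      (P₀ (H ∩ A)).toReal = p₀ * ∫ ω in H, fA ω ∂μ)
    (hdensAc : ∀ H : Set Ω, MeasurableSet[ℋ] H →
      (P₀ (H ∩ Aᶜ)).toReal = (1 - p₀) * ∫ ω in H, fAc ω ∂μ)
    (q : ℝ) (hq : q ∈ Set.Ioo (0:ℝ) 1)
    (Q : @Measure Ω ℋ) [IsProbabilityMeasure Q]
    (hQ : ∀ H : Set Ω, MeasurableSet[ℋ] H →
      (Q H).toReal = q * (∫ ω in H, fA ω ∂μ) + (1 - q) * (∫ ω in H, fAc ω ∂μ)) :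
    |q - p₀| * (∫ ω, min (fA ω) (fAc ω) ∂μ) ≤
      |(∫ ω, condExp ℋ P₀ (A.indicator fun _ => (1:ℝ)) ω ∂Q) - q| ∧
    |(∫ ω, condExp ℋ P₀ (A.indicator fun _ => (1:ℝ)) ω ∂Q) - q| ≤ |q - p₀| := by
  obtain ⟨hq0, hq1⟩ := hq
  set g := condExp ℋ P₀ (A.indicator fun _ => (1:ℝ)) with hgdef
  set wP : Ω → ℝ := fun ω => p₀ * fA ω + (1 - p₀) * fAc ω with hwPdef
  set wQ : Ω → ℝ := fun ω => q * fA ω + (1 - q) * fAc ω with hwQdef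
  set h : Ω → ℝ := fun ω => p₀ * fA ω / wP ω with hhdef
  set k : Ω → ℝ := fun ω => fA ω * fAc ω / wP ω with hkdef
  set b : Ω → ℝ := fun ω => p₀ * fAc ω + (1 - p₀) * fA ω with hbdef
  have hpos : ∀ᵐ ω ∂μ, 0 < fA ω ∧ 0 < fAc ω := hfA_pos.and hfAc_pos
  have hwP_meas : @Measurable Ω ℝ ℋ _ wP :=
    (hfA_meas.const_mul p₀).add (hfAc_meas.const_mul (1 - p₀))
  have hwQ_meas : @Measurable Ω ℝ ℋ _ wQ :=
    (hfA_meas.const_mul q).add (hfAc_meas.const_mul (1 - q))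
  have hh_meas : @Measurable Ω ℝ ℋ _ h := (hfA_meas.const_mul p₀).div hwP_meas
  have hk_meas : @Measurable Ω ℝ ℋ _ k := (hfA_meas.mul hfAc_meas).div hwP_meas
  have hwP_int : Integrable wP μ := (hfA_int.const_mul p₀).add (hfAc_int.const_mul (1 - p₀))
  have hwQ_int : Integrable wQ μ := (hfA_int.const_mul q).add (hfAc_int.const_mul (1 - q))
  have hb_int : Integrable b μ := (hfAc_int.const_mul p₀).add (hfA_int.const_mul (1 - p₀))
  -- integrals of densities are 1
  have hintA : ∫ ω, fA ω ∂μ = 1 := by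
    have := hdensA univ MeasurableSet.univ
    rw [univ_inter, ← hp₀, Measure.restrict_univ] at this
    field_simp at this
    linarith [this]
  have hPAc : (P₀ Aᶜ).toReal = 1 - p₀ := by
    rw [prob_compl_eq_one_sub hA, hp₀]
    rw [ENNReal.toReal_sub_of_le prob_le_one ENNReal.one_ne_top, ENNReal.toReal_one]
  have hintAc : ∫ ω, fAc ω ∂μ = 1 := by
    have := hdensAc univ MeasurableSet.univ
    rw [univ_inter, hPAc, Measure.restrict_univ] at this
    have h1 : (1 : ℝ) - p₀ ≠ 0 := by linarith
    exact (mul_left_cancel₀ h1 (by linarith)).symm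
  -- P₀ on ℋ-sets
  have hP₀s : ∀ s : Set Ω, MeasurableSet[ℋ] s →
      (P₀ s).toReal = ∫ ω in s, wP ω ∂μ := by
    intro s hs
    have hsplit : P₀ (s ∩ A) + P₀ (s \ A) = P₀ s := measure_inter_add_diff s hA
    have : (P₀ s).toReal = (P₀ (s ∩ A)).toReal + (P₀ (s ∩ Aᶜ)).toReal := by
      rw [← diff_eq]
      rw [← hsplit, ENNReal.toReal_add (measure_ne_top _ _) (measure_ne_top _ _)]
    rw [this, hdensA s hs, hdensAc s hs]
    simp only [hwPdef]
    rw [integral_add (hfA_int.integrableOn.const_mul p₀)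
        (hfAc_int.integrableOn.const_mul (1 - p₀)),
      integral_const_mul, integral_const_mul]
  -- positivity of densities
  have hwP_pos : ∀ᵐ ω ∂μ, 0 < wP ω := hpos.mono fun ω hω => by
    obtain ⟨h1, h2⟩ := hω; simp only [hwPdef]; nlinarith
  have hwQ_pos : ∀ᵐ ω ∂μ, 0 < wQ ω := hpos.mono fun ω hω => by
    obtain ⟨h1, h2⟩ := hω; simp only [hwQdef]; nlinarith
  -- null set transfer
  have hμ_to_P₀ : ∀ s : Set Ω, MeasurableSet[ℋ] s → μ s = 0 → P₀ s = 0 := by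
    intro s hs hμs
    have h0 : (P₀ s).toReal = 0 := by
      rw [hP₀s s hs, Measure.restrict_eq_zero.mpr hμs, integral_zero_measure]
    exact ((ENNReal.toReal_eq_zero_iff _).mp h0).resolve_right (measure_ne_top _ _)
  have hP₀_to_μ : ∀ s : Set Ω, MeasurableSet[ℋ] s → P₀ s = 0 → μ s = 0 := by
    intro s hs hPs
    have h0 : ∫ ω in s, wP ω ∂μ = 0 := by rw [← hP₀s s hs, hPs, ENNReal.toReal_zero]
    have hnn : 0 ≤ᵐ[μ.restrict s] wP := ae_restrict_of_ae (hwP_pos.mono fun ω h => h.le)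
    have hz := (setIntegral_eq_zero_iff_of_nonneg_ae hnn hwP_int.integrableOn).mp h0
    have h2 : ∀ᵐ ω ∂μ.restrict s, False := by
      filter_upwards [hz, ae_restrict_of_ae hwP_pos] with ω h1 h2
      rw [h1] at h2; exact lt_irrefl 0 h2
    have h3 := ae_iff.mp h2
    simpa using h3
  -- Q on ℋ-sets
  have hQs : ∀ s : Set Ω, MeasurableSet[ℋ] s → (Q s).toReal = ∫ ω in s, wQ ω ∂μ := by
    intro s hs
    rw [hQ s hs]
    simp only [hwQdef]
    rw [integral_add (hfA_int.integrableOn.const_mul q)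
        (hfAc_int.integrableOn.const_mul (1 - q)),
      integral_const_mul, integral_const_mul]
  -- identify trim and Q as withDensity measures
  have htrim : P₀.trim hℋ = μ.withDensity (fun ω => ((wP ω).toNNReal : ENNReal)) := by
    refine Measure.ext fun s hs => ?_
    have hnn : 0 ≤ᵐ[μ.restrict s] wP := ae_restrict_of_ae (hwP_pos.mono fun ω h => h.le)
    calc P₀.trim hℋ s = P₀ s := trim_measurableSet_eq hℋ hs
      _ = ENNReal.ofReal ((P₀ s).toReal) := (ENNReal.ofReal_toReal (measure_ne_top _ _)).symm
      _ = ENNReal.ofReal (∫ ω in s, wP ω ∂μ) := by rw [hP₀s s hs]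
      _ = ∫⁻ ω in s, ENNReal.ofReal (wP ω) ∂μ :=
          ofReal_integral_eq_lintegral_ofReal hwP_int.integrableOn hnn
      _ = ∫⁻ ω in s, ((wP ω).toNNReal : ENNReal) ∂μ := rfl
      _ = μ.withDensity (fun ω => ((wP ω).toNNReal : ENNReal)) s := (withDensity_apply _ hs).symm
  have hQeq : Q = μ.withDensity (fun ω => ((wQ ω).toNNReal : ENNReal)) := by
    refine Measure.ext fun s hs => ?_
    have hnn : 0 ≤ᵐ[μ.restrict s] wQ := ae_restrict_of_ae (hwQ_pos.mono fun ω h => h.le)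
    calc Q s = ENNReal.ofReal ((Q s).toReal) := (ENNReal.ofReal_toReal (measure_ne_top _ _)).symm
      _ = ENNReal.ofReal (∫ ω in s, wQ ω ∂μ) := by rw [hQs s hs]
      _ = ∫⁻ ω in s, ENNReal.ofReal (wQ ω) ∂μ :=
          ofReal_integral_eq_lintegral_ofReal hwQ_int.integrableOn hnn
      _ = ∫⁻ ω in s, ((wQ ω).toNNReal : ENNReal) ∂μ := rfl
      _ = μ.withDensity (fun ω => ((wQ ω).toNNReal : ENNReal)) s := (withDensity_apply _ hs).symm
  -- positivity a.e. under P₀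
  have hSmeas : MeasurableSet[ℋ] {ω | ¬(0 < fA ω ∧ 0 < fAc ω)} :=
    ((measurableSet_lt measurable_const hfA_meas).inter
      (measurableSet_lt measurable_const hfAc_meas)).compl
  have hgood_P₀ : ∀ᵐ ω ∂P₀, 0 < fA ω ∧ 0 < fAc ω :=
    ae_iff.mpr (hμ_to_P₀ _ hSmeas (ae_iff.mp hpos))
  -- h is bounded a.e. P₀
  have hh_bdd : ∀ᵐ ω ∂P₀, ‖h ω‖ ≤ 1 := hgood_P₀.mono fun ω hω => by
    obtain ⟨h1, h2⟩ := hω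
    have hw : 0 < wP ω := by simp only [hwPdef]; nlinarith
    simp only [hhdef, Real.norm_eq_abs]
    rw [abs_of_nonneg (div_nonneg (by nlinarith) hw.le), div_le_one hw]
    simp only [hwPdef]; nlinarith
  have hh_sm : StronglyMeasurable[ℋ] h := hh_meas.stronglyMeasurable
  have hh_int_P₀ : Integrable h P₀ :=
    Integrable.mono' (integrable_const 1)
      ((hh_meas.mono hℋ le_rfl).aestronglyMeasurable) hh_bdd
  have hind_int : Integrable (A.indicator fun _ => (1:ℝ)) P₀ := by
    letI := 𝒜
    exact Integrable.indicator (μ := P₀) (integrable_const (1:ℝ)) hA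
  have hwPnn_meas : @Measurable Ω NNReal ℋ _ (fun ω => (wP ω).toNNReal) :=
    measurable_real_toNNReal.comp hwP_meas
  have hwQnn_meas : @Measurable Ω NNReal ℋ _ (fun ω => (wQ ω).toNNReal) :=
    measurable_real_toNNReal.comp hwQ_meas
  -- h integrates like the indicator on ℋ-sets
  have hset_eq : ∀ s : Set Ω, MeasurableSet[ℋ] s → P₀ s < ⊤ →
      ∫ ω in s, h ω ∂P₀ = ∫ ω in s, (A.indicator fun _ => (1:ℝ)) ω ∂P₀ := by
    intro s hs _
    have hRHS : ∫ ω in s, (A.indicator fun _ => (1:ℝ)) ω ∂P₀ = (P₀ (s ∩ A)).toReal := by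
      letI := 𝒜
      rw [integral_indicator (μ := P₀.restrict s) hA, setIntegral_const,
        measureReal_def, Measure.restrict_apply hA, inter_comm, smul_eq_mul, mul_one]
    have hLHS : ∫ ω in s, h ω ∂P₀ = p₀ * ∫ ω in s, fA ω ∂μ := by
      rw [setIntegral_trim hℋ hh_sm hs, htrim, restrict_withDensity hs,
        integral_withDensity_eq_integral_smul hwPnn_meas h]
      have hae : (fun ω => ((wP ω).toNNReal : NNReal) • h ω) =ᵐ[μ.restrict s]
          fun ω => p₀ * fA ω := by
        refine ae_restrict_of_ae (hpos.mono fun ω hω => ?_)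
        obtain ⟨h1, h2⟩ := hω
        have hw : 0 < wP ω := by simp only [hwPdef]; nlinarith
        simp only [hhdef]
        rw [NNReal.smul_def, Real.coe_toNNReal _ hw.le, smul_eq_mul]
        field_simp
      rw [integral_congr_ae hae, integral_const_mul]
    rw [hLHS, hRHS, hdensA s hs]
  -- conclude h is a version of the conditional expectation
  have hcond : h =ᵐ[P₀] g := by
    letI := 𝒜
    exact ae_eq_condExp_of_forall_setIntegral_eq hℋ hind_int
      (fun s _ _ => hh_int_P₀.integrableOn) hset_eq ⟨h, hh_sm, Filter.EventuallyEq.rfl⟩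
  have hg_sm : StronglyMeasurable[ℋ] g := stronglyMeasurable_condExp
  have hcond_μ : h =ᵐ[μ] g := by
    have hN : MeasurableSet[ℋ] {ω | ¬ h ω = g ω} :=
      (measurableSet_eq_fun hh_sm.measurable hg_sm.measurable).compl
    exact ae_iff.mpr (hP₀_to_μ _ hN (ae_iff.mp hcond))
  have hQ_ac : Q ≪ μ := by rw [hQeq]; exact withDensity_absolutelyContinuous μ _
  have hcond_Q : h =ᵐ[Q] g := hcond_μ.filter_mono hQ_ac.ae_le
  -- k bounds and integrability
  have hk_nonneg : ∀ᵐ ω ∂μ, 0 ≤ k ω := hpos.mono fun ω hω => by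
    obtain ⟨h1, h2⟩ := hω
    have hw : 0 < wP ω := by simp only [hwPdef]; nlinarith
    exact div_nonneg (by nlinarith) hw.le
  have hk_le_b : ∀ᵐ ω ∂μ, k ω ≤ b ω := hpos.mono fun ω hω => by
    obtain ⟨h1, h2⟩ := hω
    have hw : 0 < wP ω := by simp only [hwPdef]; nlinarith
    simp only [hkdef, hbdef]
    rw [div_le_iff₀ hw]
    simp only [hwPdef]
    nlinarith [mul_nonneg (mul_nonneg hp₀0.le (by linarith : (0:ℝ) ≤ 1 - p₀))
      (sq_nonneg (fA ω - fAc ω))]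
  have hk_int : Integrable k μ :=
    Integrable.mono' hb_int hk_meas.aestronglyMeasurable
      ((hk_nonneg.and hk_le_b).mono fun ω hω => by
        rw [Real.norm_eq_abs, abs_of_nonneg hω.1]; exact hω.2)
  have hmin_int : Integrable (fun ω => min (fA ω) (fAc ω)) μ := hfA_int.inf hfAc_int
  -- the main integral computation
  have hEint : ∫ ω, g ω ∂Q = q + (p₀ - q) * ∫ ω, k ω ∂μ := by
    rw [integral_congr_ae hcond_Q.symm, hQeq,
      integral_withDensity_eq_integral_smul hwQnn_meas h]
    have hae : (fun ω => ((wQ ω).toNNReal : NNReal) • h ω) =ᵐ[μ]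
        fun ω => q * fA ω + (p₀ - q) * k ω := by
      filter_upwards [hpos] with ω hω
      obtain ⟨h1, h2⟩ := hω
      have hw : 0 < wP ω := by simp only [hwPdef]; nlinarith
      have hwq : 0 ≤ wQ ω := by simp only [hwQdef]; nlinarith
      simp only [hhdef, hkdef]
      rw [NNReal.smul_def, Real.coe_toNNReal _ hwq, smul_eq_mul]
      simp only [hwQdef, hwPdef] at hw ⊢
      linear_combination (q * fA ω) * mul_inv_cancel₀ hw.ne'
    rw [integral_congr_ae hae,
      integral_add (hfA_int.const_mul q) (hk_int.const_mul (p₀ - q)),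
      integral_const_mul, integral_const_mul, hintA, mul_one]
  have hIk0 : 0 ≤ ∫ ω, k ω ∂μ := integral_nonneg_of_ae hk_nonneg
  have hIk1 : ∫ ω, k ω ∂μ ≤ 1 := by
    have hmono := integral_mono_ae hk_int hb_int hk_le_b
    have hbint : ∫ ω, b ω ∂μ = 1 := by
      simp only [hbdef]
      rw [integral_add (hfAc_int.const_mul p₀) (hfA_int.const_mul (1 - p₀)),
        integral_const_mul, integral_const_mul, hintA, hintAc]
      ring
    linarith
  have hmin_le : ∀ᵐ ω ∂μ, min (fA ω) (fAc ω) ≤ k ω := hpos.mono fun ω hω => by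
    obtain ⟨h1, h2⟩ := hω
    have hw : 0 < wP ω := by simp only [hwPdef]; nlinarith
    simp only [hkdef]
    rw [le_div_iff₀ hw]
    rcases le_total (fA ω) (fAc ω) with hle | hle
    · rw [min_eq_left hle]; simp only [hwPdef]
      nlinarith [mul_nonneg (mul_nonneg hp₀0.le h1.le) (sub_nonneg.mpr hle)]
    · rw [min_eq_right hle]; simp only [hwPdef]
      nlinarith [mul_nonneg (mul_nonneg (by linarith : (0:ℝ) ≤ 1 - p₀) h2.le) (sub_nonneg.mpr hle)]
  have hImin : ∫ ω, min (fA ω) (fAc ω) ∂μ ≤ ∫ ω, k ω ∂μ :=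
    integral_mono_ae hmin_int hk_int hmin_le
  rw [hEint]
  have habs : |q + (p₀ - q) * ∫ ω, k ω ∂μ - q| = |q - p₀| * ∫ ω, k ω ∂μ := by
    rw [add_sub_cancel_left, abs_mul, abs_of_nonneg hIk0, abs_sub_comm]
  rw [habs]
  constructor
  · exact mul_le_mul_of_nonneg_left hImin (abs_nonneg _)
  · calc |q - p₀| * ∫ ω, k ω ∂μ ≤ |q - p₀| * 1 :=
        mul_le_mul_of_nonneg_left hIk1 (abs_nonneg _)
      _ = |q - p₀| := mul_one _
end

section
/- Let Q be the mixture measure Q[H] = q·∫_H f_A dμ + (1−q)·∫_H f_{A^c} dμ on (Ω, ℋ) for a fixed q ∈ (0,1). Then ∫ P₀[A|ℋ] dQ − q = (p₀ − q) · ∫ f_A·f_{A^c}/(p₀·f_A + (1−p₀)·f_{A^c}) dμ. -/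
open MeasureTheory Set
open scoped ENNReal NNReal


private lemma aux_indicator_integrable {Ω : Type*} {m : MeasurableSpace Ω} (μ : Measure Ω)
    [IsFiniteMeasure μ] {A : Set Ω} (hA : MeasurableSet A) :
    Integrable (A.indicator fun _ => (1:ℝ)) μ :=
  (integrable_const _).indicator hA

private lemma aux_setIntegral_indicator {Ω : Type*} {m : MeasurableSpace Ω} (μ : Measure Ω)
    [IsFiniteMeasure μ] {A s : Set Ω} (hA : MeasurableSet A) :
    ∫ x in s, (A.indicator fun _ => (1:ℝ)) x ∂μ = (μ (s ∩ A)).toReal := by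
  rw [setIntegral_indicator hA, setIntegral_const, smul_eq_mul, mul_one, measureReal_def]

private lemma aux_integrableOn_s12 {Ω : Type*} {m : MeasurableSpace Ω} (μ : Measure Ω)
    {g : Ω → ℝ} (hg : Integrable g μ) (s : Set Ω) : IntegrableOn g s μ :=
  hg.integrableOn

/-- **exact bias of the total-probability estimator.** Let `Q` be the
mixture measure `Q[H] = q·∫_H f_A dμ + (1−q)·∫_H f_{A^c} dμ` for `q ∈ (0,1)`. Then
`∫ P₀[A|ℋ] dQ − q = (p₀ − q) · ∫ f_A·f_{A^c}/(p₀·f_A + (1−p₀)·f_{A^c}) dμ`. -/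
theorem total_probability_bias_formula
    {Ω : Type*} {𝒜 ℋ : MeasurableSpace Ω} (hℋ : ℋ ≤ 𝒜)
    (P₀ : @Measure Ω 𝒜) [IsProbabilityMeasure P₀]
    (A : Set Ω) (hA : MeasurableSet[𝒜] A)
    (p₀ : ℝ) (hp₀ : p₀ = (P₀ A).toReal) (hp₀0 : 0 < p₀) (hp₀1 : p₀ < 1)
    (μ : @Measure Ω ℋ) [SigmaFinite μ]
    (fA fAc : Ω → ℝ)
    (hfA_meas : @Measurable Ω ℝ ℋ _ fA) (hfAc_meas : @Measurable Ω ℝ ℋ _ fAc)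
    (hfA_int : Integrable fA μ) (hfAc_int : Integrable fAc μ)
    (hfA_pos : ∀ᵐ ω ∂μ, 0 < fA ω) (hfAc_pos : ∀ᵐ ω ∂μ, 0 < fAc ω)
    (hdensA : ∀ H : Set Ω, MeasurableSet[ℋ] H →
      (P₀ (H ∩ A)).toReal = p₀ * ∫ ω in H, fA ω ∂μ)
    (hdensAc : ∀ H : Set Ω, MeasurableSet[ℋ] H →
      (P₀ (H ∩ Aᶜ)).toReal = (1 - p₀) * ∫ ω in H, fAc ω ∂μ)
    (q : ℝ) (hq : q ∈ Set.Ioo (0:ℝ) 1)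
    (Q : @Measure Ω ℋ) [IsProbabilityMeasure Q]
    (hQ : ∀ H : Set Ω, MeasurableSet[ℋ] H →
      (Q H).toReal = q * (∫ ω in H, fA ω ∂μ) + (1 - q) * (∫ ω in H, fAc ω ∂μ)) :
    (∫ ω, condExp ℋ P₀ (A.indicator fun _ => (1:ℝ)) ω ∂Q) - q =
      (p₀ - q) * ∫ ω, fA ω * fAc ω / (p₀ * fA ω + (1 - p₀) * fAc ω) ∂μ := by
  obtain ⟨hq0, hq1⟩ := hq
  have hp₀1' : (0:ℝ) < 1 - p₀ := by linarith
  -- notation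
  set D : Ω → ℝ := fun ω => p₀ * fA ω + (1 - p₀) * fAc ω with hD_def
  set w : Ω → ℝ := fun ω => q * fA ω + (1 - q) * fAc ω with hw_def
  set g : Ω → ℝ := fun ω => p₀ * fA ω / D ω with hg_def
  have hD_meas : @Measurable Ω ℝ ℋ _ D :=
    ((hfA_meas.const_mul p₀).add (hfAc_meas.const_mul (1 - p₀)))
  have hw_meas : @Measurable Ω ℝ ℋ _ w :=
    ((hfA_meas.const_mul q).add (hfAc_meas.const_mul (1 - q)))
  have hg_meas : @Measurable Ω ℝ ℋ _ g := (hfA_meas.const_mul p₀).div hD_meas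
  have hD_int : Integrable D μ := (hfA_int.const_mul p₀).add (hfAc_int.const_mul (1 - p₀))
  have hw_int : Integrable w μ := (hfA_int.const_mul q).add (hfAc_int.const_mul (1 - q))
  have hpos : ∀ᵐ ω ∂μ, 0 < fA ω ∧ 0 < fAc ω := hfA_pos.and hfAc_pos
  have hD_pos : ∀ᵐ ω ∂μ, 0 < D ω := by
    filter_upwards [hpos] with ω ⟨h1, h2⟩
    have : 0 < p₀ * fA ω := mul_pos hp₀0 h1
    have : 0 < (1 - p₀) * fAc ω := mul_pos hp₀1' h2
    simp only [hD_def]; linarith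
  have hw_pos : ∀ᵐ ω ∂μ, 0 < w ω := by
    filter_upwards [hpos] with ω ⟨h1, h2⟩
    have : 0 < q * fA ω := mul_pos hq0 h1
    have : 0 < (1 - q) * fAc ω := mul_pos (by linarith) h2
    simp only [hw_def]; linarith
  -- total masses
  have hintfA : ∫ ω, fA ω ∂μ = 1 := by
    have h1 := hdensA Set.univ MeasurableSet.univ
    rw [Set.univ_inter, Measure.restrict_univ, ← hp₀] at h1
    have := mul_left_cancel₀ (ne_of_gt hp₀0) (show p₀ * (∫ ω, fA ω ∂μ) = p₀ * 1 by
      rw [mul_one]; linarith)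
    exact this
  have hintfAc : ∫ ω, fAc ω ∂μ = 1 := by
    have h1 := hdensAc Set.univ MeasurableSet.univ
    rw [Set.univ_inter, Measure.restrict_univ] at h1
    have hsum : (P₀ A).toReal + (P₀ Aᶜ).toReal = 1 := by
      rw [← ENNReal.toReal_add (measure_ne_top _ _) (measure_ne_top _ _),
        measure_add_measure_compl hA, measure_univ, ENNReal.toReal_one]
    have h2 : (P₀ Aᶜ).toReal = 1 - p₀ := by rw [hp₀]; linarith
    rw [h2] at h1
    exact mul_left_cancel₀ (ne_of_gt hp₀1') (by rw [mul_one]; linarith)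
  -- set integrals of D and w
  have hsetD : ∀ H : Set Ω, MeasurableSet[ℋ] H →
      ∫ ω in H, D ω ∂μ = p₀ * ∫ ω in H, fA ω ∂μ + (1 - p₀) * ∫ ω in H, fAc ω ∂μ := by
    intro H hH
    rw [show (fun ω => D ω) = fun ω => p₀ * fA ω + (1 - p₀) * fAc ω from rfl,
      integral_add ((hfA_int.restrict).const_mul p₀) ((hfAc_int.restrict).const_mul (1 - p₀)),
      integral_const_mul, integral_const_mul]
  have hsetw : ∀ H : Set Ω, MeasurableSet[ℋ] H →
      ∫ ω in H, w ω ∂μ = q * ∫ ω in H, fA ω ∂μ + (1 - q) * ∫ ω in H, fAc ω ∂μ := by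
    intro H hH
    rw [show (fun ω => w ω) = fun ω => q * fA ω + (1 - q) * fAc ω from rfl,
      integral_add ((hfA_int.restrict).const_mul q) ((hfAc_int.restrict).const_mul (1 - q)),
      integral_const_mul, integral_const_mul]
  -- trim of P₀ is withDensity D
  have hP : P₀.trim hℋ = μ.withDensity (fun ω => ENNReal.ofReal (D ω)) := by
    refine Measure.ext fun H hH => ?_
    rw [trim_measurableSet_eq hℋ hH, withDensity_apply _ hH,
      ← ofReal_integral_eq_lintegral_ofReal (hD_int.restrict)
        ((ae_restrict_of_ae hD_pos).mono fun ω h => le_of_lt h),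
      hsetD H hH]
    have hdecomp : P₀ (H ∩ A) + P₀ (H ∩ Aᶜ) = P₀ H := by
      rw [← measure_inter_add_diff H hA, Set.diff_eq]
    have htr : (P₀ H).toReal = p₀ * ∫ ω in H, fA ω ∂μ + (1 - p₀) * ∫ ω in H, fAc ω ∂μ := by
      rw [← hdecomp, ENNReal.toReal_add (measure_ne_top _ _) (measure_ne_top _ _),
        hdensA H hH, hdensAc H hH]
    rw [← htr, ENNReal.ofReal_toReal (measure_ne_top _ _)]
  -- Q is withDensity w
  have hQw : Q = μ.withDensity (fun ω => ENNReal.ofReal (w ω)) := by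
    refine Measure.ext fun H hH => ?_
    rw [withDensity_apply _ hH,
      ← ofReal_integral_eq_lintegral_ofReal (hw_int.restrict)
        ((ae_restrict_of_ae hw_pos).mono fun ω h => le_of_lt h),
      hsetw H hH, ← hQ H hH, ENNReal.ofReal_toReal (measure_ne_top _ _)]
  have hD_ne : ∀ᵐ ω ∂μ, ENNReal.ofReal (D ω) ≠ 0 := by
    filter_upwards [hD_pos] with ω h
    simp [ENNReal.ofReal_eq_zero, not_le, h]
  -- transfer positivity to P₀
  have hpos_trim : ∀ᵐ ω ∂(P₀.trim hℋ), 0 < fA ω ∧ 0 < fAc ω := by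
    rw [hP]
    exact (withDensity_absolutelyContinuous μ _).ae_le hpos
  have hpos_P₀ : ∀ᵐ ω ∂P₀, 0 < fA ω ∧ 0 < fAc ω := ae_of_ae_trim hℋ hpos_trim
  have g_sm : StronglyMeasurable[ℋ] g := hg_meas.stronglyMeasurable
  have hg_meas𝒜 : @Measurable Ω ℝ 𝒜 _ g := hg_meas.mono hℋ le_rfl
  have g_int : Integrable g P₀ := by
    refine Integrable.mono' (integrable_const (1:ℝ)) hg_meas𝒜.aestronglyMeasurable ?_
    filter_upwards [hpos_P₀] with ω ⟨h1, h2⟩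
    have hDpos : 0 < D ω := by
      have := mul_pos hp₀0 h1; have := mul_pos hp₀1' h2
      simp only [hD_def]; linarith
    have hgnn : 0 ≤ g ω := div_nonneg (le_of_lt (mul_pos hp₀0 h1)) (le_of_lt hDpos)
    have hgle : g ω ≤ 1 := by
      rw [hg_def, div_le_one hDpos]
      have := mul_pos hp₀1' h2
      simp only [hD_def]; linarith
    rw [Real.norm_eq_abs, abs_of_nonneg hgnn]; exact hgle
  -- g is the conditional expectation
  have hce : g =ᵐ[P₀] condExp ℋ P₀ (A.indicator fun _ => (1:ℝ)) := by
    have : SigmaFinite (P₀.trim hℋ) := by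
      have : IsFiniteMeasure (P₀.trim hℋ) := by
        constructor
        rw [trim_measurableSet_eq hℋ MeasurableSet.univ]
        exact measure_lt_top _ _
      infer_instance
    have h1A : Integrable (A.indicator fun _ => (1:ℝ)) P₀ := aux_indicator_integrable P₀ hA
    have hgaesm : AEStronglyMeasurable[ℋ] g P₀ := g_sm.aestronglyMeasurable
    refine ae_eq_condExp_of_forall_setIntegral_eq (μ := P₀) (f := A.indicator fun _ => (1:ℝ))
      (g := g) hℋ h1A ?_ ?_ hgaesm
    · exact fun s _ _ => aux_integrableOn_s12 P₀ g_int s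
    intro s hs _
    -- RHS
    have hRHS : ∫ x in s, (A.indicator fun _ => (1:ℝ)) x ∂P₀ = p₀ * ∫ ω in s, fA ω ∂μ := by
      rw [aux_setIntegral_indicator P₀ hA, hdensA s hs]
    rw [hRHS]
    -- LHS via trim and withDensity
    rw [setIntegral_trim hℋ g_sm hs, hP]
    have hofD : (fun ω => ENNReal.ofReal (D ω))
        = fun ω => ((fun ω => (D ω).toNNReal) ω : ℝ≥0∞) := rfl
    rw [hofD, restrict_withDensity hs,
      integral_withDensity_eq_integral_smul hD_meas.real_toNNReal g]
    have : ∀ᵐ ω ∂(μ.restrict s), (D ω).toNNReal • g ω = p₀ * fA ω := by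
      filter_upwards [ae_restrict_of_ae hD_pos] with ω hDpos
      have hDne : D ω ≠ 0 := ne_of_gt hDpos
      rw [NNReal.smul_def, smul_eq_mul, Real.coe_toNNReal _ (le_of_lt hDpos)]
      simp only [hg_def]
      field_simp
    rw [integral_congr_ae this, integral_const_mul]
  -- transfer to μ then Q
  have hce_trim : g =ᵐ[P₀.trim hℋ] condExp ℋ P₀ (A.indicator fun _ => (1:ℝ)) :=
    StronglyMeasurable.ae_eq_trim_of_stronglyMeasurable hℋ g_sm stronglyMeasurable_condExp hce
  have hce_μ : g =ᵐ[μ] condExp ℋ P₀ (A.indicator fun _ => (1:ℝ)) := by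
    rw [hP] at hce_trim
    exact (withDensity_ae_eq (hD_meas.real_toNNReal.coe_nnreal_ennreal.aemeasurable) hD_ne).mp
      hce_trim
  have hce_Q : g =ᵐ[Q] condExp ℋ P₀ (A.indicator fun _ => (1:ℝ)) := by
    rw [hQw]
    exact (withDensity_absolutelyContinuous μ _).ae_eq hce_μ
  -- compute the integral
  have h_int : Integrable (fun ω => fA ω * fAc ω / D ω) μ := by
    refine Integrable.mono' (hfA_int.const_mul (1 - p₀)⁻¹)
      ((hfA_meas.mul hfAc_meas).div hD_meas).aestronglyMeasurable ?_
    filter_upwards [hpos] with ω ⟨h1, h2⟩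
    have hDpos : 0 < D ω := by
      have := mul_pos hp₀0 h1; have := mul_pos hp₀1' h2
      simp only [hD_def]; linarith
    have hnn : 0 ≤ fA ω * fAc ω / D ω :=
      div_nonneg (le_of_lt (mul_pos h1 h2)) (le_of_lt hDpos)
    rw [Real.norm_eq_abs, abs_of_nonneg hnn, div_le_iff₀ hDpos]
    have hinv : (1 - p₀) * (1 - p₀)⁻¹ = 1 := mul_inv_cancel₀ (ne_of_gt hp₀1')
    have hinvpos : 0 < (1 - p₀)⁻¹ := inv_pos.mpr hp₀1'
    simp only [hD_def]
    nlinarith [mul_pos (mul_pos hinvpos hp₀0) (mul_pos h1 h1), mul_pos h1 h2]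
  have key : ∫ ω, condExp ℋ P₀ (A.indicator fun _ => (1:ℝ)) ω ∂Q
      = q + (p₀ - q) * ∫ ω, fA ω * fAc ω / D ω ∂μ := by
    rw [← integral_congr_ae hce_Q, hQw]
    have hofw : (fun ω => ENNReal.ofReal (w ω))
        = fun ω => ((fun ω => (w ω).toNNReal) ω : ℝ≥0∞) := rfl
    rw [hofw, integral_withDensity_eq_integral_smul hw_meas.real_toNNReal g]
    have hptwise : ∀ᵐ ω ∂μ, (w ω).toNNReal • g ω
        = q * fA ω + (p₀ - q) * (fA ω * fAc ω / D ω) := by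
      filter_upwards [hpos, hw_pos] with ω ⟨h1, h2⟩ hwpos
      have hDpos : 0 < D ω := by
        have := mul_pos hp₀0 h1; have := mul_pos hp₀1' h2
        simp only [hD_def]; linarith
      rw [NNReal.smul_def, smul_eq_mul, Real.coe_toNNReal _ (le_of_lt hwpos), hg_def]
      simp only [hw_def, hD_def] at *
      field_simp
      ring
    rw [integral_congr_ae hptwise,
      integral_add (hfA_int.const_mul q) (h_int.const_mul (p₀ - q)),
      integral_const_mul, integral_const_mul, hintfA, mul_one]
  rw [key]
  ring
end
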